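/- arXiv:0807.4727 — 9 statements merged into one kernel-verified Lean document; each statement's English description precedes it below -/
import Mathlib

section
/- Let s and t be coprime integers greater than 1. For 0 ≤ r ≤ s-1, let a_r(s,t) denote the number of integer vectors (j_0, j_1, ..., j_{t-1}) with 0 ≤ j_0 ≤ j_1 ≤ ... ≤ j_{t-1} ≤ s-1 and j_0 + j_1 + ... + j_{t-1} ≡ r (mod s). Then a_0(s,t) = a_1(s,t) = ... = a_{s-1}(s,t). -/
/-- Two monotone tuples whose value lists are permutations of each other are equal. -/
lemma gbg_mono_ext {t : ℕ} {α : Type*} [LinearOrder α] {f g : Fin t → α}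
    (hf : Monotone f) (hg : Monotone g) (h : (List.ofFn f).Perm (List.ofFn g)) : f = g :=
  List.ofFn_injective (List.Perm.eq_of_sortedLE hf.sortedLE_ofFn hg.sortedLE_ofFn h)

/-- Shifting every entry of a tuple by `c` in `Fin s` shifts the sum of values by `t * c`
modulo `s`. -/
lemma gbg_sum_shift {s t : ℕ} [NeZero s] (h : Fin t → Fin s) (c : Fin s) :
    (∑ i, ((h i + c : Fin s) : ℕ)) % s = ((∑ i, (h i : ℕ)) + t * c.val) % s := by
  have h1 : ∑ i, ((h i + c : Fin s) : ℕ) = ∑ i, ((h i : ℕ) + c.val) % s :=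
    Finset.sum_congr rfl fun i _ => by rw [Fin.add_def]
  rw [h1, ← Finset.sum_nat_mod, Finset.sum_add_distrib, Finset.sum_const, Finset.card_univ, Fintype.card_fin,
    smul_eq_mul]

/-- For coprime `s, t > 1`, the number `a_r(s,t)` of weakly increasing
`t`-tuples with entries in `{0,...,s-1}` and sum `≡ r (mod s)` is the same for every
residue `r`. -/
theorem gbg_stmt_0 (s t : ℕ) (hs : 1 < s) (ht : 1 < t) (hco : Nat.Coprime s t)
    (r₁ r₂ : ℕ) (hr₁ : r₁ < s) (hr₂ : r₂ < s) :
    {j : Fin t → Fin s | Monotone j ∧ (∑ i, (j i : ℕ)) % s = r₁}.ncard =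
    {j : Fin t → Fin s | Monotone j ∧ (∑ i, (j i : ℕ)) % s = r₂}.ncard := by
  haveI : NeZero s := ⟨by omega⟩
  -- find k with (r₁ + t*k) % s = r₂
  obtain ⟨k, hk⟩ : ∃ k : ℕ, (r₁ + t * k) % s = r₂ := by
    haveI : NeZero s := ⟨by omega⟩
    refine ⟨(((r₂ : ZMod s) - (r₁ : ZMod s)) * (t : ZMod s)⁻¹).val, ?_⟩
    have h1 : ((r₁ + t * (((r₂ : ZMod s) - (r₁ : ZMod s)) * (t : ZMod s)⁻¹).val : ℕ) : ZMod s)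
        = (r₂ : ZMod s) := by
      push_cast
      rw [ZMod.natCast_val, ZMod.cast_id]
      have hu : (t : ZMod s) * (t : ZMod s)⁻¹ = 1 :=
        ZMod.coe_mul_inv_eq_one t hco.symm
      rw [show (t : ZMod s) * (((r₂ : ZMod s) - r₁) * (t : ZMod s)⁻¹)
          = ((t : ZMod s) * (t : ZMod s)⁻¹) * ((r₂ : ZMod s) - r₁) by ring, hu]
      ring
    have h2 : (r₁ + t * (((r₂ : ZMod s) - (r₁ : ZMod s)) * (t : ZMod s)⁻¹).val) % s = r₂ % s :=
      (ZMod.natCast_eq_natCast_iff _ _ _).mp h1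
    rwa [Nat.mod_eq_of_lt hr₂] at h2
  set kf : Fin s := ⟨k % s, Nat.mod_lt _ (by omega)⟩ with hkf
  have hkfval : ∀ m : ℕ, (m + t * kf.val) % s = (m + t * k) % s := by
    intro m
    show (m + t * (k % s)) % s = (m + t * k) % s
    conv_lhs => rw [Nat.add_mod, Nat.mul_mod, Nat.mod_mod_of_dvd k dvd_rfl]
    rw [← Nat.mul_mod, ← Nat.add_mod]
  -- the shift-and-sort map
  set Φ : (Fin t → Fin s) → (Fin t → Fin s) :=
    fun j => ((fun x => x + kf) ∘ j) ∘ Tuple.sort ((fun x => x + kf) ∘ j) with hΦ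
  have hΦmono : ∀ j, Monotone (Φ j) := fun j => Tuple.monotone_sort _
  have hΦperm : ∀ j, (List.ofFn (Φ j)).Perm (List.ofFn ((fun x => x + kf) ∘ j)) :=
    fun j => Equiv.Perm.ofFn_comp_perm _ _
  have hΦsum : ∀ j : Fin t → Fin s,
      (∑ i, (Φ j i : ℕ)) % s = ((∑ i, (j i : ℕ)) + t * k) % s := by
    intro j
    have h1 : ∑ i, (Φ j i : ℕ) = ∑ i, (((fun x => x + kf) ∘ j) i : ℕ) :=
      Equiv.sum_comp (Tuple.sort ((fun x => x + kf) ∘ j)) fun i => (((fun x => x + kf) ∘ j) i : ℕ)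
    rw [h1]
    have := gbg_sum_shift j kf
    simpa [hkfval] using this
  set S₁ := {j : Fin t → Fin s | Monotone j ∧ (∑ i, (j i : ℕ)) % s = r₁} with hS₁
  set S₂ := {j : Fin t → Fin s | Monotone j ∧ (∑ i, (j i : ℕ)) % s = r₂} with hS₂
  have hinj : Set.InjOn Φ S₁ := by
    intro j hj j' hj' heq
    have hperm : (List.ofFn ((fun x => x + kf) ∘ j)).Perm
        (List.ofFn ((fun x => x + kf) ∘ j')) :=
      ((hΦperm j).symm.trans (heq ▸ hΦperm j'))
    rw [← List.map_ofFn, ← List.map_ofFn] at hperm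
    have hperm2 := hperm.map (fun x : Fin s => x - kf)
    simp only [List.map_map] at hperm2
    have hcomp : ((fun x : Fin s => x - kf) ∘ fun x => x + kf) = id := by
      funext x; simp
    rw [hcomp, List.map_id, List.map_id] at hperm2
    exact gbg_mono_ext hj.1 hj'.1 hperm2
  have himage : S₂ = Φ '' S₁ := by
    ext j'
    constructor
    · rintro ⟨hj'mono, hj'sum⟩
      set f : Fin t → Fin s := (fun x => x - kf) ∘ j' with hf
      set j : Fin t → Fin s := f ∘ Tuple.sort f with hj
      have hjmono : Monotone j := Tuple.monotone_sort f
      -- Φ j = j'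
      have hΦjj' : Φ j = j' := by
        refine gbg_mono_ext (hΦmono j) hj'mono ?_
        refine (hΦperm j).trans ?_
        have h2 : ((fun x => x + kf) ∘ j) = ((fun x => x + kf) ∘ f) ∘ Tuple.sort f := rfl
        rw [h2]
        refine (Equiv.Perm.ofFn_comp_perm _ _).trans ?_
        have h3 : ((fun x : Fin s => x + kf) ∘ f) = j' := by
          funext i; simp [hf]
        rw [h3]
      -- j ∈ S₁
      have hjsum : (∑ i, (j i : ℕ)) % s = r₁ := by
        have h4 := hΦsum j
        rw [hΦjj', hj'sum] at h4
        have h5 : (((∑ i, (j i : ℕ)) % s) + t * k) % s = (r₁ + t * k) % s := by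
          rw [Nat.mod_add_mod, ← h4, hk]
        have h6 : ((∑ i, (j i : ℕ)) % s) % s = r₁ % s :=
          Nat.ModEq.add_right_cancel' (t * k) h5
        rwa [Nat.mod_mod_of_dvd _ dvd_rfl, Nat.mod_eq_of_lt hr₁] at h6
      exact ⟨j, ⟨hjmono, hjsum⟩, hΦjj'⟩
    · rintro ⟨j, ⟨hjmono, hjsum⟩, rfl⟩
      refine ⟨hΦmono j, ?_⟩
      rw [hΦsum j, ← Nat.mod_add_mod, hjsum, hk]
  rw [himage, Set.ncard_image_of_injOn hinj]
end

section
/- Let s and t be coprime integers greater than 1, and for each residue r mod s let a_r(s,t) denote the number of weakly increasing t-tuples in {0,...,s-1} with sum ≡ r (mod s). Then a_r(s,t) = C(s+t, t)/(s+t) for every r. -/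
-- aux: monotone tuples with equal multiset of values are equal
lemma mono_eq_of_multiset {n : ℕ} {α : Type*} [LinearOrder α] {f g : Fin n → α}
    (hf : Monotone f) (hg : Monotone g)
    (h : (List.ofFn f : Multiset α) = List.ofFn g) : f = g :=
  List.ofFn_injective <|
    List.Perm.eq_of_pairwise' hf.sortedLE_ofFn.pairwise hg.sortedLE_ofFn.pairwise (Multiset.coe_eq_coe.mp h)

open Fin.NatCast in
lemma shift_le (s t : ℕ) (hs : 1 < s) (c r : ℕ) :
    {j : Fin t → Fin s | Monotone j ∧ (∑ i, (j i : ℕ)) % s = r}.ncard ≤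
    {j : Fin t → Fin s | Monotone j ∧ (∑ i, (j i : ℕ)) % s = (r + t * c) % s}.ncard := by
  haveI : NeZero s := ⟨by omega⟩
  set g : (Fin t → Fin s) → (Fin t → Fin s) := fun j i => j i + (c : Fin s) with hg
  apply Set.ncard_le_ncard_of_injOn (fun j => g j ∘ Tuple.sort (g j))
  · rintro j ⟨hmono, hsum⟩
    refine ⟨Tuple.monotone_sort (g j), ?_⟩
    have h1 : ∑ i, ((g j ∘ Tuple.sort (g j)) i : ℕ) = ∑ i, (g j i : ℕ) :=
      Equiv.sum_comp (Tuple.sort (g j)) (fun i => (g j i : ℕ))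
    have h2 : ∀ i, (g j i : ℕ) = ((j i : ℕ) + c % s) % s := by
      intro i
      simp [hg, Fin.add_def, Fin.val_natCast]
    rw [h1]
    simp_rw [h2]
    rw [← Finset.sum_nat_mod, Finset.sum_add_distrib, Finset.sum_const,
      Finset.card_univ, Fintype.card_fin, smul_eq_mul]
    have h3 : (∑ i, (j i : ℕ)) ≡ r [MOD s] := by
      show _ % s = r % s
      conv_rhs => rw [← hsum]
      rw [Nat.mod_mod_of_dvd _ (dvd_refl s)]
    have h4 : t * (c % s) ≡ t * c [MOD s] :=
      Nat.ModEq.mul_left t (Nat.mod_mod_of_dvd c (dvd_refl s))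
    exact h3.add h4
  · rintro j ⟨hj, -⟩ k ⟨hk, -⟩ heq
    have hperm : (List.ofFn (g j) : Multiset (Fin s)) = List.ofFn (g k) := by
      have p1 := (Tuple.sort (g j)).ofFn_comp_perm (g j)
      have p2 := (Tuple.sort (g k)).ofFn_comp_perm (g k)
      simp only [] at heq
      rw [heq] at p1
      exact Multiset.coe_eq_coe.mpr (p1.symm.trans p2)
    have hmul : (List.ofFn j : Multiset (Fin s)) = List.ofFn k := by
      have e1 : List.ofFn (g j) = List.map (· + (c : Fin s)) (List.ofFn j) := by
        rw [List.map_ofFn]; rfl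
      have e2 : List.ofFn (g k) = List.map (· + (c : Fin s)) (List.ofFn k) := by
        rw [List.map_ofFn]; rfl
      rw [e1, e2] at hperm
      have := Multiset.map_injective (f := (· + (c : Fin s))) (add_left_injective _)
      exact this (by simpa using hperm)
    exact mono_eq_of_multiset hj hk hmul

lemma exists_shift (s t : ℕ) (hs : 1 < s) (hco : Nat.Coprime s t) (r r' : ℕ) (hr' : r' < s) :
    ∃ c : ℕ, (r + t * c) % s = r' := by
  haveI : NeZero s := ⟨by omega⟩
  have hunit : IsUnit (t : ZMod s) := (ZMod.isUnit_iff_coprime t s).mpr hco.symm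
  obtain ⟨u, hu⟩ := hunit
  refine ⟨(((r' : ZMod s) - r) * ↑u⁻¹).val, ?_⟩
  have key : ((r + t * (((r' : ZMod s) - r) * ↑u⁻¹).val : ℕ) : ZMod s) = (r' : ZMod s) := by
    push_cast
    rw [ZMod.natCast_val, ZMod.cast_id, ← hu,
      mul_comm ((r' : ZMod s) - r) (↑u⁻¹ : ZMod s), ← mul_assoc, Units.mul_inv, one_mul]
    ring
  conv_rhs => rw [← Nat.mod_eq_of_lt hr']
  exact (ZMod.natCast_eq_natCast_iff' _ _ _).mp key

lemma card_res_eq (s t : ℕ) (hs : 1 < s) (hco : Nat.Coprime s t) (r r' : ℕ)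
    (hr : r < s) (hr' : r' < s) :
    {j : Fin t → Fin s | Monotone j ∧ (∑ i, (j i : ℕ)) % s = r}.ncard =
    {j : Fin t → Fin s | Monotone j ∧ (∑ i, (j i : ℕ)) % s = r'}.ncard := by
  apply le_antisymm
  · obtain ⟨c, hc⟩ := exists_shift s t hs hco r r' hr'
    have := shift_le s t hs c r
    rwa [hc] at this
  · obtain ⟨c, hc⟩ := exists_shift s t hs hco r' r hr
    have := shift_le s t hs c r'
    rwa [hc] at this

noncomputable def monoSymEquiv (s t : ℕ) : {j : Fin t → Fin s // Monotone j} ≃ Sym (Fin s) t where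
  toFun j := ⟨(List.ofFn j.1 : Multiset (Fin s)), by simp⟩
  invFun m := ⟨fun i => (Multiset.sort m.1 (· ≤ ·)).get (Fin.cast (by simp [m.2]) i), by
    intro a b hab
    exact List.Pairwise.rel_get_of_le (Multiset.pairwise_sort _ _) hab⟩
  left_inv := by
    rintro ⟨j, hj⟩
    apply Subtype.ext
    funext i
    have hsorteq : Multiset.sort (↑(List.ofFn j) : Multiset (Fin s)) (· ≤ ·) = List.ofFn j := by
      apply List.Perm.eq_of_pairwise' (r := (· ≤ ·))
      · exact Multiset.pairwise_sort _ _
      · exact hj.sortedLE_ofFn.pairwise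
      · exact Multiset.coe_eq_coe.mp (Multiset.sort_eq _ _)
    show (Multiset.sort (↑(List.ofFn j) : Multiset (Fin s)) (· ≤ ·)).get _ = j i
    simp only [hsorteq, List.get_ofFn]
    congr 1
    ext
    have h2 : ((List.ofFn j).mergeSort fun x1 x2 => decide (x1 ≤ x2)) = List.ofFn j := hsorteq
    simp [h2]
    rfl
  right_inv := by
    rintro ⟨m, hm⟩
    apply Subtype.ext
    dsimp only
    conv_rhs => rw [← Multiset.sort_eq m (· ≤ ·)]
    apply congrArg
    apply List.ext_get
    · simp [hm]
    · intro n h1 h2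
      simp [List.get_ofFn]

open scoped Classical in
lemma total_count (s t : ℕ) :
    (Finset.univ.filter (fun j : Fin t → Fin s => Monotone j)).card = Nat.choose (s + t - 1) t := by
  rw [← Fintype.card_subtype, Fintype.card_congr (monoSymEquiv s t),
    Sym.card_sym_eq_multichoose, Fintype.card_fin, Nat.multichoose_eq]

/-- For coprime `s, t > 1` and any residue `r` mod `s`, the number of
weakly increasing `t`-tuples with entries in `{0,...,s-1}` and sum `≡ r (mod s)`
equals `C(s+t, t)/(s+t)`. -/
theorem gbg_stmt_2 (s t : ℕ) (hs : 1 < s) (ht : 1 < t) (hco : Nat.Coprime s t)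
    (r : ℕ) (hr : r < s) :
    {j : Fin t → Fin s | Monotone j ∧ (∑ i, (j i : ℕ)) % s = r}.ncard =
      Nat.choose (s + t) t / (s + t) := by
  classical
  have hp1 : 0 < s := by omega
  have hp2 : t ≤ s + t - 1 := by omega
  have hp3 : t ≤ s + t := by omega
  have hp4 : 0 < s + t := by omega
  have hsub1 : s + t - 1 - t = s - 1 := by omega
  have hsub2 : s + t - t = s := by omega
  have he1 : Nat.succ (s + t - 1) = s + t := by omega
  have he2 : (s - 1).succ = s := by omega
  set N := {j : Fin t → Fin s | Monotone j ∧ (∑ i, (j i : ℕ)) % s = r}.ncard with hN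
  clear_value N
  have hset : ∀ r' : ℕ, {j : Fin t → Fin s | Monotone j ∧ (∑ i, (j i : ℕ)) % s = r'} =
      ↑(Finset.univ.filter (fun j : Fin t → Fin s => Monotone j ∧ (∑ i, (j i : ℕ)) % s = r')) := by
    intro r'; ext j; simp
  have hfib : (Finset.univ.filter (fun j : Fin t → Fin s => Monotone j)).card =
      ∑ r' ∈ Finset.range s, (Finset.univ.filter
        (fun j : Fin t → Fin s => Monotone j ∧ (∑ i, (j i : ℕ)) % s = r')).card := by
    rw [Finset.card_eq_sum_card_fiberwise (f := fun j : Fin t → Fin s => (∑ i, (j i : ℕ)) % s)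
      (t := Finset.range s) (fun j _ => Finset.mem_range.mpr (Nat.mod_lt _ hp1))]
    apply Finset.sum_congr rfl
    intro r' _
    congr 1
    rw [Finset.filter_filter]
  have hcardeq : ∀ r' ∈ Finset.range s,
      (Finset.univ.filter
        (fun j : Fin t → Fin s => Monotone j ∧ (∑ i, (j i : ℕ)) % s = r')).card = N := by
    intro r' hr'
    rw [← Set.ncard_coe_finset, ← hset r', hN]
    exact card_res_eq s t hs hco r' r (Finset.mem_range.mp hr') hr
  have htot : s * N = Nat.choose (s + t - 1) t := by
    rw [← total_count s t, hfib, Finset.sum_congr rfl hcardeq, Finset.sum_const,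
      Finset.card_range, smul_eq_mul]
  have hid : (s + t) * Nat.choose (s + t - 1) t = s * Nat.choose (s + t) t := by
    have h1 : Nat.choose (s + t - 1) t = Nat.choose (s + t - 1) (s - 1) := by
      rw [← Nat.choose_symm hp2, hsub1]
    have h2 := Nat.add_one_mul_choose_eq (s + t - 1) (s - 1)
    rw [← Nat.succ_eq_add_one, ← Nat.succ_eq_add_one, he1, he2] at h2
    have h3 : Nat.choose (s + t) s = Nat.choose (s + t) t := by
      rw [← Nat.choose_symm hp3, hsub2]
    rw [h1, h2, h3]
    ring
  have hfin : (s + t) * N = Nat.choose (s + t) t := by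
    apply Nat.eq_of_mul_eq_mul_left hp1
    calc s * ((s + t) * N) = (s + t) * (s * N) := by ring
      _ = (s + t) * Nat.choose (s + t - 1) t := by rw [htot]
      _ = s * Nat.choose (s + t) t := hid
  exact (Nat.div_eq_of_eq_mul_left hp4 (by rw [← hfin]; exact (mul_comm _ _))).symm
end

section
/- Let ω = e^{2πI/4} = I be a primitive 4th root of unity, and let t ≥ 4. The vectors j = (0,...,0,1,1,3,3) and j' = (0,...,0,0,0,2,2) in Z^t (each padded with t-4 zeros at the front) are distinct weakly increasing vectors with entries in {0,1,2,3}, yet Σ_i ω^{j_i} = Σ_i ω^{j'_i} and Π_i ω^{j_i} = Π_i ω^{j'_i}. -/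
/-- The vector of length `t` obtained by padding the list `l` with `t - l.length`
leading zeros. -/
def padVec (t : ℕ) (l : List ℕ) : Fin t → ℕ :=
  fun i => (List.replicate (t - l.length) 0 ++ l).getD i 0

private lemma padVec_eq (m : ℕ) (l : List ℕ) (hl : l.length = 4) (i : ℕ) :
    (List.replicate ((m + 4) - l.length) 0 ++ l).getD i 0 =
      if i < m then 0 else l.getD (i - m) 0 := by
  have hm : (m + 4) - l.length = m := by omega
  rw [hm]
  by_cases h : i < m
  · rw [List.getD_append _ _ _ _ (by simpa using h), if_pos h]
    simp [List.getD]
  · rw [List.getD_append_right _ _ _ _ (by simpa using h), if_neg h]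
    simp

private lemma exp_eq_I : Complex.exp (2 * (Real.pi : ℂ) * Complex.I / 4) = Complex.I := by
  have : (2 * (Real.pi : ℂ) * Complex.I / 4) = (Real.pi / 2 : ℝ) * Complex.I := by
    push_cast; ring
  rw [this, Complex.exp_mul_I, ← Complex.ofReal_cos, ← Complex.ofReal_sin,
    Real.cos_pi_div_two, Real.sin_pi_div_two]
  simp

/-- For `ω = e^{2πI/4} = I` and `t ≥ 4`, the distinct weakly increasing
vectors `(0,...,0,1,1,3,3)` and `(0,...,0,0,0,2,2)` with entries in `{0,1,2,3}` have
equal sums and equal products of the corresponding powers of `ω`. -/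
theorem gbg_stmt_5 (t : ℕ) (ht : 4 ≤ t) :
    Complex.exp (2 * (Real.pi : ℂ) * Complex.I / 4) = Complex.I ∧
    padVec t [1, 1, 3, 3] ≠ padVec t [0, 0, 2, 2] ∧
    Monotone (padVec t [1, 1, 3, 3]) ∧ Monotone (padVec t [0, 0, 2, 2]) ∧
    (∀ i, padVec t [1, 1, 3, 3] i < 4) ∧ (∀ i, padVec t [0, 0, 2, 2] i < 4) ∧
    (∑ i, Complex.exp (2 * (Real.pi : ℂ) * Complex.I / 4) ^ padVec t [1, 1, 3, 3] i =
     ∑ i, Complex.exp (2 * (Real.pi : ℂ) * Complex.I / 4) ^ padVec t [0, 0, 2, 2] i) ∧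
    (∏ i, Complex.exp (2 * (Real.pi : ℂ) * Complex.I / 4) ^ padVec t [1, 1, 3, 3] i =
     ∏ i, Complex.exp (2 * (Real.pi : ℂ) * Complex.I / 4) ^ padVec t [0, 0, 2, 2] i) := by
  obtain ⟨m, rfl⟩ : ∃ m, t = m + 4 := ⟨t - 4, by omega⟩
  have key : ∀ (l : List ℕ), l.length = 4 → ∀ i : Fin (m + 4),
      padVec (m + 4) l i = if (i : ℕ) < m then 0 else l.getD ((i : ℕ) - m) 0 := by
    intro l hl i
    exact padVec_eq m l hl i
  have mono : ∀ (l : List ℕ) (hl : l.length = 4),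
      (∀ a b : ℕ, a ≤ b → b < 4 → l.getD a 0 ≤ l.getD b 0) →
      (∀ a : ℕ, l.getD 0 0 = 0 → True) → Monotone (padVec (m + 4) l) := by
    intro l hl hmono _ i j hij
    rw [key l hl, key l hl]
    rcases Nat.lt_or_ge (i : ℕ) m with hi | hi
    · rw [if_pos hi]; exact Nat.zero_le _
    · rw [if_neg (by omega), if_neg (by omega)]
      exact hmono _ _ (by have := Fin.le_iff_val_le_val.mp hij; omega)
        (by have := j.isLt; omega)
  refine ⟨exp_eq_I, ?_, ?_, ?_, ?_, ?_, ?_, ?_⟩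
  · intro h
    have := congrFun h ⟨m + 3, by omega⟩
    rw [key [1,1,3,3] rfl, key [0,0,2,2] rfl] at this
    simp at this
  · refine mono [1,1,3,3] rfl ?_ (fun _ _ => trivial)
    intro a b hab hb
    interval_cases b <;> interval_cases a <;> simp
  · refine mono [0,0,2,2] rfl ?_ (fun _ _ => trivial)
    intro a b hab hb
    interval_cases b <;> interval_cases a <;> simp
  · intro i
    rw [key [1,1,3,3] rfl]
    have h4 : (i : ℕ) - m < 4 := by have := i.isLt; omega
    split
    · omega
    · set a := (i : ℕ) - m; interval_cases a <;> simp
  · intro i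
    rw [key [0,0,2,2] rfl]
    have h4 : (i : ℕ) - m < 4 := by have := i.isLt; omega
    split
    · omega
    · set a := (i : ℕ) - m; interval_cases a <;> simp
  · rw [exp_eq_I]
    have sum_eq : ∀ (l : List ℕ) (hl : l.length = 4),
        ∑ i : Fin (m + 4), Complex.I ^ padVec (m + 4) l i =
          m + Complex.I ^ l.getD 0 0 + Complex.I ^ l.getD 1 0 +
            Complex.I ^ l.getD 2 0 + Complex.I ^ l.getD 3 0 := by
      intro l hl
      have step : ∑ i : Fin (m + 4), Complex.I ^ padVec (m + 4) l i =
          ∑ n ∈ Finset.range (m + 4),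
            Complex.I ^ (if n < m then 0 else l.getD (n - m) 0) := by
        rw [← Fin.sum_univ_eq_sum_range
          (fun n => Complex.I ^ (if n < m then 0 else l.getD (n - m) 0)) (m + 4)]
        exact Finset.sum_congr rfl (fun i _ => by rw [key l hl i])
      rw [step, show m + 4 = m + 1 + 1 + 1 + 1 by ring,
        Finset.sum_range_succ, Finset.sum_range_succ, Finset.sum_range_succ,
        Finset.sum_range_succ]
      have hz : ∑ n ∈ Finset.range m,
          Complex.I ^ (if n < m then 0 else l.getD (n - m) 0) = m := by
        rw [Finset.sum_congr rfl (fun n hn => by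
          rw [if_pos (Finset.mem_range.mp hn), pow_zero])]
        simp
      rw [hz, if_neg (by omega), if_neg (by omega), if_neg (by omega),
        if_neg (by omega), show m - m = 0 by omega, show m + 1 - m = 1 by omega,
        show m + 1 + 1 - m = 2 by omega, show m + 1 + 1 + 1 - m = 3 by omega]
    rw [sum_eq [1,1,3,3] rfl, sum_eq [0,0,2,2] rfl]
    simp [pow_succ, Complex.I_sq]
  · rw [exp_eq_I]
    have prod_eq : ∀ (l : List ℕ) (hl : l.length = 4),
        ∏ i : Fin (m + 4), Complex.I ^ padVec (m + 4) l i =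
          Complex.I ^ (l.getD 0 0 + l.getD 1 0 + l.getD 2 0 + l.getD 3 0) := by
      intro l hl
      have step : ∏ i : Fin (m + 4), Complex.I ^ padVec (m + 4) l i =
          ∏ n ∈ Finset.range (m + 4),
            Complex.I ^ (if n < m then 0 else l.getD (n - m) 0) := by
        rw [← Fin.prod_univ_eq_prod_range
          (fun n => Complex.I ^ (if n < m then 0 else l.getD (n - m) 0)) (m + 4)]
        exact Finset.prod_congr rfl (fun i _ => by rw [key l hl i])
      rw [step, show m + 4 = m + 1 + 1 + 1 + 1 by ring,
        Finset.prod_range_succ, Finset.prod_range_succ, Finset.prod_range_succ,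
        Finset.prod_range_succ]
      have hz : ∏ n ∈ Finset.range m,
          Complex.I ^ (if n < m then 0 else l.getD (n - m) 0) = 1 := by
        rw [Finset.prod_congr rfl (fun n hn => by
          rw [if_pos (Finset.mem_range.mp hn), pow_zero])]
        simp
      rw [hz, one_mul, if_neg (by omega), if_neg (by omega), if_neg (by omega),
        if_neg (by omega), show m - m = 0 by omega, show m + 1 - m = 1 by omega,
        show m + 1 + 1 - m = 2 by omega, show m + 1 + 1 + 1 - m = 3 by omega,
        ← pow_add, ← pow_add, ← pow_add]
    rw [prod_eq [1,1,3,3] rfl, prod_eq [0,0,2,2] rfl]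
    norm_num
    rw [show (8 : ℕ) = 4 + 4 by rfl, pow_add]
    simp [show (4:ℕ) = 2 + 2 from rfl, pow_add, Complex.I_sq]
end

section
/- Let ω = e^{2πI/9} and t ≥ 6. The vectors j = (0,...,0,3,3,6,6) with t-4 leading zeros and j' = (0,...,0,1,2,4,5,7,8) with t-6 leading zeros are distinct weakly increasing vectors with entries in {0,...,8}, yet Σ_i ω^{j_i} = Σ_i ω^{j'_i} and Π_i ω^{j_i} = Π_i ω^{j'_i}. -/
lemma padVec_eq_getElem (t : ℕ) (l : List ℕ) (i : Fin t)
    (hlen : (List.replicate (t - l.length) 0 ++ l).length = t := by simp; omega) :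
    padVec t l i = (List.replicate (t - l.length) 0 ++ l)[(i : ℕ)]'(by omega) := by
  unfold padVec
  rw [List.getD_eq_getElem]

lemma sum_padVec {M : Type*} [AddCommMonoid M] (t : ℕ) (l : List ℕ) (h : l.length ≤ t)
    (f : ℕ → M) :
    ∑ i : Fin t, f (padVec t l i) = (t - l.length) • f 0 + (l.map f).sum := by
  have hlen : (List.replicate (t - l.length) 0 ++ l).length = t := by simp; omega
  have : ∑ i : Fin t, f (padVec t l i)
      = ((List.replicate (t - l.length) 0 ++ l).map (fun n => f n)).sum := by
    rw [← List.sum_ofFn]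
    congr 1
    apply List.ext_getElem
    · simp; omega
    · intro i h1 h2
      simp only [List.getElem_ofFn, List.getElem_map]
      rw [padVec_eq_getElem t l]
  rw [this, List.map_append, List.sum_append, List.map_replicate, List.sum_replicate]

lemma monotone_padVec (t : ℕ) (l : List ℕ) (h : l.length ≤ t)
    (hs : l.Pairwise (· ≤ ·)) :
    Monotone (padVec t l) := by
  have hlen : (List.replicate (t - l.length) 0 ++ l).length = t := by simp; omega
  have hs' : (List.replicate (t - l.length) 0 ++ l).Pairwise (· ≤ ·) := by
    rw [List.pairwise_append]
    refine ⟨List.pairwise_replicate.mpr (by simp), hs, ?_⟩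
    intro a ha b _
    simp only [List.mem_replicate] at ha
    omega
  intro i j hij
  rw [padVec_eq_getElem t l i, padVec_eq_getElem t l j]
  rcases eq_or_lt_of_le hij with h' | h'
  · simp [Fin.ext_iff.mp h']
  · exact List.pairwise_iff_get.mp hs' ⟨i, by omega⟩ ⟨j, by omega⟩ h'

lemma padVec_lt (t : ℕ) (l : List ℕ) (h : l.length ≤ t) (hb : ∀ x ∈ l, x < 9) (i : Fin t) :
    padVec t l i < 9 := by
  have hlen : (List.replicate (t - l.length) 0 ++ l).length = t := by simp; omega
  rw [padVec_eq_getElem t l i]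
  have hmem : (List.replicate (t - l.length) 0 ++ l)[(i : ℕ)]'(by omega) ∈
      (List.replicate (t - l.length) 0 ++ l) := List.getElem_mem _
  rcases List.mem_append.mp hmem with hm | hm
  · simp only [List.mem_replicate] at hm; omega
  · exact hb _ hm

/-- For `ω = e^{2πI/9}` and `t ≥ 6`, the distinct weakly increasing
vectors `(0,...,0,3,3,6,6)` and `(0,...,0,1,2,4,5,7,8)` with entries in `{0,...,8}`
have equal sums and equal products of the corresponding powers of `ω`. -/
theorem gbg_stmt_7 (t : ℕ) (ht : 6 ≤ t) :
    padVec t [3, 3, 6, 6] ≠ padVec t [1, 2, 4, 5, 7, 8] ∧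
    Monotone (padVec t [3, 3, 6, 6]) ∧ Monotone (padVec t [1, 2, 4, 5, 7, 8]) ∧
    (∀ i, padVec t [3, 3, 6, 6] i < 9) ∧ (∀ i, padVec t [1, 2, 4, 5, 7, 8] i < 9) ∧
    (∑ i, Complex.exp (2 * (Real.pi : ℂ) * Complex.I / 9) ^ padVec t [3, 3, 6, 6] i =
     ∑ i, Complex.exp (2 * (Real.pi : ℂ) * Complex.I / 9) ^ padVec t [1, 2, 4, 5, 7, 8] i) ∧
    (∏ i, Complex.exp (2 * (Real.pi : ℂ) * Complex.I / 9) ^ padVec t [3, 3, 6, 6] i =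
     ∏ i, Complex.exp (2 * (Real.pi : ℂ) * Complex.I / 9) ^ padVec t [1, 2, 4, 5, 7, 8] i) := by
  set ω : ℂ := Complex.exp (2 * (Real.pi : ℂ) * Complex.I / 9) with hω
  have h4 : ([3,3,6,6] : List ℕ).length ≤ t := by simp; omega
  have h6 : ([1,2,4,5,7,8] : List ℕ).length ≤ t := by simp; omega
  have hsum1 := sum_padVec t [3,3,6,6] h4 (fun n => n)
  have hsum2 := sum_padVec t [1,2,4,5,7,8] h6 (fun n => n)
  simp only [smul_zero, List.map_cons, List.map_nil, List.sum_cons, List.sum_nil] at hsum1 hsum2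
  -- key facts about ω
  have hne2pi : (2 * (Real.pi : ℂ) * Complex.I) ≠ 0 := by
    simp [Real.pi_ne_zero, Complex.I_ne_zero]
  have h9 : ω ^ 9 = 1 := by
    rw [hω, ← Complex.exp_nat_mul]
    rw [show (9 : ℕ) * (2 * (Real.pi : ℂ) * Complex.I / 9) = 2 * Real.pi * Complex.I by
      push_cast; ring]
    exact Complex.exp_two_pi_mul_I
  have hω1 : ω ≠ 1 := by
    rw [hω]
    simp only [ne_eq, Complex.exp_eq_one_iff]
    push_neg
    intro n hn
    have h2 : (2 * (Real.pi : ℂ) * Complex.I) * 1 = (2 * (Real.pi : ℂ) * Complex.I) * (9 * n) := by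
      linear_combination 9 * hn
    have := mul_left_cancel₀ hne2pi h2
    have : (1 : ℤ) = 9 * n := by exact_mod_cast this
    omega
  have hω3 : ω ^ 3 ≠ 1 := by
    rw [hω, ← Complex.exp_nat_mul]
    simp only [ne_eq, Complex.exp_eq_one_iff]
    push_neg
    intro n hn
    have h2 : (2 * (Real.pi : ℂ) * Complex.I) * 3 = (2 * (Real.pi : ℂ) * Complex.I) * (9 * n) := by
      push_cast at hn ⊢
      linear_combination 9 * hn
    have := mul_left_cancel₀ hne2pi h2
    have : (3 : ℤ) = 9 * n := by exact_mod_cast this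
    omega
  have hS : (1 : ℂ) + ω + ω^2 + ω^3 + ω^4 + ω^5 + ω^6 + ω^7 + ω^8 = 0 := by
    have := geom_sum_eq hω1 9
    rw [h9] at this
    simp only [sub_self, zero_div] at this
    rw [Finset.sum_range_succ, Finset.sum_range_succ, Finset.sum_range_succ,
      Finset.sum_range_succ, Finset.sum_range_succ, Finset.sum_range_succ,
      Finset.sum_range_succ, Finset.sum_range_succ, Finset.sum_range_succ,
      Finset.sum_range_zero] at this
    linear_combination this
  have hP : (1 : ℂ) + ω^3 + ω^6 = 0 := by
    have h33 : (ω^3)^3 = 1 := by rw [← pow_mul]; norm_num [h9]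
    have := geom_sum_eq hω3 3
    rw [h33] at this
    simp only [sub_self, zero_div] at this
    rw [Finset.sum_range_succ, Finset.sum_range_succ, Finset.sum_range_succ,
      Finset.sum_range_zero] at this
    linear_combination this
  obtain ⟨k, rfl⟩ : ∃ k, t = k + 6 := ⟨t - 6, by omega⟩
  refine ⟨?_, monotone_padVec _ _ h4 (by decide), monotone_padVec _ _ h6 (by decide),
    padVec_lt _ _ h4 (by decide), padVec_lt _ _ h6 (by decide), ?_, ?_⟩
  · intro heq
    rw [heq] at hsum1
    rw [hsum1] at hsum2
    omega
  · have hA := sum_padVec (k + 6) [3,3,6,6] h4 (fun n => ω ^ n)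
    have hB := sum_padVec (k + 6) [1,2,4,5,7,8] h6 (fun n => ω ^ n)
    rw [hA, hB]
    simp only [List.map_cons, List.map_nil, List.sum_cons, List.sum_nil, pow_zero,
      nsmul_eq_mul, List.length_cons, List.length_nil]
    push_cast
    linear_combination 3 * hP - hS
  · rw [Finset.prod_pow_eq_pow_sum, Finset.prod_pow_eq_pow_sum]
    rw [hsum1, hsum2]
    norm_num
    rw [show (18 : ℕ) = 9 * 2 by norm_num, show (27 : ℕ) = 9 * 3 by norm_num,
      pow_mul, pow_mul, h9, one_pow, one_pow]
end

section
/- Let s be a composite number with s > 3p, where p is the smallest prime divisor of s. Let ω = e^{2πI/s}. Define j to consist of the 2p entries 2, 2, 2+s/p, 2+s/p, ..., 2+(p-1)s/p, 2+(p-1)s/p (each value 2+ks/p appearing twice) and j' to consist of the 2p entries 1, 3, 1+s/p, 3+s/p, ..., 1+(p-1)s/p, 3+(p-1)s/p. Then j and j' are distinct weakly increasing vectors with entries in {0,...,s-1}, and Σ_i ω^{j_i} = Σ_i ω^{j'_i} and Π_i ω^{j_i} = Π_i ω^{j'_i}. -/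
lemma sum_pair_aux {M : Type*} [AddCommMonoid M] (n : ℕ) (f : ℕ → M) :
    ∑ i ∈ Finset.range (2 * n), f i
      = ∑ k ∈ Finset.range n, (f (2 * k) + f (2 * k + 1)) := by
  induction n with
  | zero => simp
  | succ n ih =>
      rw [Finset.sum_range_succ, ← ih, Nat.mul_succ, Finset.sum_range_succ,
        Finset.sum_range_succ, add_assoc]

/-- For `s` composite with `s > 3p`, `p` the smallest prime divisor of
`s`, and `ω = e^{2πI/s}`, the distinct weakly increasing `2p`-tuples
`j = (2, 2, 2+s/p, 2+s/p, ..., 2+(p-1)s/p, 2+(p-1)s/p)` and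
`j' = (1, 3, 1+s/p, 3+s/p, ..., 1+(p-1)s/p, 3+(p-1)s/p)`, with entries in
`{0,...,s-1}`, have equal sums and equal products of the corresponding powers of `ω`. -/
theorem gbg_stmt_8 (s : ℕ) (hs1 : 1 < s) (hs : ¬ Nat.Prime s)
    (hbig : 3 * s.minFac < s) :
    let p := s.minFac
    let ω := Complex.exp (2 * (Real.pi : ℂ) * Complex.I / (s : ℂ))
    let j : Fin (2 * p) → ℕ := fun i => 2 + ((i : ℕ) / 2) * (s / p)
    let j' : Fin (2 * p) → ℕ :=
      fun i => (if (i : ℕ) % 2 = 0 then 1 else 3) + ((i : ℕ) / 2) * (s / p)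
    j ≠ j' ∧ Monotone j ∧ Monotone j' ∧
    (∀ i, j i < s) ∧ (∀ i, j' i < s) ∧
    (∑ i, ω ^ j i = ∑ i, ω ^ j' i) ∧ (∏ i, ω ^ j i = ∏ i, ω ^ j' i) := by
  intro p ω j j'
  have hp : p.Prime := Nat.minFac_prime (by omega)
  have hp2 : 2 ≤ p := hp.two_le
  have hpd : p ∣ s := Nat.minFac_dvd s
  set d : ℕ := s / p with hd_def
  have hs_eq : p * d = s := Nat.mul_div_cancel' hpd
  have hd4 : 4 ≤ d := by
    by_contra h
    have hd3 : d ≤ 3 := by omega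
    have : s ≤ 3 * p := by
      calc s = p * d := hs_eq.symm
      _ ≤ p * 3 := Nat.mul_le_mul_left p hd3
      _ = 3 * p := by ring
    omega
  -- key: d * p = s
  have hdp : d * p = s := by rw [mul_comm]; exact hs_eq
  -- primitive root facts
  have hω : IsPrimitiveRoot ω s := Complex.isPrimitiveRoot_exp s (by omega)
  have hζ : IsPrimitiveRoot (ω ^ d) p := hω.pow (by omega) hdp.symm
  have hgeom : ∑ k ∈ Finset.range p, (ω ^ d) ^ k = 0 :=
    hζ.geom_sum_eq_zero (by omega)
  have hdiv1 : ∀ k : ℕ, (2 * k) / 2 = k := fun k => by omega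
  have hdiv2 : ∀ k : ℕ, (2 * k + 1) / 2 = k := fun k => by omega
  have hmod1 : ∀ k : ℕ, (2 * k) % 2 = 0 := fun k => by omega
  have hmod2 : ∀ k : ℕ, (2 * k + 1) % 2 ≠ 0 := fun k => by omega
  refine ⟨?_, ?_, ?_, ?_, ?_, ?_, ?_⟩
  · -- j ≠ j'
    intro h
    have h0 : j ⟨0, by positivity⟩ = j' ⟨0, by positivity⟩ := congrFun h _
    simp [j, j'] at h0
  · -- Monotone j
    intro a b hab
    have hab' : (a : ℕ) ≤ b := hab
    have : (a : ℕ) / 2 ≤ (b : ℕ) / 2 := Nat.div_le_div_right hab'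
    simp only [j, ← hd_def]
    have := Nat.mul_le_mul_right d this
    omega
  · -- Monotone j'
    intro a b hab
    have hab' : (a : ℕ) ≤ b := hab
    have hle : (a : ℕ) / 2 ≤ (b : ℕ) / 2 := Nat.div_le_div_right hab'
    simp only [j', ← hd_def]
    rcases Nat.eq_or_lt_of_le hle with heq | hlt
    · rw [heq]
      rcases Nat.mod_two_eq_zero_or_one (a : ℕ) with ha | ha <;>
        rcases Nat.mod_two_eq_zero_or_one (b : ℕ) with hb | hb <;>
        simp [ha, hb] <;> omega
    · have hmul : (a : ℕ) / 2 * d + d ≤ (b : ℕ) / 2 * d := by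
        have := Nat.mul_le_mul_right d hlt
        calc (a : ℕ) / 2 * d + d = ((a : ℕ) / 2 + 1) * d := by ring
        _ ≤ (b : ℕ) / 2 * d := Nat.mul_le_mul_right d hlt
      rcases Nat.mod_two_eq_zero_or_one (a : ℕ) with ha | ha <;>
        rcases Nat.mod_two_eq_zero_or_one (b : ℕ) with hb | hb <;>
        simp [ha, hb] <;> omega
  · -- j i < s
    intro i
    have hi : (i : ℕ) < 2 * p := i.isLt
    have hdiv : (i : ℕ) / 2 ≤ p - 1 := by omega
    have : (i : ℕ) / 2 * d ≤ (p - 1) * d := Nat.mul_le_mul_right d hdiv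
    have hps : (p - 1) * d + d = s := by
      obtain ⟨q, hq⟩ : ∃ q, p = q + 1 := ⟨p - 1, by omega⟩
      rw [hq, add_mul, one_mul] at hs_eq
      rw [hq]
      simpa using hs_eq
    simp only [j, ← hd_def]
    omega
  · -- j' i < s
    intro i
    have hi : (i : ℕ) < 2 * p := i.isLt
    have hdiv : (i : ℕ) / 2 ≤ p - 1 := by omega
    have hmd : (i : ℕ) / 2 * d ≤ (p - 1) * d := Nat.mul_le_mul_right d hdiv
    have hps : (p - 1) * d + d = s := by
      obtain ⟨q, hq⟩ : ∃ q, p = q + 1 := ⟨p - 1, by omega⟩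
      rw [hq, add_mul, one_mul] at hs_eq
      rw [hq]
      simpa using hs_eq
    simp only [j', ← hd_def]
    split <;> omega
  · -- equal sums (both zero)
    have hl : ∑ i : Fin (2 * p), ω ^ j i
        = ∑ i ∈ Finset.range (2 * p), ω ^ (2 + i / 2 * d) :=
      Fin.sum_univ_eq_sum_range (fun i => ω ^ (2 + i / 2 * d)) (2 * p)
    have hr : ∑ i : Fin (2 * p), ω ^ j' i
        = ∑ i ∈ Finset.range (2 * p),
            ω ^ ((if i % 2 = 0 then 1 else 3) + i / 2 * d) :=
      Fin.sum_univ_eq_sum_range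
        (fun i => ω ^ ((if i % 2 = 0 then 1 else 3) + i / 2 * d)) (2 * p)
    rw [hl, hr, sum_pair_aux, sum_pair_aux]
    have e1 : ∀ k ∈ Finset.range p,
        ω ^ (2 + (2 * k) / 2 * d) + ω ^ (2 + (2 * k + 1) / 2 * d)
          = (ω ^ 2 + ω ^ 2) * (ω ^ d) ^ k := by
      intro k _
      rw [hdiv1, hdiv2, ← pow_mul, mul_comm d k, add_mul, ← pow_add]
    have e2 : ∀ k ∈ Finset.range p,
        ω ^ ((if (2 * k) % 2 = 0 then 1 else 3) + (2 * k) / 2 * d)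
          + ω ^ ((if (2 * k + 1) % 2 = 0 then 1 else 3) + (2 * k + 1) / 2 * d)
          = (ω ^ 1 + ω ^ 3) * (ω ^ d) ^ k := by
      intro k _
      rw [hdiv1, hdiv2, if_pos (hmod1 k), if_neg (hmod2 k), ← pow_mul,
        mul_comm d k, add_mul, ← pow_add, ← pow_add]
    rw [Finset.sum_congr rfl e1, Finset.sum_congr rfl e2,
      ← Finset.mul_sum, ← Finset.mul_sum, hgeom, mul_zero, mul_zero]
  · -- equal products
    rw [Finset.prod_pow_eq_pow_sum, Finset.prod_pow_eq_pow_sum]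
    congr 1
    have hl : ∑ i : Fin (2 * p), j i
        = ∑ i ∈ Finset.range (2 * p), (2 + i / 2 * d) :=
      Fin.sum_univ_eq_sum_range (fun i => 2 + i / 2 * d) (2 * p)
    have hr : ∑ i : Fin (2 * p), j' i
        = ∑ i ∈ Finset.range (2 * p),
            ((if i % 2 = 0 then 1 else 3) + i / 2 * d) :=
      Fin.sum_univ_eq_sum_range
        (fun i => (if i % 2 = 0 then 1 else 3) + i / 2 * d) (2 * p)
    rw [hl, hr, sum_pair_aux, sum_pair_aux]
    refine Finset.sum_congr rfl fun k _ => ?_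
    rw [hdiv1, hdiv2, if_pos (hmod1 k), if_neg (hmod2 k)]
    omega
end

section
/- Let s, t > 1 with gcd(s,t) = 1, let ω = e^{2πI/s}, and let π be a t-core partition with associated vector n(π) = (n_0, n_1, ..., n_{t-1}) ∈ Z^t (satisfying Σ n_i = 0) under the standard bijection between t-cores and such vectors. Then the GBG-rank of π mod s equals [Σ_{i=0}^{t-1} ω^{i+1}(ω^{t n_i} − 1)] / [(1 − ω)(1 − ω^t)]. -/
/-- A partition, given by its weakly decreasing sequence of parts
(indexed from 0, eventually zero). -/
structure YPartition where
  parts : ℕ → ℕ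
  antitone : Antitone parts
  finite_support : ∃ N, ∀ n, N ≤ n → parts n = 0

namespace YPartition

/-- `rcount P s c` is the number of cells of the Young diagram of `P` labelled `c` in
the `s`-residue diagram: the cell in row `a`, column `b` (0-indexed) is labelled
`(b - a) mod s`. -/
noncomputable def rcount (P : YPartition) (s c : ℕ) : ℕ :=
  Set.ncard {p : ℕ × ℕ | p.2 < P.parts p.1 ∧ ((p.2 : ℤ) - (p.1 : ℤ)) % (s : ℤ) = (c : ℤ)}

/-- The GBG-rank of `P` mod `s`: `∑_{c=0}^{s-1} r_c(P,s) ω_s^c` with `ω_s = e^{2πI/s}`. -/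
noncomputable def gbg (P : YPartition) (s : ℕ) : ℂ :=
  ∑ c ∈ Finset.range s,
    (P.rcount s c : ℂ) * Complex.exp (2 * (Real.pi : ℂ) * Complex.I / (s : ℂ)) ^ c

/-- The parts of the conjugate partition of `P`. -/
noncomputable def conjParts (P : YPartition) (j : ℕ) : ℕ :=
  Set.ncard {i : ℕ | j < P.parts i}

/-- The hook length of the cell in row `i`, column `j` (0-indexed). -/
noncomputable def hookLength (P : YPartition) (i j : ℕ) : ℕ :=
  (P.parts i - j) + (P.conjParts j - i) - 1

/-- `P` is a `t`-core: the Young diagram of `P` has no rim hook of length `t`,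
equivalently no cell of `P` has hook length `t`. -/
noncomputable def IsCore (t : ℕ) (P : YPartition) : Prop :=
  ∀ i j, j < P.parts i → P.hookLength i j ≠ t

/-- The `n`-vector of `P` mod `t`: `n_i = r_i - r_{i+1}` (indices mod `t`). -/
noncomputable def nvec (P : YPartition) (t i : ℕ) : ℤ :=
  (P.rcount t i : ℤ) - (P.rcount t ((i + 1) % t) : ℤ)

end YPartition

namespace GBGAux

lemma geom_range (u : ℂ) (hu : u ≠ 0) (a : ℤ) (n : ℕ) :
    (u - 1) * ∑ j ∈ Finset.range n, u ^ (a + (j:ℤ)) = u ^ (a + (n:ℤ)) - u ^ a := by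
  induction n with
  | zero => simp
  | succ n ih =>
    rw [Finset.sum_range_succ, mul_add, ih]
    push_cast
    rw [show a + ((n:ℤ)+1) = (a + n) + 1 from by ring, zpow_add_one₀ hu]
    ring

lemma geom_Ioc (u : ℂ) (hu : u ≠ 0) (a b : ℤ) (hab : a ≤ b) :
    (u - 1) * ∑ k ∈ Finset.Ioc a b, u ^ k = u ^ (b+1) - u ^ (a+1) := by
  have h : Finset.Ioc a b = (Finset.range (b - a).toNat).map
      ⟨fun j : ℕ => a + 1 + (j:ℤ),
        show Function.Injective (fun j : ℕ => a + 1 + (j:ℤ)) from fun x y h => by simpa using h⟩ := by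
    ext k
    simp only [Finset.mem_Ioc, Finset.mem_map, Finset.mem_range, Function.Embedding.coeFn_mk]
    constructor
    · rintro ⟨h1, h2⟩; exact ⟨(k - a - 1).toNat, by omega, by omega⟩
    · rintro ⟨j, hj, rfl⟩; omega
  rw [h, Finset.sum_map]
  simp only [Function.Embedding.coeFn_mk]
  rw [geom_range u hu (a+1) (b-a).toNat]
  rw [show (a+1) + ((b-a).toNat : ℤ) = b + 1 from by omega]

lemma mem_iff_lt_ncard {S : Set ℕ} (hfin : S.Finite)
    (hdc : ∀ a b : ℕ, a ≤ b → b ∈ S → a ∈ S) (k : ℕ) : k ∈ S ↔ k < S.ncard := by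
  constructor
  · intro hk
    have hsub : ((Finset.Iic k : Finset ℕ) : Set ℕ) ⊆ S := by
      intro a ha
      simp only [Finset.coe_Iic, Set.mem_Iic] at ha
      exact hdc a k ha hk
    have := Set.ncard_le_ncard hsub hfin
    rw [Set.ncard_coe_finset, Nat.card_Iic] at this
    omega
  · intro hk
    by_contra hc
    have hsub : S ⊆ ((Finset.Iio k : Finset ℕ) : Set ℕ) := by
      intro b hb
      simp only [Finset.coe_Iio, Set.mem_Iio]
      by_contra hbk
      exact hc (hdc k b (by omega) hb)
    have := Set.ncard_le_ncard hsub (Finset.Iio k).finite_toSet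
    rw [Set.ncard_coe_finset, Nat.card_Iio] at this
    omega

lemma ediv_lt_iff {a k T : ℤ} (hT : 0 < T) : a / T < k ↔ a < T * k := by
  constructor
  · intro h
    have h2 : a < T * (a/T) + T := by
      have h3 := Int.emod_lt_of_pos a hT
      have h4 := Int.mul_ediv_add_emod a T
      linarith
    have h3 : T * (a/T + 1) ≤ T * k := mul_le_mul_of_nonneg_left (by omega) (le_of_lt hT)
    rw [mul_add, mul_one] at h3
    linarith
  · intro h
    by_contra hc
    push_neg at hc
    have h1 : T * k ≤ T * (a/T) := mul_le_mul_of_nonneg_left hc (le_of_lt hT)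
    have h2 : T * (a/T) ≤ a := by
      have h3 := Int.emod_nonneg a (ne_of_gt hT)
      have h4 := Int.mul_ediv_add_emod a T
      linarith
    linarith

def bb (P : YPartition) (i : ℕ) : ℤ := (P.parts i : ℤ) - i

lemma bb_strictAnti (P : YPartition) : StrictAnti (bb P) := by
  apply strictAnti_nat_of_succ_lt
  intro n
  have := P.antitone (show n ≤ n+1 from by omega)
  unfold bb; push_cast; omega

lemma bb_le (P : YPartition) (i k : ℕ) : bb P (i + k) ≤ bb P i - k := by
  induction k with
  | zero => simp
  | succ k ih =>
    have h := (bb_strictAnti P) (show i+k < i+(k+1) from by omega)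
    push_cast
    push_cast at ih
    omega

lemma bb_ge (P : YPartition) (i : ℕ) : -(i:ℤ) ≤ bb P i := by
  unfold bb; omega

lemma bb_of_zero (P : YPartition) {i : ℕ} (h : P.parts i = 0) : bb P i = -(i:ℤ) := by
  unfold bb; rw [h]; simp

lemma lt_conj_iff (P : YPartition) (i j : ℕ) : i < P.conjParts j ↔ j < P.parts i := by
  obtain ⟨N₀, hN₀⟩ := P.finite_support
  have hfin : {i : ℕ | j < P.parts i}.Finite := by
    apply Set.Finite.subset (Set.finite_Iio N₀)
    intro a ha
    simp only [Set.mem_setOf_eq] at ha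
    simp only [Set.mem_Iio]
    by_contra hc
    push_neg at hc
    rw [hN₀ a hc] at ha
    omega
  have hdc : ∀ a b : ℕ, a ≤ b → b ∈ {i : ℕ | j < P.parts i} → a ∈ {i : ℕ | j < P.parts i} :=
    fun a b hab hb => lt_of_lt_of_le hb (P.antitone hab)
  exact (mem_iff_lt_ncard hfin hdc i).symm

lemma hook_eq (P : YPartition) (i j : ℕ) (h : j < P.parts i) :
    (P.hookLength i j : ℤ) = bb P i - ((j:ℤ) + 1 - (P.conjParts j : ℤ)) := by
  have h2 : i < P.conjParts j := (lt_conj_iff P i j).2 h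
  unfold YPartition.hookLength bb
  omega

lemma conj_lt_iff (P : YPartition) (i j : ℕ) :
    (j:ℤ) + 1 - (P.conjParts j : ℤ) < bb P i ↔ j < P.parts i := by
  constructor
  · intro hlt
    by_contra hc
    push_neg at hc
    have h3 : P.conjParts j ≤ i := by
      by_contra hc2
      push_neg at hc2
      have := (lt_conj_iff P i j).1 hc2
      omega
    unfold bb at hlt
    omega
  · intro h
    have h2 : i < P.conjParts j := (lt_conj_iff P i j).2 h
    unfold bb
    omega

lemma exists_conj (P : YPartition) (x : ℤ) (hx : ∀ i, bb P i ≠ x) :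
    ∃ j : ℕ, (j:ℤ) + 1 - (P.conjParts j : ℤ) = x := by
  classical
  set S := {i : ℕ | x < bb P i} with hS
  have hfin : S.Finite := by
    apply Set.Finite.subset (Set.finite_Iio ((bb P 0 - x).toNat + 1))
    intro i hi
    simp only [hS, Set.mem_setOf_eq] at hi
    have h := bb_le P 0 i
    simp only [Nat.zero_add] at h
    simp only [Set.mem_Iio]
    omega
  have hdc : ∀ a b : ℕ, a ≤ b → b ∈ S → a ∈ S := by
    intro a b hab hb
    simp only [hS, Set.mem_setOf_eq] at hb ⊢
    have : bb P b ≤ bb P a := (bb_strictAnti P).antitone hab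
    omega
  set F := S.ncard with hF
  have key : ∀ i : ℕ, x < bb P i ↔ i < F := fun i => mem_iff_lt_ncard hfin hdc i
  have hxF : 0 ≤ x + F - 1 := by
    rcases le_or_gt x 0 with hx0 | hx0
    · have h1 : ((-x).toNat) < F := by
        rw [← key]
        have h2 : ((((-x).toNat) : ℤ)) = -x := Int.toNat_of_nonneg (by omega)
        have h3 := bb_ge P ((-x).toNat)
        have h4 := hx ((-x).toNat)
        omega
      omega
    · omega
  set j := (x + F - 1).toNat with hj
  have hjZ : (j : ℤ) = x + F - 1 := Int.toNat_of_nonneg hxF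
  have hFpos : ∀ i : ℕ, i < F → x + 1 ≤ bb P i := by
    intro i hi
    have := (key i).2 hi
    have := hx i
    omega
  have hconj : P.conjParts j = F := by
    have hset : {i : ℕ | j < P.parts i} = ↑(Finset.range F) := by
      ext i
      simp only [Set.mem_setOf_eq, Finset.coe_range, Set.mem_Iio]
      constructor
      · intro hji
        by_contra hc
        push_neg at hc
        have h1 : bb P i ≤ bb P F - ((i - F : ℕ):ℤ) := by
          have h := bb_le P F (i - F)
          rwa [show F + (i-F) = i from by omega] at h
        have h2 : bb P F ≤ x - 1 := by
          have h3 : ¬ (x < bb P F) := by rw [key]; omega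
          have h4 := hx F
          omega
        unfold bb at h1 h2
        omega
      · intro hiF
        have h1 : x + 1 ≤ bb P (F-1) := hFpos (F-1) (by omega)
        have h2 : bb P (F-1) ≤ bb P i - ((F-1-i : ℕ):ℤ) := by
          have h := bb_le P i (F-1-i)
          rwa [show i + (F-1-i) = F-1 from by omega] at h
        unfold bb at h1 h2
        omega
    unfold YPartition.conjParts
    rw [hset, Set.ncard_coe_finset, Finset.card_range]
  exact ⟨j, by rw [hconj]; omega⟩

lemma core_closed (P : YPartition) (t : ℕ) (ht : 0 < t) (hP : YPartition.IsCore t P) (i : ℕ) :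
    ∃ i', bb P i' = bb P i - t := by
  by_contra hc
  push_neg at hc
  obtain ⟨j, hj⟩ := exists_conj P (bb P i - t) hc
  have hcell : j < P.parts i := by
    rw [← conj_lt_iff P i j, hj]
    omega
  have h2 := hook_eq P i j hcell
  rw [hj] at h2
  have h3 : P.hookLength i j = t := by omega
  exact hP i j hcell h3

lemma core_closed_mul (P : YPartition) (t : ℕ) (ht : 0 < t) (hP : YPartition.IsCore t P)
    (i : ℕ) (k : ℕ) : ∃ i', bb P i' = bb P i - t * k := by
  induction k with
  | zero => exact ⟨i, by simp⟩
  | succ k ih =>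
    obtain ⟨i', hi'⟩ := ih
    obtain ⟨i'', hi''⟩ := core_closed P t ht hP i'
    refine ⟨i'', by rw [hi'', hi']; push_cast; ring⟩

lemma exists_g (P : YPartition) (t : ℕ) (ht : 0 < t) (hP : YPartition.IsCore t P)
    (N₀ : ℕ) (hN₀ : ∀ n, N₀ ≤ n → P.parts n = 0) (r : ℕ) (hrt : r < t) :
    ∃ g : ℤ, ∀ k : ℤ, (∃ i, bb P i = (r:ℤ) + t * k) ↔ k ≤ g := by
  have ht' : (1:ℤ) ≤ t := by exact_mod_cast ht
  have hbdd : ∃ b : ℤ, ∀ k : ℤ, (∃ i, bb P i = (r:ℤ) + t*k) → k ≤ b := by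
    refine ⟨max (bb P 0) 0, ?_⟩
    rintro k ⟨i, hi⟩
    have h1 : bb P i ≤ bb P 0 := (bb_strictAnti P).antitone (Nat.zero_le i)
    rcases le_or_gt k 0 with h | h
    · exact h.trans (le_max_right _ _)
    · have h2 : k ≤ (t:ℤ)*k := le_mul_of_one_le_left h.le ht'
      have h3 : (0:ℤ) ≤ r := by positivity
      have h4 := le_max_left (bb P 0) (0:ℤ)
      linarith
  have hinh : ∃ k : ℤ, ∃ i, bb P i = (r:ℤ) + t * k := by
    refine ⟨-((N₀:ℤ) + 1), (((t:ℤ) * (N₀ + 1)) - r).toNat, ?_⟩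
    have h0 : (0:ℤ) ≤ (t:ℤ) * (N₀+1) - r := by
      have h1 : (t:ℤ) ≤ (t:ℤ)*(N₀+1) := le_mul_of_one_le_right (by linarith) (by omega)
      have h2 : (r:ℤ) < t := by exact_mod_cast hrt
      linarith
    have hge : (N₀:ℤ) ≤ (t:ℤ) * (N₀+1) - r := by
      have h2 : (r:ℤ) < t := by exact_mod_cast hrt
      nlinarith
    have hparts : P.parts ((((t:ℤ) * (N₀ + 1)) - r).toNat) = 0 := by
      apply hN₀
      omega
    rw [bb_of_zero P hparts]
    rw [Int.toNat_of_nonneg h0]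
    ring
  obtain ⟨g, hg1, hg2⟩ := Int.exists_greatest_of_bdd hbdd hinh
  refine ⟨g, fun k => ⟨hg2 k, ?_⟩⟩
  intro hk
  obtain ⟨i0, hi0⟩ := hg1
  obtain ⟨i', hi'⟩ := core_closed_mul P t ht hP i0 (g - k).toNat
  refine ⟨i', ?_⟩
  rw [hi', hi0, Int.toNat_of_nonneg (by omega)]
  ring

lemma basechar (N t r : ℕ) (k : ℤ) :
    (∃ i < N, -(i:ℤ) = (r:ℤ) + t*k) ↔ (-(N:ℤ) < (r:ℤ) + t*k ∧ ((r:ℤ) + t*k ≤ 0)) := by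
  constructor
  · rintro ⟨i, h1, h2⟩
    rw [← h2]
    constructor <;> omega
  · rintro ⟨h1, h2⟩
    refine ⟨(-((r:ℤ) + t*k)).toNat, ?_, ?_⟩ <;>
    · generalize hx : (r:ℤ) + (t:ℤ)*k = x at h1 h2 ⊢
      omega

lemma le_G0_iff (t r : ℕ) (ht : 0 < t) (hrt : r < t) (k : ℤ) :
    (r:ℤ) + t*k ≤ 0 ↔ k ≤ (if r = 0 then (0:ℤ) else -1) := by
  have ht' : (1:ℤ) ≤ t := by exact_mod_cast ht
  split_ifs with h
  · subst h
    push_cast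
    rw [zero_add]
    constructor <;> intro h2 <;> nlinarith
  · have hr1 : (1:ℤ) ≤ r := by
      have : 0 < r := Nat.pos_of_ne_zero h
      exact_mod_cast this
    have hrt' : (r:ℤ) ≤ (t:ℤ) - 1 := by
      have : (r:ℤ) < t := by exact_mod_cast hrt
      omega
    constructor <;> intro h2 <;> nlinarith

lemma cnt_succ (T : ℤ) (m : ℕ) (v : ℤ) :
    ((Finset.range (m+1)).filter (fun j : ℕ => ((j:ℤ) - v) % T = 0)).card
      = ((Finset.range m).filter (fun j : ℕ => ((j:ℤ) - v) % T = 0)).card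
        + (if ((m:ℤ) - v) % T = 0 then 1 else 0) := by
  rw [Finset.range_add_one, Finset.filter_insert]
  split_ifs with h
  · rw [Finset.card_insert_of_notMem (by simp)]
  · simp

lemma row_diff (T : ℤ) (m : ℕ) (v : ℤ) :
    (((Finset.range m).filter (fun j : ℕ => ((j:ℤ) - v) % T = 0)).card : ℤ)
      - ((Finset.range m).filter (fun j : ℕ => ((j:ℤ) - (v+1)) % T = 0)).card
    = (if (((m:ℕ):ℤ) - (v+1)) % T = 0 then 1 else 0)
      - (if ((0:ℤ) - (v+1)) % T = 0 then 1 else 0) := by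
  induction m with
  | zero => simp
  | succ m ih =>
    rw [cnt_succ, cnt_succ]
    rw [show (((m+1:ℕ)):ℤ) - (v+1) = ((m:ℕ):ℤ) - v from by push_cast; ring]
    by_cases h1 : (((m:ℕ):ℤ) - v) % T = 0 <;>
      by_cases h2 : (((m:ℕ):ℤ) - (v+1)) % T = 0 <;>
      by_cases h3 : ((0:ℤ) - (v+1)) % T = 0 <;>
      simp only [h1, h2, h3, if_true, if_false, if_pos, if_neg, not_false_iff] <;>
      push_cast <;>
      push_cast at ih <;>
      omega

lemma fiber_sum (ω : ℂ) (hω0 : ω ≠ 0) (f : ℕ → ℤ) (hinj : Function.Injective f)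
    (N T : ℕ) (hT : 0 < T) (r : ℕ) (hrT : r < T) (g : ℤ)
    (hchar : ∀ k : ℤ, (∃ i < N, f i = (r:ℤ) + T*k) ↔ (-(N:ℤ) < (r:ℤ) + T*k ∧ k ≤ g)) :
    ((∑ i ∈ (Finset.range N).filter (fun i => f i % T = (r:ℤ)), ω ^ (f i))
      = ∑ k ∈ Finset.Ioc ((-(N:ℤ) - r)/T) g, ω^(r:ℤ) * (ω^(T:ℤ))^k)
    ∧ ((Finset.range N).filter (fun i => f i % T = (r:ℤ))).card
        = (g - (-(N:ℤ) - r)/T).toNat := by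
  classical
  have hT' : (0:ℤ) < T := by exact_mod_cast hT
  have hr0 : (0:ℤ) ≤ r := by positivity
  have hrT' : (r:ℤ) < T := by exact_mod_cast hrT
  have hrec : ∀ i, f i % T = (r:ℤ) → f i = (r:ℤ) + T * (f i / T) := by
    intro i h
    have h2 := Int.mul_ediv_add_emod (f i) T
    rw [h] at h2
    linarith
  have hmem : ∀ k : ℤ, k ∈ Finset.Ioc ((-(N:ℤ) - r)/T) g ↔ ∃ i < N, f i = (r:ℤ) + T*k := by
    intro k
    rw [Finset.mem_Ioc, hchar k]
    have : (-(N:ℤ) - r)/T < k ↔ -(N:ℤ) < (r:ℤ) + T*k := by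
      rw [ediv_lt_iff hT']
      constructor <;> intro <;> linarith
    tauto
  have himg : ((Finset.range N).filter (fun i => f i % T = (r:ℤ))).image (fun i => f i / T)
      = Finset.Ioc ((-(N:ℤ) - r)/T) g := by
    ext k
    simp only [Finset.mem_image, Finset.mem_filter, Finset.mem_range]
    rw [hmem k]
    constructor
    · rintro ⟨i, ⟨hiN, hir⟩, hk⟩
      exact ⟨i, hiN, by rw [← hk]; exact hrec i hir⟩
    · rintro ⟨i, hiN, hik⟩
      refine ⟨i, ⟨hiN, ?_⟩, ?_⟩
      · rw [hik, Int.add_mul_emod_self_left]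
        exact Int.emod_eq_of_lt hr0 hrT'
      · rw [hik, Int.add_mul_ediv_left _ _ (ne_of_gt hT'),
          Int.ediv_eq_zero_of_lt hr0 hrT', zero_add]
  have hinjOn : ∀ x ∈ (Finset.range N).filter (fun i => f i % T = (r:ℤ)),
      ∀ y ∈ (Finset.range N).filter (fun i => f i % T = (r:ℤ)),
      f x / T = f y / T → x = y := by
    intro x hx y hy hxy
    simp only [Finset.mem_filter, Finset.mem_range] at hx hy
    apply hinj
    rw [hrec x hx.2, hrec y hy.2, hxy]
  constructor
  · rw [← himg, Finset.sum_image hinjOn]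
    apply Finset.sum_congr rfl
    intro i hi
    simp only [Finset.mem_filter, Finset.mem_range] at hi
    rw [← zpow_mul, ← zpow_add₀ hω0, ← hrec i hi.2]
  · have := Finset.card_image_of_injOn (s := (Finset.range N).filter (fun i => f i % T = (r:ℤ)))
      (f := fun i => f i / T) (fun x hx y hy => hinjOn x hx y hy)
    rw [himg, Int.card_Ioc] at this
    omega

lemma zpow_emod (ω : ℂ) (hω0 : ω ≠ 0) (s : ℕ) (hω : ω ^ (s:ℤ) = 1) (x : ℤ) :
    ω ^ (x % (s:ℤ)) = ω ^ x := by
  conv_rhs => rw [← Int.mul_ediv_add_emod x s]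
  rw [zpow_add₀ hω0, zpow_mul, hω, one_zpow, one_mul]

lemma rcount_eq (P : YPartition) (N M : ℕ) (hN : ∀ n, N ≤ n → P.parts n = 0)
    (hM : ∀ i, P.parts i ≤ M) (m c : ℕ) :
    P.rcount m c = ((Finset.range N ×ˢ Finset.range M).filter
      (fun p => p.2 < P.parts p.1 ∧ ((p.2:ℤ) - (p.1:ℤ)) % (m:ℤ) = (c:ℤ))).card := by
  classical
  rw [YPartition.rcount, ← Set.ncard_coe_finset]
  congr 1
  ext p
  simp only [Finset.coe_filter, Set.mem_setOf_eq, Finset.mem_product, Finset.mem_range]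
  constructor
  · rintro ⟨h1, h2⟩
    refine ⟨⟨?_, lt_of_lt_of_le h1 (hM p.1)⟩, h1, h2⟩
    by_contra hc
    push_neg at hc
    rw [hN p.1 hc] at h1
    omega
  · tauto

lemma rcount_rows (P : YPartition) (N M : ℕ) (hN : ∀ n, N ≤ n → P.parts n = 0)
    (hM : ∀ i, P.parts i ≤ M) (m c : ℕ) :
    P.rcount m c = ∑ i ∈ Finset.range N,
      ((Finset.range (P.parts i)).filter (fun j : ℕ => ((j:ℤ) - (i:ℤ)) % (m:ℤ) = (c:ℤ))).card := by
  classical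
  rw [rcount_eq P N M hN hM m c, Finset.card_filter, Finset.sum_product]
  refine Finset.sum_congr rfl fun i _ => ?_
  rw [Finset.card_filter]
  have hrange : Finset.range (P.parts i) = (Finset.range M).filter (fun j => j < P.parts i) := by
    ext j
    simp only [Finset.mem_range, Finset.mem_filter]
    constructor
    · intro h
      exact ⟨lt_of_lt_of_le h (hM i), h⟩
    · tauto
  rw [hrange, Finset.sum_filter]
  refine Finset.sum_congr rfl fun j _ => ?_
  by_cases h1 : j < P.parts i <;> by_cases h2 : ((j:ℤ) - (i:ℤ)) % (m:ℤ) = (c:ℤ) <;>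
    simp [h1, h2]

lemma indicator_card (N : ℕ) (Q : ℕ → Prop) [DecidablePred Q] :
    ∑ i ∈ Finset.range N, (if Q i then (1:ℤ) else 0)
      = (((Finset.range N).filter Q).card : ℤ) := by
  rw [Finset.card_filter]
  push_cast
  rfl

lemma mod_inv1 (t : ℕ) (ht : 0 < t) (c : ℕ) (hc : c < t) : ((c+1) % t + (t-1)) % t = c := by
  rcases Nat.lt_or_ge (c+1) t with h | h
  · rw [Nat.mod_eq_of_lt h, show c+1+(t-1) = c + t from by omega, Nat.add_mod_right,
      Nat.mod_eq_of_lt hc]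
  · have h2 : c+1 = t := by omega
    rw [h2, Nat.mod_self, Nat.zero_add, Nat.mod_eq_of_lt (by omega)]
    omega

lemma mod_inv2 (t : ℕ) (ht : 0 < t) (r : ℕ) (hr : r < t) : ((r + (t-1)) % t + 1) % t = r := by
  rcases Nat.eq_zero_or_pos r with h | h
  · subst h
    rw [Nat.zero_add, Nat.mod_eq_of_lt (show t-1 < t from by omega),
      show t-1+1 = t from by omega, Nat.mod_self]
  · rw [show r + (t-1) = (r-1) + t from by omega, Nat.add_mod_right,
      Nat.mod_eq_of_lt (show r-1 < t from by omega), show r-1+1 = r from by omega,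
      Nat.mod_eq_of_lt hr]

end GBGAux

theorem gbg_stmt_10 (s t : ℕ) (hs : 1 < s) (ht : 1 < t) (hco : Nat.Coprime s t)
    (P : YPartition) (hP : YPartition.IsCore t P) :
    P.gbg s =
      (∑ i ∈ Finset.range t,
          Complex.exp (2 * (Real.pi : ℂ) * Complex.I / (s : ℂ)) ^ (i + 1) *
            (Complex.exp (2 * (Real.pi : ℂ) * Complex.I / (s : ℂ)) ^ ((t : ℤ) * P.nvec t i)
              - 1)) /
        ((1 - Complex.exp (2 * (Real.pi : ℂ) * Complex.I / (s : ℂ))) *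
          (1 - Complex.exp (2 * (Real.pi : ℂ) * Complex.I / (s : ℂ)) ^ t)) := by
  classical
  set ω : ℂ := Complex.exp (2 * (Real.pi : ℂ) * Complex.I / (s : ℂ)) with hωdef
  have hs0 : 0 < s := by omega
  have ht0 : 0 < t := by omega
  have htZ : (0:ℤ) < t := by exact_mod_cast ht0
  have hsC : (s:ℂ) ≠ 0 := Nat.cast_ne_zero.2 (by omega)
  have hω0 : ω ≠ 0 := Complex.exp_ne_zero _
  have h2pi : (2 * (Real.pi:ℂ) * Complex.I) ≠ 0 := by
    simp [Real.pi_ne_zero, Complex.I_ne_zero, Complex.ofReal_ne_zero]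
  have hωs : ω ^ s = 1 := by
    rw [hωdef, ← Complex.exp_nat_mul,
      show (s:ℂ) * (2 * (Real.pi:ℂ) * Complex.I / s) = 2 * (Real.pi:ℂ) * Complex.I from by
        field_simp]
    exact Complex.exp_two_pi_mul_I
  have hωsz : ω ^ (s:ℤ) = 1 := by rw [zpow_natCast]; exact hωs
  have hω1 : ω ≠ 1 := by
    intro h
    rw [hωdef, Complex.exp_eq_one_iff] at h
    obtain ⟨n, hn⟩ := h
    rw [div_eq_iff hsC] at hn
    have h2 : ((n:ℂ) * s - 1) * (2 * (Real.pi:ℂ) * Complex.I) = 0 := by linear_combination -hn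
    have h3 : (n:ℂ) * s - 1 = 0 := by
      rcases mul_eq_zero.1 h2 with h' | h'
      · exact h'
      · exact absurd h' h2pi
    have h4 : (n * s : ℤ) = 1 := by
      have : ((n * s : ℤ) : ℂ) = ((1:ℤ) : ℂ) := by push_cast; linear_combination h3
      exact_mod_cast this
    have h5 : (s:ℤ) ∣ 1 := ⟨n, by linarith⟩
    have h6 := Int.le_of_dvd one_pos h5
    omega
  have hωt : ω ^ t ≠ 1 := by
    intro h
    rw [hωdef, ← Complex.exp_nat_mul, Complex.exp_eq_one_iff] at h
    obtain ⟨n, hn⟩ := h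
    rw [mul_div_assoc'] at hn
    rw [div_eq_iff hsC] at hn
    have h2 : ((n:ℂ) * s - t) * (2 * (Real.pi:ℂ) * Complex.I) = 0 := by linear_combination -hn
    have h3 : (n:ℂ) * s - t = 0 := by
      rcases mul_eq_zero.1 h2 with h' | h'
      · exact h'
      · exact absurd h' h2pi
    have h4 : (n * s : ℤ) = (t:ℤ) := by
      have : ((n * s : ℤ) : ℂ) = ((t:ℕ) : ℂ) := by push_cast; linear_combination h3
      exact_mod_cast this
    have h5 : (s:ℤ) ∣ (t:ℤ) := ⟨n, by linarith⟩
    have h6 : s ∣ t := Int.natCast_dvd_natCast.1 h5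
    have h7 : s ∣ 1 := by
      have := Nat.dvd_gcd (dvd_refl s) h6
      rwa [Nat.Coprime.gcd_eq_one hco] at this
    have h8 := Nat.le_of_dvd one_pos h7
    omega
  obtain ⟨N₀, hN₀⟩ := P.finite_support
  set N : ℕ := N₀ + t + 1 with hNdef
  have hN : ∀ n, N ≤ n → P.parts n = 0 := fun n hn => hN₀ n (by omega)
  have hpartsN : P.parts N = 0 := hN N le_rfl
  have hM : ∀ i, P.parts i ≤ P.parts 0 := fun i => P.antitone (Nat.zero_le i)
  -- greatest elements of beta-classes
  have hGex : ∀ r : ℕ, ∃ g : ℤ, r < t → ∀ k : ℤ,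
      (∃ i, GBGAux.bb P i = (r:ℤ) + t * k) ↔ k ≤ g := by
    intro r
    by_cases hr : r < t
    · obtain ⟨g, hg⟩ := GBGAux.exists_g P t ht0 hP N₀ hN₀ r hr
      exact ⟨g, fun _ => hg⟩
    · exact ⟨0, fun h' => absurd h' hr⟩
  choose G hG using hGex
  set G0 : ℕ → ℤ := fun r => if r = 0 then 0 else -1 with hG0def
  have hbbN : GBGAux.bb P N = -(N:ℤ) := GBGAux.bb_of_zero P hpartsN
  have hBchar : ∀ r : ℕ, r < t → ∀ k : ℤ,
      (∃ i < N, GBGAux.bb P i = (r:ℤ) + t*k) ↔ (-(N:ℤ) < (r:ℤ) + t*k ∧ k ≤ G r) := by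
    intro r hr k
    constructor
    · rintro ⟨i, hiN, hi⟩
      refine ⟨?_, (hG r hr k).1 ⟨i, hi⟩⟩
      rw [← hi, ← hbbN]
      exact GBGAux.bb_strictAnti P hiN
    · rintro ⟨h1, h2⟩
      obtain ⟨i, hi⟩ := (hG r hr k).2 h2
      refine ⟨i, ?_, hi⟩
      have h3 : GBGAux.bb P N < GBGAux.bb P i := by rw [hbbN, hi]; exact h1
      exact (GBGAux.bb_strictAnti P).lt_iff_gt.1 h3
  have hB0char : ∀ r : ℕ, r < t → ∀ k : ℤ,
      (∃ i < N, -(i:ℤ) = (r:ℤ) + t*k) ↔ (-(N:ℤ) < (r:ℤ) + t*k ∧ k ≤ G0 r) := by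
    intro r hr k
    rw [GBGAux.basechar N t r k]
    simp only [hG0def]
    rw [GBGAux.le_G0_iff t r ht0 hr k]
  have hAle : ∀ r : ℕ, r < t → (t:ℤ) * ((-(N:ℤ) - r)/t) ≤ -(N:ℤ) - r := by
    intro r hr
    have h1 := Int.mul_ediv_add_emod (-(N:ℤ) - r) t
    have h2 := Int.emod_nonneg (-(N:ℤ) - r) (ne_of_gt htZ)
    linarith
  have hAG0 : ∀ r : ℕ, r < t → (-(N:ℤ) - r)/t ≤ G0 r := by
    intro r hr
    have h1 : (r:ℤ) + t * ((-(N:ℤ) - r)/t) ≤ 0 := by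
      have := hAle r hr
      have h2 : (0:ℤ) ≤ N := by positivity
      linarith
    have := (GBGAux.le_G0_iff t r ht0 hr ((-(N:ℤ) - r)/t)).1 h1
    simpa only [hG0def] using this
  have hAG : ∀ r : ℕ, r < t → (-(N:ℤ) - r)/t ≤ G r := by
    intro r hr
    apply (hG r hr ((-(N:ℤ) - r)/t)).1
    have h1 := hAle r hr
    set x : ℤ := (r:ℤ) + t * ((-(N:ℤ) - r)/t) with hx
    have h2 : x ≤ -(N:ℤ) := by rw [hx]; linarith
    refine ⟨(-x).toNat, ?_⟩
    have h3 : P.parts ((-x).toNat) = 0 := by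
      apply hN
      omega
    rw [GBGAux.bb_of_zero P h3, Int.toNat_of_nonneg (by omega)]
    omega
  -- gbg as a double sum over cells
  have hgbg : P.gbg s = ∑ i ∈ Finset.range N, ∑ j ∈ Finset.range (P.parts i),
      ω ^ ((j:ℤ) - (i:ℤ)) := by
    rw [YPartition.gbg]
    have hA : ∀ c : ℕ, (P.rcount s c : ℂ)
        = ∑ i ∈ Finset.range N, ∑ j ∈ Finset.range (P.parts i),
            (if ((j:ℤ)-(i:ℤ)) % (s:ℤ) = (c:ℤ) then (1:ℂ) else 0) := by
      intro c
      rw [GBGAux.rcount_rows P N (P.parts 0) hN hM s c]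
      push_cast
      refine Finset.sum_congr rfl fun i _ => ?_
      rw [Finset.card_filter]
      push_cast
      rfl
    calc ∑ c ∈ Finset.range s, (P.rcount s c : ℂ) * ω ^ c
        = ∑ c ∈ Finset.range s, ∑ i ∈ Finset.range N, ∑ j ∈ Finset.range (P.parts i),
            (if ((j:ℤ)-(i:ℤ)) % (s:ℤ) = (c:ℤ) then ω ^ c else 0) := by
          refine Finset.sum_congr rfl fun c _ => ?_
          rw [hA c, Finset.sum_mul]
          refine Finset.sum_congr rfl fun i _ => ?_
          rw [Finset.sum_mul]
          refine Finset.sum_congr rfl fun j _ => ?_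
          split_ifs <;> simp
      _ = ∑ i ∈ Finset.range N, ∑ j ∈ Finset.range (P.parts i), ∑ c ∈ Finset.range s,
            (if ((j:ℤ)-(i:ℤ)) % (s:ℤ) = (c:ℤ) then ω ^ c else 0) := by
          rw [Finset.sum_comm]
          refine Finset.sum_congr rfl fun i _ => Finset.sum_comm
      _ = ∑ i ∈ Finset.range N, ∑ j ∈ Finset.range (P.parts i), ω ^ ((j:ℤ) - (i:ℤ)) := by
          refine Finset.sum_congr rfl fun i _ => Finset.sum_congr rfl fun j _ => ?_
          have hx0 : 0 ≤ ((j:ℤ)-(i:ℤ)) % (s:ℤ) :=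
            Int.emod_nonneg _ (by exact_mod_cast Nat.pos_iff_ne_zero.1 hs0)
          have hxs : ((j:ℤ)-(i:ℤ)) % (s:ℤ) < s :=
            Int.emod_lt_of_pos _ (by exact_mod_cast hs0)
          rw [Finset.sum_eq_single ((((j:ℤ)-(i:ℤ)) % (s:ℤ)).toNat)]
          · rw [if_pos (by rw [Int.toNat_of_nonneg hx0]), ← zpow_natCast ω,
              Int.toNat_of_nonneg hx0, GBGAux.zpow_emod ω hω0 s hωsz]
          · intro b _ hne
            rw [if_neg]
            intro hEq
            exact hne (by omega)
          · intro hnot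
            exact absurd (Finset.mem_range.2 (by omega)) hnot
  -- row geometric sums
  have E1 : (ω - 1) * P.gbg s
      = (∑ i ∈ Finset.range N, ω ^ (GBGAux.bb P i))
        - ∑ i ∈ Finset.range N, ω ^ (-(i:ℤ)) := by
    rw [hgbg, Finset.mul_sum, ← Finset.sum_sub_distrib]
    refine Finset.sum_congr rfl fun i _ => ?_
    calc (ω - 1) * ∑ j ∈ Finset.range (P.parts i), ω ^ ((j:ℤ) - (i:ℤ))
        = (ω - 1) * ∑ j ∈ Finset.range (P.parts i), ω ^ (-(i:ℤ) + (j:ℤ)) := by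
          congr 1
          exact Finset.sum_congr rfl fun j _ => by
            rw [show (j:ℤ) - (i:ℤ) = -(i:ℤ) + (j:ℤ) from by ring]
      _ = ω ^ (-(i:ℤ) + (P.parts i : ℤ)) - ω ^ (-(i:ℤ)) :=
          GBGAux.geom_range ω hω0 (-(i:ℤ)) (P.parts i)
      _ = ω ^ (GBGAux.bb P i) - ω ^ (-(i:ℤ)) := by
          rw [show -(i:ℤ) + (P.parts i : ℤ) = GBGAux.bb P i from by unfold GBGAux.bb; ring]
  -- fiberwise decompositions
  have hmapB : ∀ i ∈ Finset.range N, (GBGAux.bb P i % t).toNat ∈ Finset.range t := by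
    intro i _
    have h1 := Int.emod_nonneg (GBGAux.bb P i) (ne_of_gt htZ)
    have h2 := Int.emod_lt_of_pos (GBGAux.bb P i) htZ
    exact Finset.mem_range.2 (by omega)
  have hmap0 : ∀ i ∈ Finset.range N, ((-(i:ℤ)) % t).toNat ∈ Finset.range t := by
    intro i _
    have h1 := Int.emod_nonneg (-(i:ℤ)) (ne_of_gt htZ)
    have h2 := Int.emod_lt_of_pos (-(i:ℤ)) htZ
    exact Finset.mem_range.2 (by omega)
  have hfibB : ∑ i ∈ Finset.range N, ω ^ (GBGAux.bb P i)
      = ∑ r ∈ Finset.range t, ∑ i ∈ (Finset.range N).filter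
          (fun i => GBGAux.bb P i % t = (r:ℤ)), ω ^ (GBGAux.bb P i) := by
    rw [← Finset.sum_fiberwise_of_maps_to hmapB (fun i => ω ^ (GBGAux.bb P i))]
    refine Finset.sum_congr rfl fun r hr => ?_
    have hrt := Finset.mem_range.1 hr
    congr 1
    refine Finset.filter_congr fun i _ => ?_
    have h1 := Int.emod_nonneg (GBGAux.bb P i) (ne_of_gt htZ)
    have h2 := Int.emod_lt_of_pos (GBGAux.bb P i) htZ
    constructor <;> intro h <;> omega
  have hfib0 : ∑ i ∈ Finset.range N, ω ^ (-(i:ℤ))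
      = ∑ r ∈ Finset.range t, ∑ i ∈ (Finset.range N).filter
          (fun i : ℕ => (-(i:ℤ)) % t = (r:ℤ)), ω ^ (-(i:ℤ)) := by
    rw [← Finset.sum_fiberwise_of_maps_to hmap0 (fun i : ℕ => ω ^ (-(i:ℤ)))]
    refine Finset.sum_congr rfl fun r hr => ?_
    have hrt := Finset.mem_range.1 hr
    congr 1
    refine Finset.filter_congr fun i _ => ?_
    have h1 := Int.emod_nonneg (-(i:ℤ)) (ne_of_gt htZ)
    have h2 := Int.emod_lt_of_pos (-(i:ℤ)) htZ
    constructor <;> intro h <;> omega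
  -- per-fiber evaluations
  have hBsum := fun (r : ℕ) (hr : r < t) =>
    GBGAux.fiber_sum ω hω0 (GBGAux.bb P) (GBGAux.bb_strictAnti P).injective N t ht0 r hr
      (G r) (hBchar r hr)
  have h0inj : Function.Injective (fun i : ℕ => -(i:ℤ)) := by
    intro a b h
    simpa using h
  have h0sum := fun (r : ℕ) (hr : r < t) =>
    GBGAux.fiber_sum ω hω0 (fun i : ℕ => -(i:ℤ)) h0inj N t ht0 r hr (G0 r) (hB0char r hr)
  -- n-vector in terms of G and G0
  have hnv : ∀ c : ℕ, c < t → P.nvec t c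
      = (((Finset.range N).filter
          (fun i => GBGAux.bb P i % t = ((((c+1) % t : ℕ)):ℤ))).card : ℤ)
        - (((Finset.range N).filter
          (fun i : ℕ => (-(i:ℤ)) % t = ((((c+1) % t : ℕ)):ℤ))).card : ℤ) := by
    intro c hc
    rw [YPartition.nvec, GBGAux.rcount_rows P N (P.parts 0) hN hM t c,
      GBGAux.rcount_rows P N (P.parts 0) hN hM t ((c+1) % t)]
    rw [Nat.cast_sum, Nat.cast_sum, ← Finset.sum_sub_distrib]
    rw [← GBGAux.indicator_card N (fun i : ℕ => GBGAux.bb P i % (t:ℤ) = ((((c+1) % t : ℕ)):ℤ)),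
        ← GBGAux.indicator_card N (fun i : ℕ => (-(i:ℤ)) % (t:ℤ) = ((((c+1) % t : ℕ)):ℤ)),
        ← Finset.sum_sub_distrib]
    refine Finset.sum_congr rfl fun i _ => ?_
    have hcast : ((((c+1) % t : ℕ)):ℤ) = ((c:ℤ)+1) % t := by
      push_cast
      ring
    have e1 : ((Finset.range (P.parts i)).filter
        (fun j : ℕ => ((j:ℤ) - (i:ℤ)) % (t:ℤ) = (c:ℤ)))
        = ((Finset.range (P.parts i)).filter
            (fun j : ℕ => ((j:ℤ) - (((c:ℤ)+i))) % (t:ℤ) = 0)) := by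
      refine Finset.filter_congr fun j _ => ?_
      have hcz : (c:ℤ) % t = (c:ℤ) :=
        Int.emod_eq_of_lt (by positivity) (by exact_mod_cast hc)
      constructor
      · intro h
        have h' : ((j:ℤ) - i) % t = (c:ℤ) % t := by rw [h, hcz]
        rw [Int.emod_eq_emod_iff_emod_sub_eq_zero] at h'
        rw [show (j:ℤ) - ((c:ℤ)+i) = ((j:ℤ) - i) - c from by ring]
        exact h'
      · intro h
        have h' : (((j:ℤ) - i) - c) % t = 0 := by
          rw [show ((j:ℤ) - i) - c = (j:ℤ) - ((c:ℤ)+i) from by ring]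
          exact h
        rw [← Int.emod_eq_emod_iff_emod_sub_eq_zero] at h'
        rw [h', hcz]
    have e2 : ((Finset.range (P.parts i)).filter
        (fun j : ℕ => ((j:ℤ) - (i:ℤ)) % (t:ℤ) = ((((c+1) % t : ℕ)):ℤ)))
        = ((Finset.range (P.parts i)).filter
            (fun j : ℕ => ((j:ℤ) - ((((c:ℤ)+i))+1)) % (t:ℤ) = 0)) := by
      refine Finset.filter_congr fun j _ => ?_
      rw [hcast]
      rw [show (j:ℤ) - (((c:ℤ)+i)+1) = ((j:ℤ) - i) - ((c:ℤ)+1) from by ring]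
      rw [← Int.emod_eq_emod_iff_emod_sub_eq_zero]
    rw [e1, e2, GBGAux.row_diff (t:ℤ) (P.parts i) ((c:ℤ)+(i:ℤ))]
    have h1 : ((((P.parts i):ℕ):ℤ) - (((c:ℤ)+i)+1)) % t = 0
        ↔ GBGAux.bb P i % t = ((((c+1) % t : ℕ)):ℤ) := by
      rw [hcast,
        show ((((P.parts i):ℕ):ℤ) - (((c:ℤ)+i)+1)) = GBGAux.bb P i - ((c:ℤ)+1) from by
          unfold GBGAux.bb; ring,
        ← Int.emod_eq_emod_iff_emod_sub_eq_zero]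
    have h2 : (((0:ℤ)) - (((c:ℤ)+i)+1)) % t = 0
        ↔ (-(i:ℤ)) % t = ((((c+1) % t : ℕ)):ℤ) := by
      rw [hcast,
        show (((0:ℤ)) - (((c:ℤ)+i)+1)) = (-(i:ℤ)) - ((c:ℤ)+1) from by ring,
        ← Int.emod_eq_emod_iff_emod_sub_eq_zero]
    rw [if_congr h1 rfl rfl, if_congr h2 rfl rfl]
  have hnvGG : ∀ c : ℕ, c < t → P.nvec t c = G ((c+1)%t) - G0 ((c+1)%t) := by
    intro c hc
    have hr : (c+1)%t < t := Nat.mod_lt _ ht0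
    rw [hnv c hc, (hBsum _ hr).2, (h0sum _ hr).2]
    have h1 := hAG _ hr
    have h2 := hAG0 _ hr
    omega
  -- per-fiber geometric evaluation
  have hu0 : ω^(t:ℤ) ≠ 0 := zpow_ne_zero _ hω0
  have hterm : ∀ r : ℕ, r < t →
      (ω^(t:ℤ) - 1)
        * ((∑ i ∈ (Finset.range N).filter (fun i => GBGAux.bb P i % t = (r:ℤ)),
              ω ^ (GBGAux.bb P i))
          - ∑ i ∈ (Finset.range N).filter (fun i : ℕ => (-(i:ℤ)) % t = (r:ℤ)), ω ^ (-(i:ℤ)))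
      = ω^(r:ℤ) * ((ω^(t:ℤ))^(G r + 1) - (ω^(t:ℤ))^(G0 r + 1)) := by
    intro r hr
    rw [(hBsum r hr).1, (h0sum r hr).1, ← Finset.mul_sum, ← Finset.mul_sum]
    have g1 := GBGAux.geom_Ioc (ω^(t:ℤ)) hu0 _ _ (hAG r hr)
    have g2 := GBGAux.geom_Ioc (ω^(t:ℤ)) hu0 _ _ (hAG0 r hr)
    calc (ω^(t:ℤ) - 1) * (ω^(r:ℤ) * ∑ k ∈ Finset.Ioc ((-(N:ℤ) - r)/t) (G r), (ω^(t:ℤ))^k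
          - ω^(r:ℤ) * ∑ k ∈ Finset.Ioc ((-(N:ℤ) - r)/t) (G0 r), (ω^(t:ℤ))^k)
        = ω^(r:ℤ) * (((ω^(t:ℤ) - 1) * ∑ k ∈ Finset.Ioc ((-(N:ℤ) - r)/t) (G r), (ω^(t:ℤ))^k)
          - ((ω^(t:ℤ) - 1) * ∑ k ∈ Finset.Ioc ((-(N:ℤ) - r)/t) (G0 r), (ω^(t:ℤ))^k)) := by
          ring
      _ = ω^(r:ℤ) * ((ω^(t:ℤ))^(G r + 1) - (ω^(t:ℤ))^(G0 r + 1)) := by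
          rw [g1, g2]
          ring
  -- final term computation
  have hfc : ∀ c : ℕ, c < t →
      ω^((((c+1)%t : ℕ)):ℤ) * ((ω^(t:ℤ))^(G ((c+1)%t) + 1) - (ω^(t:ℤ))^(G0 ((c+1)%t) + 1))
      = ω^(c+1) * (ω^((t:ℤ) * P.nvec t c) - 1) := by
    intro c hc
    have hδ := hnvGG c hc
    have hsplit : (ω^(t:ℤ))^(G ((c+1)%t) + 1) - (ω^(t:ℤ))^(G0 ((c+1)%t) + 1)
        = (ω^(t:ℤ))^(G0 ((c+1)%t) + 1) * ((ω^(t:ℤ))^(P.nvec t c) - 1) := by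
      rw [show G ((c+1)%t) + 1 = (G0 ((c+1)%t) + 1) + (G ((c+1)%t) - G0 ((c+1)%t)) from by
        ring, zpow_add₀ hu0, ← hδ]
      ring
    rw [hsplit]
    have hωtn : (ω^(t:ℤ))^(P.nvec t c) = ω^((t:ℤ) * P.nvec t c) := (zpow_mul ω _ _).symm
    rw [hωtn]
    rcases Nat.lt_or_ge (c+1) t with h | h
    · have hr1 : (c+1)%t = c+1 := Nat.mod_eq_of_lt h
      have hr0 : (c+1)%t ≠ 0 := by omega
      have hg0 : G0 ((c+1)%t) = -1 := by simp only [hG0def]; rw [if_neg hr0]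
      rw [hg0, hr1]
      rw [show ((-1:ℤ) + 1) = 0 from by norm_num, zpow_zero, one_mul,
        ← zpow_natCast ω (c+1)]
    · have hc1 : c+1 = t := by omega
      have hr1 : (c+1)%t = 0 := by rw [hc1, Nat.mod_self]
      have hg0 : G0 ((c+1)%t) = 0 := by simp only [hG0def]; rw [hr1]; norm_num
      rw [hg0, hr1, hc1]
      rw [← zpow_natCast ω t]
      push_cast
      rw [zpow_zero, zpow_one]
      ring
  -- reindex sum over residues
  have hreindex : ∀ (F : ℕ → ℂ),
      ∑ r ∈ Finset.range t, F r = ∑ c ∈ Finset.range t, F ((c+1)%t) := by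
    intro F
    refine Finset.sum_nbij' (fun r => (r + (t-1)) % t) (fun c => (c+1) % t) ?_ ?_ ?_ ?_ ?_
    · intro r hr
      exact Finset.mem_range.2 (Nat.mod_lt _ ht0)
    · intro c hc
      exact Finset.mem_range.2 (Nat.mod_lt _ ht0)
    · intro r hr
      exact GBGAux.mod_inv2 t ht0 r (Finset.mem_range.1 hr)
    · intro c hc
      exact GBGAux.mod_inv1 t ht0 c (Finset.mem_range.1 hc)
    · intro r hr
      rw [GBGAux.mod_inv2 t ht0 r (Finset.mem_range.1 hr)]
  -- assemble E2
  have E2 : (ω^(t:ℤ) - 1)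
      * ((∑ i ∈ Finset.range N, ω ^ (GBGAux.bb P i)) - ∑ i ∈ Finset.range N, ω ^ (-(i:ℤ)))
      = ∑ c ∈ Finset.range t, ω^(c+1) * (ω^((t:ℤ) * P.nvec t c) - 1) := by
    rw [hfibB, hfib0, ← Finset.sum_sub_distrib, Finset.mul_sum]
    rw [hreindex (fun r => (ω^(t:ℤ) - 1)
      * ((∑ i ∈ (Finset.range N).filter (fun i => GBGAux.bb P i % t = (r:ℤ)),
            ω ^ (GBGAux.bb P i))
        - ∑ i ∈ (Finset.range N).filter (fun i : ℕ => (-(i:ℤ)) % t = (r:ℤ)), ω ^ (-(i:ℤ))))]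
    refine Finset.sum_congr rfl fun c hc => ?_
    have hcmem := Finset.mem_range.1 hc
    have hr : (c+1)%t < t := Nat.mod_lt _ ht0
    rw [hterm _ hr, hfc c hcmem]
  -- endgame
  have hu : ω^(t:ℤ) = ω^t := zpow_natCast ω t
  have hD1 : (1:ℂ) - ω ≠ 0 := sub_ne_zero.2 (Ne.symm hω1)
  have hD2 : (1:ℂ) - ω^t ≠ 0 := sub_ne_zero.2 (Ne.symm hωt)
  rw [eq_div_iff (mul_ne_zero hD1 hD2)]
  calc P.gbg s * ((1 - ω) * (1 - ω^t))
      = (ω^(t:ℤ) - 1) * ((ω - 1) * P.gbg s) := by rw [hu]; ring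
    _ = (ω^(t:ℤ) - 1)
        * ((∑ i ∈ Finset.range N, ω ^ (GBGAux.bb P i))
          - ∑ i ∈ Finset.range N, ω ^ (-(i:ℤ))) := by rw [E1]
    _ = ∑ c ∈ Finset.range t, ω^(c+1) * (ω^((t:ℤ) * P.nvec t c) - 1) := E2
end

section
/- Let s, t > 1 with gcd(s,t) = 1. The number ν(s,t) of distinct values that the GBG-rank mod s of a t-core partition can take satisfies ν(s,t) ≤ C(s+t, s)/(s+t). -/
namespace GBG

lemma initialSeg {S : Set ℕ} (hfin : S.Finite) (hdc : ∀ a b : ℕ, a ≤ b → b ∈ S → a ∈ S) :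
    S = Set.Iio S.ncard := by
  ext i
  simp only [Set.mem_Iio]
  constructor
  · intro hi
    have hsub : Set.Iic i ⊆ S := fun a ha => hdc a i ha hi
    have h1 := Set.ncard_le_ncard hsub hfin
    rw [← Finset.coe_Iic, Set.ncard_coe_finset, Nat.card_Iic] at h1
    omega
  · intro hi
    by_contra hne
    have hsub : S ⊆ Set.Iio i := by
      intro j hj
      simp only [Set.mem_Iio]
      by_contra h
      exact hne (hdc i j (by omega) hj)
    have h1 := Set.ncard_le_ncard hsub (Set.finite_Iio i)
    rw [← Finset.coe_range, Set.ncard_coe_finset, Finset.card_range] at h1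
    omega

noncomputable def xseq (P : YPartition) (i : ℕ) : ℤ := (P.parts i : ℤ) - i

def XS (P : YPartition) : Set ℤ := Set.range (xseq P)

lemma xseq_strictAnti (P : YPartition) : StrictAnti (xseq P) := by
  apply strictAnti_nat_of_succ_lt
  intro n
  have h := P.antitone (Nat.le_succ n)
  unfold xseq
  have hc : (P.parts (n+1) : ℤ) ≤ (P.parts n : ℤ) := by exact_mod_cast h
  push_cast
  omega

noncomputable def zseq (P : YPartition) (j : ℕ) : ℤ := (j : ℤ) + 1 - P.conjParts j

lemma conj_char (P : YPartition) (j i : ℕ) : i < P.conjParts j ↔ j < P.parts i := by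
  obtain ⟨N₀, hN₀⟩ := P.finite_support
  set S : Set ℕ := {i | j < P.parts i} with hS
  have hfin : S.Finite := by
    apply Set.Finite.subset (Set.finite_Iio N₀)
    intro a ha
    simp only [Set.mem_Iio]
    by_contra h
    have := hN₀ a (by omega)
    simp only [hS, Set.mem_setOf_eq] at ha
    omega
  have hdc : ∀ a b : ℕ, a ≤ b → b ∈ S → a ∈ S := by
    intro a b hab hb
    simp only [hS, Set.mem_setOf_eq] at *
    exact lt_of_lt_of_le hb (P.antitone hab)
  have hseg := initialSeg hfin hdc
  have hmem : (i ∈ S) ↔ i < S.ncard := by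
    constructor
    · intro h; have := hseg ▸ h; simpa using this
    · intro h; rw [hseg]; simpa using h
  unfold YPartition.conjParts
  rw [show {i : ℕ | j < P.parts i} = S from rfl, ← hmem]
  simp [hS]

lemma xseq_ne_zseq (P : YPartition) (i j : ℕ) : xseq P i ≠ zseq P j := by
  rcases lt_or_ge j (P.parts i) with h | h
  · have hij : i < P.conjParts j := (conj_char P j i).2 h
    unfold xseq zseq
    have h1 : (i : ℤ) + 1 ≤ (P.conjParts j : ℤ) := by exact_mod_cast hij
    have h2 : (j : ℤ) + 1 ≤ (P.parts i : ℤ) := by exact_mod_cast h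
    omega
  · have hij : ¬ (i < P.conjParts j) := fun hc => by
      have := (conj_char P j i).1 hc; omega
    unfold xseq zseq
    have h1 : (P.conjParts j : ℤ) ≤ (i : ℤ) := by exact_mod_cast (by omega : P.conjParts j ≤ i)
    have h2 : (P.parts i : ℤ) ≤ (j : ℤ) := by exact_mod_cast h
    omega

lemma mem_or_zseq (P : YPartition) (m : ℤ) : m ∈ XS P ∨ ∃ j : ℕ, m = zseq P j := by
  by_cases hm : m ∈ XS P
  · exact Or.inl hm
  right
  have hex : ∃ i : ℕ, xseq P i < m := by
    refine ⟨P.parts 0 + 1 + m.natAbs, ?_⟩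
    unfold xseq
    have h1 : P.parts (P.parts 0 + 1 + m.natAbs) ≤ P.parts 0 := P.antitone (by omega)
    have h1c : (P.parts (P.parts 0 + 1 + m.natAbs) : ℤ) ≤ (P.parts 0 : ℤ) := by exact_mod_cast h1
    have h3 : ((P.parts 0 + 1 + m.natAbs : ℕ) : ℤ) = (P.parts 0 : ℤ) + 1 + (m.natAbs : ℤ) := by
      push_cast; ring
    rcases Int.natAbs_eq m with h | h <;> omega
  classical
  set i := Nat.find hex with hidef
  have hi : xseq P i < m := Nat.find_spec hex
  have hlt : ∀ i' < i, m < xseq P i' := by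
    intro i' hi'
    have h1 : ¬ xseq P i' < m := Nat.find_min hex hi'
    rcases lt_or_eq_of_le (le_of_not_gt h1) with h | h
    · exact h
    · exact absurd ⟨i', h.symm⟩ hm
  have hxi : xseq P i = (P.parts i : ℤ) - i := rfl
  have hge : 0 ≤ m + i - 1 := by
    have hp : 0 ≤ (P.parts i : ℤ) := by positivity
    omega
  set j : ℕ := (m + i - 1).toNat with hjdef
  have hjz : (j : ℤ) = m + i - 1 := Int.toNat_of_nonneg hge
  refine ⟨j, ?_⟩
  have hset : {i' : ℕ | j < P.parts i'} = Set.Iio i := by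
    ext i'
    simp only [Set.mem_setOf_eq, Set.mem_Iio]
    constructor
    · intro h
      by_contra hc
      push_neg at hc
      have h2 : P.parts i' ≤ P.parts i := P.antitone hc
      have hcast : (P.parts i' : ℤ) ≤ (P.parts i : ℤ) := by exact_mod_cast h2
      have hcast2 : (j : ℤ) < (P.parts i' : ℤ) := by exact_mod_cast h
      omega
    · intro h
      have h1 : 1 ≤ i := by omega
      have hx := hlt (i-1) (by omega)
      have hp : P.parts (i-1) ≤ P.parts i' := P.antitone (by omega)
      have e1 : xseq P (i-1) = (P.parts (i-1) : ℤ) - ((i-1 : ℕ) : ℤ) := rfl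
      have e2 : ((i-1 : ℕ) : ℤ) = (i : ℤ) - 1 := by
        rw [Nat.cast_sub h1]; simp
      have hpc : (P.parts (i-1) : ℤ) ≤ (P.parts i' : ℤ) := by exact_mod_cast hp
      have : (j : ℤ) < (P.parts i' : ℤ) := by omega
      exact_mod_cast this
  have hconj : P.conjParts j = i := by
    unfold YPartition.conjParts
    rw [hset, ← Finset.coe_range, Set.ncard_coe_finset, Finset.card_range]
  unfold zseq
  rw [hconj, hjz]
  ring

lemma core_closed {t : ℕ} {P : YPartition} (hcore : YPartition.IsCore t P) (ht : 1 ≤ t) :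
    ∀ m ∈ XS P, m - t ∈ XS P := by
  rintro m ⟨i, rfl⟩
  rcases mem_or_zseq P (xseq P i - t) with h | ⟨j, hj⟩
  · exact h
  exfalso
  have hzx : zseq P j < xseq P i := by
    have : (t : ℤ) ≥ 1 := by exact_mod_cast ht
    omega
  have hpj : j < P.parts i := by
    by_contra hc
    push_neg at hc
    have hic : ¬ (i < P.conjParts j) := fun h2 => by
      have := (conj_char P j i).1 h2; omega
    have h1 : (P.conjParts j : ℤ) ≤ (i : ℤ) := by exact_mod_cast (by omega : P.conjParts j ≤ i)
    have h2 : (P.parts i : ℤ) ≤ (j : ℤ) := by exact_mod_cast hc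
    unfold xseq zseq at hzx
    omega
  have hic : i < P.conjParts j := (conj_char P j i).2 hpj
  apply hcore i j hpj
  unfold YPartition.hookLength
  have h1 : (i : ℤ) + 1 ≤ (P.conjParts j : ℤ) := by exact_mod_cast hic
  have h2 : (j : ℤ) + 1 ≤ (P.parts i : ℤ) := by exact_mod_cast hpj
  unfold xseq zseq at hj
  omega

end GBG
namespace GBG

def Aset (P : YPartition) (t N r : ℕ) : Set ℕ :=
  {k | ((r + 1 + t * k : ℕ) : ℤ) - N ∈ XS P}

noncomputable def acount (P : YPartition) (t N r : ℕ) : ℕ := (Aset P t N r).ncard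

lemma XS_le (P : YPartition) : ∀ m ∈ XS P, m ≤ (P.parts 0 : ℤ) := by
  rintro m ⟨i, rfl⟩
  have h := P.antitone (Nat.zero_le i)
  have hc : (P.parts i : ℤ) ≤ (P.parts 0 : ℤ) := by exact_mod_cast h
  unfold xseq
  omega

lemma Aset_finite (P : YPartition) {t : ℕ} (ht : 1 ≤ t) (N r : ℕ) :
    (Aset P t N r).Finite := by
  apply Set.Finite.subset (Set.finite_Iio (P.parts 0 + N + 1))
  intro k hk
  simp only [Set.mem_Iio]
  have h1 := XS_le P _ hk
  have h2 : ((r + 1 + t * k : ℕ) : ℤ) = (r : ℤ) + 1 + (t : ℤ) * k := by push_cast; ring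
  have h3 : (k : ℤ) ≤ (t : ℤ) * k := by
    have : (1 : ℤ) ≤ (t : ℤ) := by exact_mod_cast ht
    nlinarith [Int.natCast_nonneg k]
  have : (k : ℤ) < (P.parts 0 : ℤ) + N + 1 := by omega
  exact_mod_cast this

lemma Aset_dc {P : YPartition} {t : ℕ} (hcore : YPartition.IsCore t P) (ht : 1 ≤ t)
    (N r : ℕ) : ∀ a b : ℕ, a ≤ b → b ∈ Aset P t N r → a ∈ Aset P t N r := by
  have step : ∀ k : ℕ, k + 1 ∈ Aset P t N r → k ∈ Aset P t N r := by
    intro k hk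
    have h := core_closed hcore ht _ hk
    have he : ((r + 1 + t * (k+1) : ℕ) : ℤ) - N - t = ((r + 1 + t * k : ℕ) : ℤ) - N := by
      push_cast; ring
    unfold Aset
    rw [Set.mem_setOf_eq, ← he]
    exact h
  intro a b hab hb
  obtain ⟨d, rfl⟩ : ∃ d, b = a + d := ⟨b - a, by omega⟩
  clear hab
  induction d with
  | zero => exact hb
  | succ n ih => exact ih (step _ (by rwa [Nat.add_succ] at hb))

lemma mem_Aset_iff {P : YPartition} {t : ℕ} (hcore : YPartition.IsCore t P) (ht : 1 ≤ t)
    (N r k : ℕ) : k ∈ Aset P t N r ↔ k < acount P t N r := by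
  have := initialSeg (Aset_finite P ht N r) (Aset_dc hcore ht N r)
  constructor
  · intro h; have := this ▸ h; simpa [acount] using this
  · intro h; rw [this]; simpa [acount] using h

lemma window_mem {P : YPartition} {N : ℕ} (hN : ∀ n, N ≤ n → P.parts n = 0) (m : ℤ) :
    (m ∈ XS P ∧ -(N:ℤ) < m) ↔ ∃ i < N, xseq P i = m := by
  constructor
  · rintro ⟨⟨i, rfl⟩, hm⟩
    refine ⟨i, ?_, rfl⟩
    by_contra hc
    push_neg at hc
    have h0 : P.parts i = 0 := hN i hc
    have : xseq P i = -(i:ℤ) := by unfold xseq; rw [h0]; simp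
    rw [this] at hm
    have : (N : ℤ) ≤ (i : ℤ) := by exact_mod_cast hc
    omega
  · rintro ⟨i, hi, rfl⟩
    refine ⟨⟨i, rfl⟩, ?_⟩
    have h0 : P.parts N = 0 := hN N le_rfl
    have : xseq P N = -(N:ℤ) := by unfold xseq; rw [h0]; simp
    -- xseq P i > xseq P N since i < N
    have hlt : xseq P N < xseq P i := (xseq_strictAnti P) hi
    omega

noncomputable def eval (t N r k : ℕ) : ℤ := ((r + 1 + t * k : ℕ) : ℤ) - N

lemma W_eq_biUnion {P : YPartition} {t N : ℕ} (hcore : YPartition.IsCore t P) (ht : 1 ≤ t)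
    (hN : ∀ n, N ≤ n → P.parts n = 0) :
    (Finset.range N).image (xseq P) =
      (Finset.range t).biUnion
        (fun r => (Finset.range (acount P t N r)).image (eval t N r)) := by
  ext m
  simp only [Finset.mem_image, Finset.mem_biUnion, Finset.mem_range]
  constructor
  · rintro ⟨i, hi, rfl⟩
    have hm : xseq P i ∈ XS P ∧ -(N:ℤ) < xseq P i := (window_mem hN _).2 ⟨i, hi, rfl⟩
    obtain ⟨hX, hgt⟩ := hm
    have hge : 0 ≤ xseq P i + N - 1 := by omega
    set u : ℕ := (xseq P i + N).toNat with hu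
    have huz : (u : ℤ) = xseq P i + N := Int.toNat_of_nonneg (by omega)
    have hu1 : 1 ≤ u := by omega
    refine ⟨(u-1) % t, Nat.mod_lt _ (by omega), (u-1)/t, ?_, ?_⟩
    · rw [← mem_Aset_iff hcore ht]
      unfold Aset
      rw [Set.mem_setOf_eq]
      have : (u-1) % t + 1 + t * ((u-1)/t) = u := by
        have := Nat.mod_add_div (u-1) t
        omega
      rw [this]
      have : (u : ℤ) - N = xseq P i := by omega
      rw [this]
      exact hX
    · unfold eval
      have : (u-1) % t + 1 + t * ((u-1)/t) = u := by
        have := Nat.mod_add_div (u-1) t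
        omega
      rw [this]
      omega
  · rintro ⟨r, hr, k, hk, rfl⟩
    have hX : eval t N r k ∈ XS P := by
      rw [← mem_Aset_iff hcore ht] at hk
      exact hk
    have hgt : -(N:ℤ) < eval t N r k := by
      unfold eval
      have : (1 : ℤ) ≤ ((r + 1 + t*k : ℕ) : ℤ) := by exact_mod_cast (by omega : 1 ≤ r + 1 + t*k)
      omega
    obtain ⟨i, hi, hx⟩ := (window_mem hN _).1 ⟨hX, hgt⟩
    exact ⟨i, hi, hx⟩

lemma eval_inj {t : ℕ} (ht : 1 ≤ t) (N r : ℕ) : Function.Injective (eval t N r) := by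
  intro k k' h
  unfold eval at h
  have : ((r + 1 + t * k : ℕ) : ℤ) = ((r + 1 + t * k' : ℕ) : ℤ) := by omega
  have h2 : r + 1 + t * k = r + 1 + t * k' := by exact_mod_cast this
  have := Nat.eq_of_mul_eq_mul_left (by omega : 0 < t) (by omega : t * k = t * k')
  exact this

lemma eval_disj {t N : ℕ} {r r' : ℕ} (hr : r < t) (hr' : r' < t) (hne : r ≠ r')
    (k k' : ℕ) : eval t N r k ≠ eval t N r' k' := by
  intro h
  unfold eval at h
  have : ((r + 1 + t * k : ℕ) : ℤ) = ((r' + 1 + t * k' : ℕ) : ℤ) := by omega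
  have h2 : r + 1 + t * k = r' + 1 + t * k' := by exact_mod_cast this
  have hmod : (r + t * k) % t = (r' + t * k') % t := by
    have : r + t * k = r' + t * k' := by omega
    rw [this]
  rw [Nat.add_mul_mod_self_left, Nat.add_mul_mod_self_left] at hmod
  rw [Nat.mod_eq_of_lt hr, Nat.mod_eq_of_lt hr'] at hmod
  exact hne hmod

lemma window_sum {P : YPartition} {t N : ℕ} (hcore : YPartition.IsCore t P) (ht : 1 ≤ t)
    (hN : ∀ n, N ≤ n → P.parts n = 0) (f : ℤ → ℂ) :
    ∑ i ∈ Finset.range N, f (xseq P i) =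
      ∑ r ∈ Finset.range t, ∑ k ∈ Finset.range (acount P t N r), f (eval t N r k) := by
  rw [← Finset.sum_image (f := f) (g := xseq P)
      (fun x _ y _ h => (xseq_strictAnti P).injective h)]
  rw [W_eq_biUnion hcore ht hN]
  rw [Finset.sum_biUnion]
  · apply Finset.sum_congr rfl
    intro r hr
    rw [Finset.sum_image (fun x _ y _ h => eval_inj ht N r h)]
  · intro r hr r' hr' hne
    have hr2 : r < t := by simpa using hr
    have hr2' : r' < t := by simpa using hr'
    apply Finset.disjoint_left.2
    rintro m hm hm'
    simp only [Finset.mem_image, Finset.mem_range] at hm hm'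
    obtain ⟨k, _, rfl⟩ := hm
    obtain ⟨k', _, h⟩ := hm'
    exact eval_disj hr2' hr2 (fun e => hne e.symm) k' k h

lemma window_card {P : YPartition} {t N : ℕ} (hcore : YPartition.IsCore t P) (ht : 1 ≤ t)
    (hN : ∀ n, N ≤ n → P.parts n = 0) :
    ∑ r ∈ Finset.range t, acount P t N r = N := by
  have h1 : ((Finset.range N).image (xseq P)).card = N := by
    rw [Finset.card_image_of_injective _ (xseq_strictAnti P).injective, Finset.card_range]
  have h2 : ((Finset.range t).biUnion
      (fun r => (Finset.range (acount P t N r)).image (eval t N r))).card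
      = ∑ r ∈ Finset.range t, acount P t N r := by
    rw [Finset.card_biUnion]
    · apply Finset.sum_congr rfl
      intro r hr
      rw [Finset.card_image_of_injective _ (eval_inj ht N r), Finset.card_range]
    · intro r hr r' hr' hne
      have hr2 : r < t := by simpa using hr
      have hr2' : r' < t := by simpa using hr'
      apply Finset.disjoint_left.2
      rintro m hm hm'
      simp only [Finset.mem_image, Finset.mem_range] at hm hm'
      obtain ⟨k, _, rfl⟩ := hm
      obtain ⟨k', _, h⟩ := hm'
      exact eval_disj hr2' hr2 (fun e => hne e.symm) k' k h
  rw [← h2, ← W_eq_biUnion hcore ht hN, h1]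

end GBG
namespace GBG

noncomputable def om (s : ℕ) : ℂ := Complex.exp (2 * (Real.pi : ℂ) * Complex.I / (s : ℂ))

lemma om_ne_zero (s : ℕ) : om s ≠ 0 := Complex.exp_ne_zero _

lemma om_pow_s {s : ℕ} (hs : 0 < s) : om s ^ s = 1 := by
  unfold om
  rw [← Complex.exp_nat_mul]
  have hs0 : (s : ℂ) ≠ 0 := by exact_mod_cast hs.ne'
  rw [mul_div_cancel₀ _ hs0]
  exact Complex.exp_two_pi_mul_I

lemma om_pow_dvd {s N : ℕ} (hs : 0 < s) (h : s ∣ N) : om s ^ N = 1 := by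
  obtain ⟨d, rfl⟩ := h
  rw [pow_mul, om_pow_s hs, one_pow]

lemma om_pow_eq_one_iff {s : ℕ} (hs : 0 < s) (n : ℕ) : om s ^ n = 1 ↔ s ∣ n := by
  constructor
  · intro h
    unfold om at h
    rw [← Complex.exp_nat_mul, Complex.exp_eq_one_iff] at h
    obtain ⟨k, hk⟩ := h
    have hs0 : (s : ℂ) ≠ 0 := by exact_mod_cast hs.ne'
    have h2 : (n : ℂ) * (2 * Real.pi * Complex.I) = (k : ℂ) * (s : ℂ) * (2 * Real.pi * Complex.I) := by
      field_simp at hk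
      linear_combination (2 * (Real.pi:ℂ) * Complex.I) * hk
    have hpi : (2 * (Real.pi:ℂ) * Complex.I) ≠ 0 := by
      apply mul_ne_zero (mul_ne_zero two_ne_zero ?_) Complex.I_ne_zero
      exact_mod_cast Real.pi_ne_zero
    have h3 : (n : ℂ) = (k : ℂ) * (s : ℂ) := mul_right_cancel₀ hpi h2
    have h4 : (n : ℤ) = k * s := by exact_mod_cast h3
    have hk0 : 0 ≤ k := by
      by_contra hneg
      push_neg at hneg
      have hs1 : (1 : ℤ) ≤ (s : ℤ) := by exact_mod_cast hs
      have h5 : k * (s:ℤ) ≤ -1 * (s:ℤ) :=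
        mul_le_mul_of_nonneg_right (by omega) (by positivity)
      have h6 : (0:ℤ) ≤ (n:ℤ) := Int.natCast_nonneg n
      linarith
    refine ⟨k.toNat, ?_⟩
    have h5 : (n:ℤ) = (k.toNat : ℤ) * s := by rw [Int.toNat_of_nonneg hk0]; exact h4
    have h6 : n = k.toNat * s := by exact_mod_cast h5
    rw [h6, Nat.mul_comm]
  · exact fun h => om_pow_dvd hs h

lemma om_ne_one {s : ℕ} (hs : 1 < s) : om s ≠ 1 := by
  intro h
  have : om s ^ 1 = 1 := by simpa using h
  have hdvd := (om_pow_eq_one_iff (by omega : 0 < s) 1).1 this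
  have := Nat.le_of_dvd one_pos hdvd
  omega

lemma om_pow_t_ne_one {s t : ℕ} (hs : 1 < s) (ht : 0 < t) (hco : Nat.Coprime s t) :
    om s ^ t ≠ 1 := by
  intro h
  have hdvd := (om_pow_eq_one_iff (by omega) t).1 h
  have := hco.eq_one_of_dvd hdvd
  omega

lemma om_zpow_mod {s : ℕ} (hs : 0 < s) (m : ℤ) : om s ^ m = om s ^ (m % (s : ℤ)) := by
  conv_lhs => rw [show m = (s : ℤ) * (m / s) + m % s from (Int.mul_ediv_add_emod m s).symm]
  rw [zpow_add₀ (om_ne_zero s), zpow_mul]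
  rw [show (om s : ℂ) ^ (s : ℤ) = 1 by rw [zpow_natCast]; exact om_pow_s hs]
  simp

lemma om_pow_toNat_mod {s : ℕ} (hs : 0 < s) (m : ℤ) :
    om s ^ ((m % (s : ℤ)).toNat) = om s ^ m := by
  have hnn : 0 ≤ m % (s : ℤ) := Int.emod_nonneg m (by exact_mod_cast hs.ne')
  rw [← zpow_natCast, Int.toNat_of_nonneg hnn, ← om_zpow_mod hs]

lemma om_pow_mod_nat {s : ℕ} (hs : 0 < s) (n : ℕ) : om s ^ n = om s ^ (n % s) := by
  conv_lhs => rw [show n = s * (n / s) + n % s from (Nat.div_add_mod n s).symm]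
  rw [pow_add, pow_mul, om_pow_s hs, one_pow, one_mul]

lemma om_pow_val {s : ℕ} (hs : 1 < s) (n : ℕ) :
    om s ^ n = om s ^ ((n : ZMod s)).val := by
  haveI : NeZero s := ⟨by omega⟩
  rw [ZMod.val_natCast, ← om_pow_mod_nat (by omega)]

end GBG
namespace GBG

lemma gbg_eq_xsum (P : YPartition) {s N : ℕ} (hs : 1 < s)
    (hN : ∀ n, N ≤ n → P.parts n = 0) (hsN : s ∣ N) :
    P.gbg s * (om s - 1) = ∑ i ∈ Finset.range N, om s ^ (xseq P i) := by
  classical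
  have hs0 : 0 < s := by omega
  have hω0 : om s ≠ 0 := om_ne_zero s
  have hω1 : om s ≠ 1 := om_ne_one hs
  have hω1' : om s - 1 ≠ 0 := sub_ne_zero.2 hω1
  set ω := om s with hωdef
  set M := P.parts 0 + 1 with hM
  set CF : Finset (ℕ × ℕ) :=
    (Finset.range N ×ˢ Finset.range M).filter (fun p => p.2 < P.parts p.1) with hCF
  have hMa : ∀ a, P.parts a < M := fun a =>
    lt_of_le_of_lt (P.antitone (Nat.zero_le a)) (Nat.lt_succ_self _)
  have hNa : ∀ p : ℕ × ℕ, p.2 < P.parts p.1 → p.1 < N := by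
    intro p hp
    by_contra h
    rw [hN p.1 (by omega)] at hp
    omega
  -- rcount as a Finset card
  have hrc : ∀ c : ℕ, P.rcount s c
      = ((CF.filter (fun p => (((p.2:ℤ) - (p.1:ℤ)) % (s:ℤ)).toNat = c)).card) := by
    intro c
    unfold YPartition.rcount
    rw [← Set.ncard_coe_finset]
    congr 1
    ext p
    simp only [Set.mem_setOf_eq, Finset.coe_filter, Finset.mem_coe, Finset.mem_filter,
      Finset.mem_product, Finset.mem_range, hCF]
    constructor
    · rintro ⟨h1, h2⟩
      have hnn : 0 ≤ ((p.2:ℤ) - (p.1:ℤ)) % (s:ℤ) := Int.emod_nonneg _ (by exact_mod_cast hs0.ne')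
      exact ⟨⟨⟨hNa p h1, lt_of_lt_of_le h1 (le_of_lt (hMa p.1))⟩, h1⟩, by omega⟩
    · rintro ⟨⟨⟨hp1, hp2⟩, h1⟩, h2⟩
      have hnn : 0 ≤ ((p.2:ℤ) - (p.1:ℤ)) % (s:ℤ) := Int.emod_nonneg _ (by exact_mod_cast hs0.ne')
      exact ⟨h1, by omega⟩
  -- gbg as a sum over cells
  have hres : ∀ p : ℕ × ℕ, p ∈ CF → (((p.2:ℤ) - (p.1:ℤ)) % (s:ℤ)).toNat ∈ Finset.range s := by
    intro p _
    simp only [Finset.mem_range]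
    have h1 : ((p.2:ℤ) - (p.1:ℤ)) % (s:ℤ) < (s:ℤ) := Int.emod_lt_of_pos _ (by exact_mod_cast hs0)
    have h2 : 0 ≤ ((p.2:ℤ) - (p.1:ℤ)) % (s:ℤ) := Int.emod_nonneg _ (by exact_mod_cast hs0.ne')
    omega
  have hgbg1 : P.gbg s = ∑ p ∈ CF, ω ^ ((p.2:ℤ) - (p.1:ℤ)) := by
    unfold YPartition.gbg
    rw [← Finset.sum_fiberwise_of_maps_to hres (fun p => ω ^ ((p.2:ℤ) - (p.1:ℤ)))]
    apply Finset.sum_congr rfl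
    intro c _
    have hterm0 : ∀ p ∈ CF.filter (fun p => (((p.2:ℤ) - (p.1:ℤ)) % (s:ℤ)).toNat = c),
        ω ^ ((p.2:ℤ) - (p.1:ℤ)) = ω ^ c := by
      intro p hp
      have hc : (((p.2:ℤ) - (p.1:ℤ)) % (s:ℤ)).toNat = c := (Finset.mem_filter.1 hp).2
      rw [← hc]
      exact (om_pow_toNat_mod hs0 _).symm
    rw [Finset.sum_congr rfl hterm0, Finset.sum_const, nsmul_eq_mul, hrc c]
    rfl
  -- unfold product
  have hinner : ∀ a : ℕ, ∑ b ∈ Finset.range (P.parts a), ω ^ ((b:ℤ) - (a:ℤ))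
      = (ω ^ (P.parts a) - 1) / (ω - 1) * (ω ^ (a:ℤ))⁻¹ := by
    intro a
    have : ∀ b : ℕ, ω ^ ((b:ℤ) - (a:ℤ)) = ω ^ b * (ω ^ (a:ℤ))⁻¹ := by
      intro b
      rw [zpow_sub₀ hω0, zpow_natCast, div_eq_mul_inv]
    simp_rw [this]
    rw [← Finset.sum_mul, geom_sum_eq hω1]
  have hgbg2 : P.gbg s = ∑ a ∈ Finset.range N,
      ((ω ^ (P.parts a) - 1) / (ω - 1) * (ω ^ (a:ℤ))⁻¹) := by
    rw [hgbg1, hCF, Finset.sum_filter, Finset.sum_product]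
    apply Finset.sum_congr rfl
    intro a _
    rw [← Finset.sum_filter]
    have hfe : (Finset.range M).filter (fun b => b < P.parts a) = Finset.range (P.parts a) := by
      ext b
      simp only [Finset.mem_filter, Finset.mem_range]
      have := hMa a
      omega
    rw [hfe, hinner a]
  -- separate the two geometric pieces
  have hterm : ∀ a ∈ Finset.range N, (ω ^ (P.parts a) - 1) / (ω - 1) * (ω ^ (a:ℤ))⁻¹
      = (ω ^ (xseq P a) - (ω ^ (a:ℤ))⁻¹) / (ω - 1) := by
    intro a _
    have h1 : ω ^ (P.parts a) * (ω ^ (a:ℤ))⁻¹ = ω ^ (xseq P a) := by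
      rw [← zpow_natCast ω (P.parts a), ← div_eq_mul_inv, ← zpow_sub₀ hω0]
      rfl
    rw [div_mul_eq_mul_div, sub_mul, one_mul, h1]
  have hinv1 : ω⁻¹ ≠ 1 := by
    intro h
    exact hω1 (by rwa [inv_eq_one] at h)
  have hzero : ∑ a ∈ Finset.range N, (ω ^ (a:ℤ))⁻¹ = 0 := by
    have he : ∀ a : ℕ, (ω ^ (a:ℤ))⁻¹ = (ω⁻¹) ^ a := by
      intro a
      rw [zpow_natCast, inv_pow]
    simp_rw [he]
    rw [geom_sum_eq hinv1]
    have hN1 : (ω⁻¹) ^ N = 1 := by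
      rw [inv_pow, hωdef, om_pow_dvd hs0 hsN, inv_one]
    rw [hN1]
    simp
  have hsum3 : P.gbg s = (∑ a ∈ Finset.range N, ω ^ xseq P a
      - ∑ a ∈ Finset.range N, (ω ^ (a:ℤ))⁻¹) / (ω - 1) := by
    rw [hgbg2, Finset.sum_congr rfl hterm, ← Finset.sum_div, Finset.sum_sub_distrib]
  rw [hsum3, hzero, sub_zero, div_mul_cancel₀ _ hω1']

end GBG
namespace GBG

noncomputable def Phi (s t : ℕ) [NeZero s] (c : ZMod s → ℕ) : ℂ :=
  ((∑ j : ZMod s, (c j : ℂ) * om s ^ (j.val)) - ∑ r ∈ Finset.range t, om s ^ (r + 1)) /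
    ((om s - 1) * (om s ^ t - 1))

noncomputable def compo (P : YPartition) (s t N : ℕ) : ZMod s → ℕ :=
  fun j => ((Finset.range t).filter
    (fun r => ((r + 1 + t * acount P t N r : ℕ) : ZMod s) = j)).card

lemma gbg_eq_Phi {s t : ℕ} [NeZero s] (hs : 1 < s) (ht : 1 < t) (hco : Nat.Coprime s t)
    {P : YPartition} (hcore : YPartition.IsCore t P) {N : ℕ}
    (hN : ∀ n, N ≤ n → P.parts n = 0) (hsN : s ∣ N) :
    P.gbg s = Phi s t (compo P s t N) ∧
    (∑ j : ZMod s, compo P s t N j = t) ∧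
    ((∑ j : ZMod s, j * (compo P s t N j : ZMod s))
       = ((∑ r ∈ Finset.range t, (r + 1) : ℕ) : ZMod s)) := by
  classical
  have hs0 : 0 < s := by omega
  have ht1 : 1 ≤ t := by omega
  have hω0 : om s ≠ 0 := om_ne_zero s
  have hω1 : om s ≠ 1 := om_ne_one hs
  have hωt1 : om s ^ t ≠ 1 := om_pow_t_ne_one hs (by omega) hco
  set ω := om s with hωdef
  set a : ℕ → ℕ := acount P t N with ha
  set e : ℕ → ℕ := fun r => r + 1 + t * a r with he
  set c : ZMod s → ℕ := compo P s t N with hc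
  have hcfil : ∀ j : ZMod s, c j = ((Finset.range t).filter
      (fun r => ((e r : ℕ) : ZMod s) = j)).card := fun j => rfl
  -- the three fiberwise facts
  have hmaps : ∀ r ∈ Finset.range t, ((e r : ℕ) : ZMod s) ∈ (Finset.univ : Finset (ZMod s)) :=
    fun r _ => Finset.mem_univ _
  have hcard : ∑ j : ZMod s, c j = t := by
    rw [show (t : ℕ) = (Finset.range t).card from (Finset.card_range t).symm]
    exact (Finset.card_eq_sum_card_fiberwise hmaps).symm
  have hstat : (∑ j : ZMod s, j * (c j : ZMod s))
      = ((∑ r ∈ Finset.range t, (r + 1) : ℕ) : ZMod s) := by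
    have h1 : ∀ j : ZMod s, j * (c j : ZMod s)
        = ∑ r ∈ (Finset.range t).filter (fun r => ((e r : ℕ) : ZMod s) = j),
            ((e r : ℕ) : ZMod s) := by
      intro j
      rw [Finset.sum_congr rfl (fun r hr => (Finset.mem_filter.1 hr).2)]
      rw [Finset.sum_const, nsmul_eq_mul, hcfil j, mul_comm]
    rw [Finset.sum_congr rfl (fun j _ => h1 j), Finset.sum_fiberwise_of_maps_to hmaps]
    have h2 : ∑ r ∈ Finset.range t, ((e r : ℕ) : ZMod s)
        = ((∑ r ∈ Finset.range t, e r : ℕ) : ZMod s) := by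
      rw [Nat.cast_sum]
    rw [h2]
    have h3 : ∑ r ∈ Finset.range t, e r
        = (∑ r ∈ Finset.range t, (r + 1)) + t * ∑ r ∈ Finset.range t, a r := by
      rw [Finset.mul_sum, ← Finset.sum_add_distrib]
    rw [h3, window_card hcore ht1 hN, Nat.cast_add, Nat.cast_mul,
      (ZMod.natCast_eq_zero_iff N s).2 hsN]
    ring
  refine ⟨?_, hcard, hstat⟩
  -- main formula
  have hx := gbg_eq_xsum P hs hN hsN
  have hwin := window_sum hcore ht1 hN (fun m => ω ^ m)
  have hev : ∀ r k : ℕ, ω ^ (eval t N r k) = ω ^ ((r + 1 + t * k : ℕ)) := by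
    intro r k
    unfold eval
    rw [zpow_sub₀ hω0, zpow_natCast, zpow_natCast, om_pow_dvd hs0 hsN, div_one]
  have hinner : ∀ r : ℕ, ∑ k ∈ Finset.range (a r), ω ^ ((r + 1 + t * k : ℕ))
      = ω ^ (r+1) * (((ω ^ t) ^ (a r) - 1) / (ω ^ t - 1)) := by
    intro r
    have : ∀ k : ℕ, ω ^ ((r + 1 + t * k : ℕ)) = ω ^ (r+1) * (ω ^ t) ^ k := by
      intro k
      rw [pow_add, pow_mul]
    simp_rw [this]
    rw [← Finset.mul_sum, geom_sum_eq hωt1]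
  have hsum : P.gbg s * (ω - 1) = ∑ r ∈ Finset.range t,
      ω ^ (r+1) * (((ω ^ t) ^ (a r) - 1) / (ω ^ t - 1)) := by
    rw [hx, hwin]
    apply Finset.sum_congr rfl
    intro r _
    rw [Finset.sum_congr rfl (fun k _ => hev r k), hinner r]
  have hfib : ∑ r ∈ Finset.range t, ω ^ (e r) = ∑ j : ZMod s, (c j : ℂ) * ω ^ (j.val) := by
    rw [← Finset.sum_fiberwise_of_maps_to hmaps (fun r => ω ^ (e r))]
    apply Finset.sum_congr rfl
    intro j _
    have : ∀ r ∈ (Finset.range t).filter (fun r => ((e r : ℕ) : ZMod s) = j),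
        ω ^ (e r) = ω ^ (j.val) := by
      intro r hr
      have h1 := (Finset.mem_filter.1 hr).2
      rw [hωdef, om_pow_val hs, h1]
    rw [Finset.sum_congr rfl this, Finset.sum_const, nsmul_eq_mul, hcfil j]
  have hexp : ∑ r ∈ Finset.range t, ω ^ (r+1) * (((ω ^ t) ^ (a r) - 1) / (ω ^ t - 1))
      = ((∑ j : ZMod s, (c j : ℂ) * ω ^ (j.val)) - ∑ r ∈ Finset.range t, ω ^ (r + 1))
          / (ω ^ t - 1) := by
    rw [← hfib]
    rw [← Finset.sum_sub_distrib, Finset.sum_div]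
    apply Finset.sum_congr rfl
    intro r _
    have : ω ^ (e r) = ω ^ (r+1) * (ω ^ t) ^ (a r) := by
      rw [he]; rw [pow_add, pow_mul]
    rw [this]
    field_simp
  have hfin : P.gbg s * (ω - 1)
      = ((∑ j : ZMod s, (c j : ℂ) * ω ^ (j.val)) - ∑ r ∈ Finset.range t, ω ^ (r + 1))
          / (ω ^ t - 1) := by
    rw [hsum, hexp]
  unfold Phi
  rw [← hωdef]
  have hne : (ω - 1) * (ω ^ t - 1) ≠ 0 :=
    mul_ne_zero (sub_ne_zero.2 hω1) (sub_ne_zero.2 hωt1)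
  rw [eq_div_iff hne]
  calc P.gbg s * ((ω - 1) * (ω ^ t - 1)) = (P.gbg s * (ω - 1)) * (ω ^ t - 1) := by ring
    _ = _ := by rw [hfin, div_mul_cancel₀ _ (sub_ne_zero.2 hωt1)]

end GBG
namespace GBG

noncomputable def CompSet (s t : ℕ) [NeZero s] (τ : ZMod s) : Finset (ZMod s → ℕ) :=
  (Fintype.piFinset (fun _ : ZMod s => Finset.range (t+1))).filter
    (fun c => (∑ j, c j = t) ∧ (∑ j : ZMod s, j * (c j : ZMod s)) = τ)

lemma mem_CompSet {s t : ℕ} [NeZero s] {τ : ZMod s} {c : ZMod s → ℕ}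
    (h1 : ∑ j, c j = t) (h2 : (∑ j : ZMod s, j * (c j : ZMod s)) = τ) :
    c ∈ CompSet s t τ := by
  unfold CompSet
  rw [Finset.mem_filter]
  refine ⟨?_, h1, h2⟩
  rw [Fintype.mem_piFinset]
  intro j
  rw [Finset.mem_range]
  have : c j ≤ ∑ j', c j' := Finset.single_le_sum (fun _ _ => Nat.zero_le _) (Finset.mem_univ j)
  omega

def shf {s : ℕ} (k : ZMod s) (c : ZMod s → ℕ) : ZMod s → ℕ := fun j => c (j - k)

lemma shf_sum {s : ℕ} [NeZero s] (k : ZMod s) (c : ZMod s → ℕ) :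
    ∑ j, shf k c j = ∑ j, c j :=
  Fintype.sum_equiv (Equiv.subRight k) (fun j => c (j - k)) c (fun _ => rfl)

lemma shf_stat {s : ℕ} [NeZero s] (k : ZMod s) (c : ZMod s → ℕ) :
    (∑ j : ZMod s, j * (shf k c j : ZMod s))
      = (∑ j : ZMod s, j * (c j : ZMod s)) + k * ((∑ j, c j : ℕ) : ZMod s) := by
  have h1 : (∑ j : ZMod s, j * (shf k c j : ZMod s))
      = ∑ j : ZMod s, (j + k) * (c j : ZMod s) := by
    refine (Fintype.sum_equiv (Equiv.addRight k)
      (fun j => (j + k) * (c j : ZMod s)) (fun j => j * (shf k c j : ZMod s)) ?_).symm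
    intro x
    simp [shf, Equiv.addRight]
  rw [h1]
  have h2 : ((∑ j, c j : ℕ) : ZMod s) = ∑ j : ZMod s, (c j : ZMod s) := Nat.cast_sum _ _
  rw [h2, Finset.mul_sum, ← Finset.sum_add_distrib]
  apply Finset.sum_congr rfl
  intro j _
  ring

def psum {s : ℕ} (c : ZMod s → ℕ) (i : ℕ) : ℕ := ∑ i' ∈ Finset.range i, c ((i' : ℕ) : ZMod s)

lemma psum_mono {s : ℕ} (c : ZMod s → ℕ) : Monotone (psum c) := by
  intro i i' h
  exact Finset.sum_le_sum_of_subset (Finset.range_subset_range.2 h)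

lemma psum_le_total {s : ℕ} [NeZero s] (c : ZMod s → ℕ) {i : ℕ} (hi : i ≤ s) :
    psum c i ≤ ∑ j, c j := by
  have hinj : Set.InjOn (fun i' : ℕ => ((i' : ℕ) : ZMod s)) ↑(Finset.range i) := by
    intro x hx y hy hxy
    simp only [Finset.coe_range, Set.mem_Iio] at hx hy
    have hvx : ((x : ZMod s)).val = x := ZMod.val_natCast_of_lt (by omega)
    have hvy : ((y : ZMod s)).val = y := ZMod.val_natCast_of_lt (by omega)
    simp only at hxy
    rw [← hvx, ← hvy, hxy]
  unfold psum
  rw [← Finset.sum_image (g := fun i' : ℕ => ((i' : ℕ) : ZMod s)) (f := c)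
    (fun x hx y hy hxy => hinj hx hy hxy)]
  exact Finset.sum_le_sum_of_subset (Finset.subset_univ _)

lemma psum_total {s : ℕ} [NeZero s] (c : ZMod s → ℕ) : psum c s = ∑ j, c j := by
  unfold psum
  apply Finset.sum_nbij' (i := fun i' => ((i' : ℕ) : ZMod s)) (j := fun j => j.val)
  · intro a _; exact Finset.mem_univ _
  · intro j _
    rw [Finset.mem_range]
    exact ZMod.val_lt j
  · intro a ha
    rw [Finset.mem_range] at ha
    exact ZMod.val_natCast_of_lt ha
  · intro j _
    exact ZMod.natCast_zmod_val j
  · intro a _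
    rfl

noncomputable def enc {s : ℕ} (c : ZMod s → ℕ) : Finset ℕ :=
  (Finset.range (s-1)).image (fun i => psum c (i+1) + i)

end GBG
namespace GBG

lemma enc_strict {s : ℕ} (c : ZMod s → ℕ) {i i' : ℕ} (h : i < i') :
    psum c (i+1) + i < psum c (i'+1) + i' := by
  have := psum_mono c (show i+1 ≤ i'+1 by omega)
  omega

lemma enc_card {s : ℕ} [NeZero s] (c : ZMod s → ℕ) : (enc c).card = s - 1 := by
  unfold enc
  rw [Finset.card_image_of_injOn, Finset.card_range]
  intro x hx y hy hxy
  simp only at hxy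
  by_contra hne
  rcases Nat.lt_or_ge x y with h | h
  · have := enc_strict c h; omega
  · have hyx : y < x := by omega
    have := enc_strict c hyx; omega

lemma enc_subset {s t : ℕ} [NeZero s] (hs : 1 < s) {c : ZMod s → ℕ} (hc : ∑ j, c j = t) :
    enc c ⊆ Finset.range (s + t - 1) := by
  intro m hm
  unfold enc at hm
  rw [Finset.mem_image] at hm
  obtain ⟨i, hi, rfl⟩ := hm
  rw [Finset.mem_range] at hi ⊢
  have h1 : psum c (i+1) ≤ t := by
    have := psum_le_total c (show i+1 ≤ s by omega)
    omega
  omega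

lemma enc_inj {s t : ℕ} [NeZero s] (hs : 1 < s) {c c' : ZMod s → ℕ}
    (hc : ∑ j, c j = t) (hc' : ∑ j, c' j = t) (h : enc c = enc c') : c = c' := by
  have key : ∀ i, i ≤ s → psum c i = psum c' i := by
    have hcard : (enc c).card = s - 1 := enc_card c
    set f : Fin (s-1) → ℕ := fun i => psum c ((i : ℕ)+1) + (i : ℕ) with hf
    set f' : Fin (s-1) → ℕ := fun i => psum c' ((i : ℕ)+1) + (i : ℕ) with hf'
    have hmono : StrictMono f := fun i i' hii => enc_strict c hii
    have hmono' : StrictMono f' := fun i i' hii => enc_strict c' hii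
    have hmem : ∀ x : Fin (s-1), f x ∈ enc c := by
      intro x
      unfold enc
      exact Finset.mem_image.2 ⟨x, Finset.mem_range.2 x.isLt, rfl⟩
    have hmem' : ∀ x : Fin (s-1), f' x ∈ enc c := by
      intro x
      rw [h]
      unfold enc
      exact Finset.mem_image.2 ⟨x, Finset.mem_range.2 x.isLt, rfl⟩
    have e1 := Finset.orderEmbOfFin_unique hcard hmem hmono
    have e2 := Finset.orderEmbOfFin_unique hcard hmem' hmono'
    have hff' : ∀ x : Fin (s-1), f x = f' x := fun x => by rw [e1, e2]
    intro i hi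
    rcases Nat.eq_zero_or_pos i with rfl | hpos
    · rfl
    rcases Nat.eq_or_lt_of_le hi with rfl | hlt
    · rw [psum_total, psum_total, hc, hc']
    · have hx : i - 1 < s - 1 := by omega
      have := hff' ⟨i-1, hx⟩
      simp only [hf, hf'] at this
      have he : i - 1 + 1 = i := by omega
      rw [he] at this
      omega
  funext j
  have hv : j = ((j.val : ℕ) : ZMod s) := (ZMod.natCast_zmod_val j).symm
  have hvs : j.val < s := ZMod.val_lt j
  have h1 : psum c (j.val + 1) = psum c j.val + c ((j.val : ℕ) : ZMod s) :=
    Finset.sum_range_succ _ _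
  have h2 : psum c' (j.val + 1) = psum c' j.val + c' ((j.val : ℕ) : ZMod s) :=
    Finset.sum_range_succ _ _
  have k1 := key j.val (by omega)
  have k2 := key (j.val + 1) (by omega)
  rw [hv]
  omega

lemma CompSet_card_mul {s t : ℕ} [NeZero s] (hs : 1 < s) (ht : 0 < t)
    (hco : Nat.Coprime s t) (τ : ZMod s) :
    (CompSet s t τ).card * s ≤ (s + t - 1).choose (s - 1) := by
  classical
  have hmaps : ∀ p ∈ (CompSet s t τ) ×ˢ (Finset.univ : Finset (ZMod s)),
      enc (shf p.2 p.1) ∈ (Finset.range (s+t-1)).powersetCard (s-1) := by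
    rintro ⟨c, k⟩ hp
    rw [Finset.mem_product] at hp
    obtain ⟨hc, -⟩ := hp
    unfold CompSet at hc
    rw [Finset.mem_filter] at hc
    obtain ⟨-, hsum, -⟩ := hc
    have hsum2 : ∑ j, shf k c j = t := by rw [shf_sum]; exact hsum
    rw [Finset.mem_powersetCard]
    exact ⟨enc_subset hs hsum2, enc_card _⟩
  have hinj : Set.InjOn (fun p : (ZMod s → ℕ) × ZMod s => enc (shf p.2 p.1))
      ↑((CompSet s t τ) ×ˢ (Finset.univ : Finset (ZMod s))) := by
    rintro ⟨c, k⟩ hp ⟨c', k'⟩ hq henc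
    simp only [Finset.coe_product, Set.mem_prod, Finset.mem_coe] at hp hq
    obtain ⟨hc, -⟩ := hp
    obtain ⟨hc', -⟩ := hq
    unfold CompSet at hc hc'
    rw [Finset.mem_filter] at hc hc'
    obtain ⟨-, hsum, hstat⟩ := hc
    obtain ⟨-, hsum', hstat'⟩ := hc'
    simp only at henc
    have hE : shf k c = shf k' c' := by
      apply enc_inj hs (t := t) _ _ henc
      · rw [shf_sum]; exact hsum
      · rw [shf_sum]; exact hsum'
    have hstatE : (∑ j : ZMod s, j * ((shf k c j : ℕ) : ZMod s))
        = (∑ j : ZMod s, j * ((shf k' c' j : ℕ) : ZMod s)) := by rw [hE]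
    rw [shf_stat, shf_stat, hsum, hsum', hstat, hstat'] at hstatE
    have hkk : k * ((t : ℕ) : ZMod s) = k' * ((t : ℕ) : ZMod s) := by
      exact add_left_cancel hstatE
    have hunit : IsUnit ((t : ℕ) : ZMod s) := by
      refine ⟨ZMod.unitOfCoprime t hco.symm, ?_⟩
      simp [ZMod.coe_unitOfCoprime]
    have hk : k = k' := hunit.mul_right_cancel hkk
    subst hk
    have hcc : c = c' := by
      funext j
      have := congrFun hE (j + k)
      simpa [shf] using this
    rw [hcc]
  have hle := Finset.card_le_card_of_injOn _ hmaps hinj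
  rw [Finset.card_product, Finset.card_univ, ZMod.card,
    Finset.card_powersetCard, Finset.card_range] at hle
  exact hle

lemma CompSet_card_le {s t : ℕ} [NeZero s] (hs : 1 < s) (ht : 0 < t)
    (hco : Nat.Coprime s t) (τ : ZMod s) :
    (CompSet s t τ).card ≤ (s + t).choose s / (s + t) := by
  have h1 := CompSet_card_mul hs ht hco τ
  set K := (CompSet s t τ).card
  have hid : (s + t) * (s + t - 1).choose (s - 1) = (s + t).choose s * s := by
    have h := Nat.add_one_mul_choose_eq (s + t - 1) (s - 1)
    have e1 : s + t - 1 + 1 = s + t := by omega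
    have e2 : s - 1 + 1 = s := by omega
    rw [e1, e2] at h
    exact h
  have h2 : K * (s + t) * s ≤ (s+t).choose s * s := by
    calc K * (s + t) * s = (K * s) * (s + t) := by ring
      _ ≤ (s + t - 1).choose (s - 1) * (s + t) := Nat.mul_le_mul_right _ h1
      _ = (s+t).choose s * s := by rw [← hid]; ring
  have h3 : K * (s + t) ≤ (s + t).choose s := Nat.le_of_mul_le_mul_right h2 (by omega)
  exact (Nat.le_div_iff_mul_le (by omega)).2 h3

end GBG

/-- For coprime `s, t > 1`, the set of values taken by the GBG-rank
mod `s` on `t`-cores is finite, of cardinality `ν(s,t) ≤ C(s+t, s)/(s+t)`. -/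
theorem gbg_stmt_11 (s t : ℕ) (hs : 1 < s) (ht : 1 < t) (hco : Nat.Coprime s t) :
    {z : ℂ | ∃ P : YPartition, YPartition.IsCore t P ∧ P.gbg s = z}.Finite ∧
    {z : ℂ | ∃ P : YPartition, YPartition.IsCore t P ∧ P.gbg s = z}.ncard ≤
      Nat.choose (s + t) s / (s + t) := by
  classical
  haveI : NeZero s := ⟨by omega⟩
  set τ : ZMod s := ((∑ r ∈ Finset.range t, (r + 1) : ℕ) : ZMod s) with hτ
  set V : Set ℂ := {z : ℂ | ∃ P : YPartition, YPartition.IsCore t P ∧ P.gbg s = z} with hV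
  have hsub : V ⊆ ↑((GBG.CompSet s t τ).image (GBG.Phi s t)) := by
    rintro z ⟨P, hcore, rfl⟩
    obtain ⟨N₀, hN₀⟩ := P.finite_support
    set N : ℕ := s * t * N₀ with hNdef
    have hNge : N₀ ≤ N := by
      have h0 : 0 < s * t := Nat.mul_pos (by omega) (by omega)
      calc N₀ ≤ s * t * N₀ := Nat.le_mul_of_pos_left N₀ h0
        _ = N := rfl
    have hNfun : ∀ n, N ≤ n → P.parts n = 0 := fun n hn => hN₀ n (by omega)
    have hsN : s ∣ N := ⟨t * N₀, by rw [hNdef, Nat.mul_assoc]⟩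
    obtain ⟨h1, h2, h3⟩ := GBG.gbg_eq_Phi hs ht hco hcore hNfun hsN
    rw [Finset.mem_coe, Finset.mem_image]
    exact ⟨GBG.compo P s t N, GBG.mem_CompSet h2 h3, h1.symm⟩
  have hfin : V.Finite :=
    Set.Finite.subset (Finset.finite_toSet _) hsub
  refine ⟨hfin, ?_⟩
  calc V.ncard ≤ (↑((GBG.CompSet s t τ).image (GBG.Phi s t)) : Set ℂ).ncard :=
        Set.ncard_le_ncard hsub (Finset.finite_toSet _)
    _ = ((GBG.CompSet s t τ).image (GBG.Phi s t)).card := Set.ncard_coe_finset _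
    _ ≤ (GBG.CompSet s t τ).card := Finset.card_image_le
    _ ≤ (s + t).choose s / (s + t) := GBG.CompSet_card_le hs (by omega) hco τ
end

section
/- The GBG-rank mod 3 of a 4-core partition takes exactly the five values −1, 0, 1, −ω, −ω², where ω = e^{2πI/3}. -/
-- ===== auxiliary development =====

namespace YPartition

theorem pext {P Q : YPartition} (h : P.parts = Q.parts) : P = Q := by
  cases P; cases Q; cases h; rfl

theorem lt_conj_iff (P : YPartition) (i j : ℕ) : i < P.conjParts j ↔ j < P.parts i := by
  obtain ⟨N, hN⟩ := P.finite_support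
  have hfin : {i : ℕ | j < P.parts i}.Finite := by
    apply (Set.finite_Iio N).subset
    intro i hi
    by_contra hc
    simp only [Set.mem_Iio, not_lt] at hc
    have := hN i hc
    simp only [Set.mem_setOf_eq, this] at hi
    omega
  constructor
  · intro h
    by_contra hc
    push_neg at hc
    have hsub : {i : ℕ | j < P.parts i} ⊆ Set.Iio i := by
      intro i' hi'
      simp only [Set.mem_setOf_eq] at hi'
      simp only [Set.mem_Iio]
      by_contra hc2
      push_neg at hc2
      exact absurd (lt_of_lt_of_le hi' (P.antitone hc2)) (by omega)
    have := Set.ncard_le_ncard hsub (Set.finite_Iio i)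
    rw [show Set.Iio i = ↑(Finset.range i) by ext; simp, Set.ncard_coe_finset,
      Finset.card_range] at this
    unfold conjParts at h
    omega
  · intro h
    have hsub : Set.Iic i ⊆ {i' : ℕ | j < P.parts i'} := by
      intro i' hi'
      simp only [Set.mem_Iic] at hi'
      exact Set.mem_setOf_eq ▸ lt_of_lt_of_le h (P.antitone hi')
    have := Set.ncard_le_ncard hsub hfin
    rw [show Set.Iic i = ↑(Finset.Iic i) by ext; simp, Set.ncard_coe_finset,
      Nat.card_Iic] at this
    unfold conjParts
    omega

theorem conj_eval (P : YPartition) (j m : ℕ) (h : ∀ i, j < P.parts i ↔ i < m) :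
    P.conjParts j = m := by
  have h1 := fun i => (P.lt_conj_iff i j).trans (h i)
  by_contra hc
  rcases Nat.lt_or_ge (P.conjParts j) m with h2 | h2
  · exact absurd ((h1 (P.conjParts j)).mpr (by omega)) (by omega)
  · exact absurd ((h1 m).mp (by omega)) (by omega)

theorem conj_antitone (P : YPartition) : Antitone P.conjParts := by
  intro a b hab
  by_contra hc
  push_neg at hc
  have h1 := (P.lt_conj_iff (P.conjParts a) b).mp hc
  have h2 := (P.lt_conj_iff (P.conjParts a) a).mpr (by omega)
  omega

/-- remove the first row -/
def shiftP (P : YPartition) : YPartition where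
  parts := fun n => P.parts (n + 1)
  antitone := fun a b hab => P.antitone (by omega)
  finite_support := by
    obtain ⟨N, hN⟩ := P.finite_support
    exact ⟨N, fun n hn => hN (n + 1) (by omega)⟩

theorem conj_shift (P : YPartition) (j : ℕ) (hj : j < P.parts 0) :
    P.conjParts j = (P.shiftP).conjParts j + 1 := by
  have h : ∀ i, i + 1 < P.conjParts j ↔ i < (P.shiftP).conjParts j := by
    intro i
    rw [P.lt_conj_iff, (P.shiftP).lt_conj_iff]
    rfl
  have h0 : 0 < P.conjParts j := (P.lt_conj_iff 0 j).mpr hj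
  set a := P.conjParts j with ha
  set b := (P.shiftP).conjParts j with hb
  have hle : a ≤ b + 1 := by
    by_contra hc
    exact absurd ((h b).mp (by omega)) (by omega)
  rcases Nat.eq_zero_or_pos b with h1 | h1
  · omega
  · have := (h (b-1)).mpr (by omega)
    omega

theorem isCore_shift (P : YPartition) (h : IsCore 4 P) : IsCore 4 P.shiftP := by
  intro i j hj
  have hj0 : j < P.parts 0 := lt_of_lt_of_le hj (P.antitone (by omega))
  have := h (i + 1) j hj
  unfold hookLength at this ⊢
  rw [P.conj_shift j hj0] at this
  have : (P.parts (i+1) - j) + ((P.shiftP).conjParts j + 1 - (i+1)) - 1 ≠ 4 := this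
  simpa [shiftP, Nat.succ_sub_succ] using this

/-- beta-set membership -/
def inB (P : YPartition) (k : ℤ) : Prop := ∃ i : ℕ, (P.parts i : ℤ) - i = k

theorem inB_shift (P : YPartition) (k : ℤ) :
    P.inB k ↔ k = (P.parts 0 : ℤ) ∨ (P.shiftP).inB (k + 1) := by
  constructor
  · rintro ⟨i, hi⟩
    cases i with
    | zero => left; simpa using hi.symm
    | succ i' => right; exact ⟨i', by simp only [shiftP]; push_cast at hi ⊢; omega⟩
  · rintro (h | ⟨i', hi'⟩)
    · exact ⟨0, by simpa using h.symm⟩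
    · exact ⟨i' + 1, by simp only [shiftP] at hi'; push_cast at hi' ⊢; omega⟩

theorem inB_le (P : YPartition) (k : ℤ) (h : P.inB k) : k ≤ (P.parts 0 : ℤ) := by
  obtain ⟨i, hi⟩ := h
  have := P.antitone (Nat.zero_le i)
  omega

theorem inB_self (P : YPartition) : P.inB (P.parts 0 : ℤ) := ⟨0, by simp⟩

theorem inB_of_zero (P : YPartition) (m : ℕ) (h : P.parts m = 0) : P.inB (-(m:ℤ)) :=
  ⟨m, by rw [h]; simp⟩

theorem core_inB (P : YPartition) (hcore : IsCore 4 P) (hpos : 0 < P.parts 0) :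
    P.inB ((P.parts 0 : ℤ) - 4) := by
  by_contra hB
  set q := P.parts 0 with hq
  set k : ℤ := (q : ℤ) - 4 with hk
  have hneg : ∀ m : ℕ, P.conjParts 0 ≤ m → P.parts m = 0 := by
    intro m hm
    have := (P.lt_conj_iff m 0).not.mp (by omega)
    omega
  have hklow : (1 : ℤ) - P.conjParts 0 ≤ k := by
    by_contra hc
    push_neg at hc
    have hk0 : k ≤ 0 := by
      have : (0:ℤ) ≤ P.conjParts 0 := by positivity
      omega
    apply hB
    have : P.inB (-(((-k).toNat : ℤ))) :=
      P.inB_of_zero (-k).toNat (hneg _ (by omega))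
    simpa [Int.toNat_of_nonneg (by omega : (0:ℤ) ≤ -k)] using this
  set g : ℕ → ℤ := fun j => (P.conjParts j : ℤ) - j - 1 + k with hg
  have hg0 : 0 ≤ g 0 := by simp only [hg]; push_cast; omega
  have hgstep : ∀ j, g (j + 1) ≤ g j - 1 := by
    intro j
    have := P.conj_antitone (by omega : j ≤ j + 1)
    simp only [hg]; push_cast; omega
  have hgdec : ∀ j, g j ≤ g 0 - j := by
    intro j
    induction j with
    | zero => simp
    | succ n ih => have := hgstep n; omega
  have hex : ∃ j, g j ≤ 0 :=
    ⟨(g 0).toNat + 1, by have := hgdec ((g 0).toNat + 1); push_cast at this ⊢; omega⟩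
  classical
  set j0 := Nat.find hex with hj0
  have hj0spec : g j0 ≤ 0 := Nat.find_spec hex
  have hj0min : ∀ m, m < j0 → ¬ (g m ≤ 0) := fun m hm => Nat.find_min hex hm
  clear_value j0
  by_cases hz : g j0 = 0
  · have hcj : (P.conjParts j0 : ℤ) = j0 + 1 - k := by simp only [hg] at hz; omega
    have hjq : j0 < q := by
      by_contra hc
      push_neg at hc
      have : P.conjParts j0 = 0 := by
        by_contra hc2
        have := (P.lt_conj_iff 0 j0).mp (by omega)
        have := P.antitone (Nat.zero_le 0)
        omega
      rw [this] at hcj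
      omega
    have hc1 : 0 < P.conjParts j0 := (P.lt_conj_iff 0 j0).mpr (by omega)
    have : P.hookLength 0 j0 = 4 := by
      unfold hookLength
      omega
    exact hcore 0 j0 (by omega) this
  · have hglt : g j0 < 0 := by omega
    have hj0pos : j0 ≠ 0 := by
      intro h0
      rw [h0] at hglt
      omega
    obtain ⟨j, rfl⟩ : ∃ j, j0 = j + 1 := ⟨j0 - 1, by omega⟩
    have hprev : 0 < g j := by
      have := hj0min j (by omega)
      omega
    have h1 : (j : ℤ) + 2 - k ≤ P.conjParts j := by
      simp only [hg] at hprev; push_cast at hprev; omega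
    have h2 : (P.conjParts (j+1) : ℤ) ≤ (j : ℤ) + 1 - k := by
      have := hglt; simp only [hg] at this; push_cast at this; omega
    set i : ℤ := (j : ℤ) + 1 - k with hi
    have hinn : 0 ≤ i := by
      have : (0:ℤ) ≤ P.conjParts (j+1) := by positivity
      omega
    set iN := i.toNat with hiN
    have hiNi : (iN : ℤ) = i := Int.toNat_of_nonneg hinn
    have hlt : iN < P.conjParts j := by omega
    have hge : ¬ (iN < P.conjParts (j + 1)) := by omega
    have hp1 : j < P.parts iN := (P.lt_conj_iff iN j).mp hlt
    have hp2 : ¬ (j + 1 < P.parts iN) := fun hc => hge ((P.lt_conj_iff iN (j+1)).mpr hc)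
    exact hB ⟨iN, by omega⟩

end YPartition

noncomputable def om : ℂ := Complex.exp (2 * (Real.pi : ℂ) * Complex.I / 3)

theorem om_prim : IsPrimitiveRoot om 3 := by
  have := Complex.isPrimitiveRoot_exp 3 (by norm_num)
  convert this using 3
  norm_num [om]

theorem om_pow_three : om ^ 3 = 1 := om_prim.pow_eq_one

theorem om_sum : 1 + om + om ^ 2 = 0 := by
  have h1 : om ≠ 1 := om_prim.ne_one (by norm_num)
  have h2 : (om - 1) * (1 + om + om ^ 2) = 0 := by linear_combination om_pow_three
  rcases mul_eq_zero.mp h2 with h | h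
  · exact absurd (sub_eq_zero.mp h) h1
  · exact h

namespace YPartition

theorem hexp : Complex.exp (2 * (Real.pi : ℂ) * Complex.I / ((3:ℕ) : ℂ)) = om := by
  norm_num [om]

/-- weighted count of the first row -/
noncomputable def gfun (q : ℕ) : ℂ := ∑ j ∈ Finset.range q, om ^ (j % 3)

theorem rset_finite (P : YPartition) (c : ℕ) :
    {p : ℕ × ℕ | p.2 < P.parts p.1 ∧ ((p.2 : ℤ) - (p.1 : ℤ)) % 3 = (c : ℤ)}.Finite := by
  obtain ⟨N, hN⟩ := P.finite_support
  apply ((Set.finite_Iio N).prod (Set.finite_Iio (P.parts 0))).subset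
  rintro ⟨i, j⟩ ⟨h1, _⟩
  constructor
  · simp only [Set.mem_Iio]
    by_contra hc
    push_neg at hc
    rw [hN i hc] at h1
    omega
  · simp only [Set.mem_Iio]
    exact lt_of_lt_of_le h1 (P.antitone (Nat.zero_le i))

theorem rcount_shift (P : YPartition) (c : ℕ) (hc : c < 3) :
    P.rcount 3 c =
      (Finset.filter (fun j => j % 3 = c) (Finset.range (P.parts 0))).card
        + (P.shiftP).rcount 3 ((c + 1) % 3) := by
  unfold rcount
  push_cast
  set S := {p : ℕ × ℕ | p.2 < P.parts p.1 ∧ ((p.2 : ℤ) - (p.1 : ℤ)) % 3 = (c : ℤ)} with hS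
  set S' := {p : ℕ × ℕ | p.2 < P.shiftP.parts p.1 ∧
      ((p.2 : ℤ) - (p.1 : ℤ)) % 3 = (((c+1) % 3 : ℕ) : ℤ)} with hS'
  set A : Set (ℕ × ℕ) :=
    (fun j => ((0:ℕ), j)) ''
      ↑(Finset.filter (fun j => j % 3 = c) (Finset.range (P.parts 0))) with hA
  set B : Set (ℕ × ℕ) := (fun p : ℕ × ℕ => (p.1 + 1, p.2)) '' S' with hB
  have hcast : (((c+1) % 3 : ℕ) : ℤ) = ((c : ℤ) + 1) % 3 := by push_cast; ring
  have hSAB : S = A ∪ B := by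
    ext ⟨i, j⟩
    simp only [hS, hA, hB, hS', Set.mem_setOf_eq, Set.mem_union, Set.mem_image,
      Finset.coe_filter, Finset.mem_range, Set.mem_setOf_eq, Prod.mk.injEq, Prod.exists, shiftP]
    cases i with
    | zero =>
      constructor
      · rintro ⟨h1, h2⟩
        exact Or.inl ⟨j, ⟨h1, by omega⟩, rfl, rfl⟩
      · rintro (⟨j', ⟨h1, h2⟩, h3, h4⟩ | ⟨i', j', ⟨h1, h2⟩, h3, h4⟩)
        · subst h4; exact ⟨h1, by omega⟩
        · omega
    | succ i =>
      constructor
      · rintro ⟨h1, h2⟩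
        refine Or.inr ⟨i, j, ⟨h1, ?_⟩, rfl, rfl⟩
        rw [hcast]
        push_cast at h2 ⊢
        omega
      · rintro (⟨j', ⟨h1, h2⟩, h3, h4⟩ | ⟨i', j', ⟨h1, h2⟩, h3, h4⟩)
        · omega
        · rw [hcast] at h2
          have : i' = i := by omega
          subst this
          subst h4
          push_cast at h2 ⊢
          exact ⟨h1, by omega⟩
  have hfA : A.Finite :=
    (Finset.filter (fun j => j % 3 = c) (Finset.range (P.parts 0))).finite_toSet.image _
  have hfS' : S'.Finite := by
    have := rset_finite P.shiftP ((c+1) % 3)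
    convert this using 2
  have hfB : B.Finite := hfS'.image _
  have hdisj : Disjoint A B := by
    rw [Set.disjoint_left]
    rintro ⟨i, j⟩ hA2 hB2
    simp only [hA, hB, Set.mem_image, Prod.mk.injEq, Prod.exists] at hA2 hB2
    obtain ⟨_, _, h1, _⟩ := hA2
    obtain ⟨_, _, _, h2, _⟩ := hB2
    omega
  rw [hSAB, Set.ncard_union_eq hdisj hfA hfB, hA, hB]
  rw [Set.ncard_image_of_injective _ (fun a b h => by simpa using h),
      Set.ncard_image_of_injective _ (fun a b h => by
        simp only [Prod.mk.injEq] at h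
        exact Prod.ext (by omega) h.2)]
  rw [Set.ncard_coe_finset]
  rw [hS', hcast]

theorem gbg_eq (P : YPartition) :
    P.gbg 3 = P.rcount 3 0 + P.rcount 3 1 * om + P.rcount 3 2 * om ^ 2 := by
  unfold gbg
  rw [hexp]
  rw [Finset.sum_range_succ, Finset.sum_range_succ, Finset.sum_range_succ]
  simp

theorem gfun_eq_sum (q : ℕ) :
    gfun q = (Finset.filter (fun j => j % 3 = 0) (Finset.range q)).card
      + (Finset.filter (fun j => j % 3 = 1) (Finset.range q)).card * om
      + (Finset.filter (fun j => j % 3 = 2) (Finset.range q)).card * om ^ 2 := by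
  unfold gfun
  rw [← Finset.sum_fiberwise_of_maps_to (g := fun j => j % 3) (t := Finset.range 3)
    (fun x _ => Finset.mem_range.mpr (Nat.mod_lt x (by norm_num)))]
  rw [Finset.sum_range_succ, Finset.sum_range_succ, Finset.sum_range_succ]
  have h : ∀ c : ℕ, ∑ j ∈ Finset.filter (fun j => j % 3 = c) (Finset.range q), om ^ (j % 3)
      = (Finset.filter (fun j => j % 3 = c) (Finset.range q)).card * om ^ c := by
    intro c
    rw [Finset.sum_congr rfl (fun j hj => by
      rw [(Finset.mem_filter.mp hj).2]), Finset.sum_const, nsmul_eq_mul]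
  rw [h 0, h 1, h 2]
  ring

theorem gbg_shift (P : YPartition) :
    P.gbg 3 = gfun (P.parts 0) + om ^ 2 * P.shiftP.gbg 3 := by
  rw [gbg_eq, gbg_eq, gfun_eq_sum]
  rw [rcount_shift P 0 (by norm_num), rcount_shift P 1 (by norm_num),
      rcount_shift P 2 (by norm_num)]
  norm_num
  linear_combination (-(P.shiftP.rcount 3 1 : ℂ) - (P.shiftP.rcount 3 2 : ℂ) * om) * om_pow_three

theorem gbg_empty (P : YPartition) (h : P.parts 0 = 0) : P.gbg 3 = 0 := by
  have hr : ∀ c, P.rcount 3 c = 0 := by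
    intro c
    unfold rcount
    convert Set.ncard_empty (ℕ × ℕ)
    ext ⟨i, j⟩
    simp only [Set.mem_setOf_eq, Set.mem_empty_iff_false, iff_false, not_and]
    intro h1
    have := P.antitone (Nat.zero_le i)
    omega
  rw [gbg_eq, hr 0, hr 1, hr 2]
  simp

end YPartition

abbrev St : Type := ℤ × ℤ × ℤ × Bool × Bool × Bool
def gtabZ (r : ℤ) : ℤ × ℤ := if r = 1 then (1, 0) else if r = 2 then (1, 1) else (0, 0)
def transSt (σ : St) (δ : ℕ) : St :=
  ⟨σ.2.1 - σ.1 + (gtabZ ((σ.2.2.1 + δ) % 3)).1, -σ.1 + (gtabZ ((σ.2.2.1 + δ) % 3)).2,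
    (σ.2.2.1 + δ) % 3,
    match δ with
    | 0 => (true, σ.2.2.2.1, σ.2.2.2.2.1)
    | 1 => (false, true, σ.2.2.2.1)
    | 2 => (false, false, true)
    | _ => (false, false, false)⟩
def okSt (σ : St) (δ : ℕ) : Prop :=
  δ = 3 ∨ (δ = 2 ∧ σ.2.2.2.1 = true) ∨ (δ = 1 ∧ σ.2.2.2.2.1 = true) ∨
    (δ = 0 ∧ σ.2.2.2.2.2 = true)
instance (σ : St) (δ : ℕ) : Decidable (okSt σ δ) := by unfold okSt; infer_instance
def TL : List St :=
  [(-1, 0, 0, false, false, false),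
   (-1, 0, 0, false, false, true),
   (0, -1, 0, false, false, false),
   (0, -1, 0, false, true, false),
   (0, -1, 1, false, false, false),
   (0, -1, 1, false, false, true),
   (0, -1, 1, true, false, false),
   (0, -1, 1, true, false, true),
   (0, 0, 0, false, false, false),
   (0, 0, 0, false, false, true),
   (0, 0, 0, false, true, false),
   (0, 0, 0, false, true, true),
   (0, 0, 0, true, false, false),
   (0, 0, 0, true, false, true),
   (0, 0, 0, true, true, false),
   (0, 0, 0, true, true, true),
   (0, 0, 1, false, false, false),
   (0, 0, 1, false, true, false),
   (0, 0, 1, true, false, false),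
   (0, 0, 1, true, true, false),
   (0, 0, 2, false, false, false),
   (0, 0, 2, false, true, false),
   (0, 0, 2, true, false, false),
   (0, 0, 2, true, true, false),
   (1, 0, 1, false, false, false),
   (1, 0, 1, false, false, true),
   (1, 0, 1, false, true, false),
   (1, 0, 1, false, true, true),
   (1, 0, 2, false, false, false),
   (1, 0, 2, false, false, true),
   (1, 0, 2, true, false, false),
   (1, 0, 2, true, false, true),
   (1, 1, 0, false, false, false),
   (1, 1, 0, true, false, false),
   (1, 1, 2, false, false, false),
   (1, 1, 2, false, false, true),
   (1, 1, 2, false, true, false),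
   (1, 1, 2, false, true, true)]

theorem TL_closed : ∀ σ ∈ TL, ∀ δ < 4, okSt σ δ → transSt σ δ ∈ TL := by decide

theorem TL_gbg : ∀ σ ∈ TL,
    (σ.1, σ.2.1) ∈ ([(-1, 0), (0, -1), (0, 0), (1, 0), (1, 1)] : List (ℤ × ℤ)) := by decide

theorem YPartition.shiftP_parts (P : YPartition) (n : ℕ) :
    P.shiftP.parts n = P.parts (n+1) := rfl

noncomputable def cpair (a b : ℤ) : ℂ := (a : ℂ) + (b : ℂ) * om

namespace YPartition

theorem gfun_cpair (q : ℕ) :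
    gfun q = cpair (gtabZ ((q : ℤ) % 3)).1 (gtabZ ((q : ℤ) % 3)).2 := by
  induction q with
  | zero => simp [gfun, gtabZ, cpair]
  | succ q ih =>
    have hstep : gfun (q + 1) = gfun q + om ^ (q % 3) := Finset.sum_range_succ _ _
    have h3 : q % 3 = 0 ∨ q % 3 = 1 ∨ q % 3 = 2 := by omega
    have hcast : ((q + 1 : ℕ) : ℤ) = (q : ℤ) + 1 := by push_cast; ring
    rcases h3 with h | h | h
    · have hz : (q : ℤ) % 3 = 0 := by omega
      have hz1 : ((q : ℤ) + 1) % 3 = 1 := by omega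
      rw [hstep, ih, h, hz, hcast, hz1]
      norm_num [gtabZ, cpair]
    · have hz : (q : ℤ) % 3 = 1 := by omega
      have hz1 : ((q : ℤ) + 1) % 3 = 2 := by omega
      rw [hstep, ih, h, hz, hcast, hz1]
      norm_num [gtabZ, cpair]
    · have hz : (q : ℤ) % 3 = 2 := by omega
      have hz1 : ((q : ℤ) + 1) % 3 = 0 := by omega
      rw [hstep, ih, h, hz, hcast, hz1]
      norm_num [gtabZ, cpair]
      linear_combination om_sum

def Matches (P : YPartition) (σ : St) : Prop :=
  P.gbg 3 = cpair σ.1 σ.2.1 ∧ (P.parts 0 : ℤ) % 3 = σ.2.2.1 ∧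
  (P.inB ((P.parts 0 : ℤ) - 1) ↔ σ.2.2.2.1 = true) ∧
  (P.inB ((P.parts 0 : ℤ) - 2) ↔ σ.2.2.2.2.1 = true) ∧
  (P.inB ((P.parts 0 : ℤ) - 3) ↔ σ.2.2.2.2.2 = true)

theorem matches_empty (P : YPartition) (h : P.parts 0 = 0) :
    Matches P (0, 0, 0, true, true, true) := by
  have hz : ∀ m : ℕ, P.parts m = 0 := fun m => by
    have := P.antitone (Nat.zero_le m); omega
  refine ⟨?_, by rw [h]; rfl, ?_, ?_, ?_⟩
  · rw [gbg_empty P h]; simp [cpair]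
  · exact iff_of_true ⟨1, by simp [h, hz 1]⟩ rfl
  · exact iff_of_true ⟨2, by simp [h, hz 2]⟩ rfl
  · exact iff_of_true ⟨3, by simp [h, hz 3]⟩ rfl

theorem matches_step (P : YPartition) (hcore : IsCore 4 P) (hpos : 0 < P.parts 0)
    (σ : St) (hm : Matches P.shiftP σ) :
    okSt σ (P.parts 0 - P.parts 1) ∧ (P.parts 0 - P.parts 1) < 4 ∧
      Matches P (transSt σ (P.parts 0 - P.parts 1)) := by
  obtain ⟨hmg, hmρ, hm1, hm2, hm3⟩ := hm
  have hp10 : P.shiftP.parts 0 = P.parts 1 := P.shiftP_parts 0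
  rw [hp10] at hmρ hm1 hm2 hm3
  have hp1q : P.parts 1 ≤ P.parts 0 := P.antitone (by omega)
  have hB4 := P.core_inB hcore hpos
  have hB3' : P.shiftP.inB ((P.parts 0 : ℤ) - 3) := by
    rcases (P.inB_shift _).mp hB4 with h | h
    · omega
    · convert h using 1; ring
  have hd4 : P.parts 0 - P.parts 1 < 4 := by
    have := P.shiftP.inB_le _ hB3'
    rw [hp10] at this
    omega
  have hfalse : ∀ t : ℤ, (P.parts 1 : ℤ) < t → ¬ P.shiftP.inB t := fun t ht hc => by
    have := P.shiftP.inB_le _ hc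
    rw [hp10] at this
    omega
  have htrue : P.shiftP.inB (P.parts 1 : ℤ) := by rw [← hp10]; exact P.shiftP.inB_self
  have hbit : ∀ k : ℤ, k ≠ 0 →
      (P.inB ((P.parts 0 : ℤ) - k) ↔ P.shiftP.inB ((P.parts 0 : ℤ) - k + 1)) := by
    intro k hk
    rw [P.inB_shift]
    rcases Int.lt_or_lt_of_ne hk with h | h
    · rw [or_iff_right (by omega)]
    · rw [or_iff_right (by omega)]
  have hgbg : ∀ ρn : ℤ, (P.parts 0 : ℤ) % 3 = ρn →
      P.gbg 3 = cpair (σ.2.1 - σ.1 + (gtabZ ρn).1) (-σ.1 + (gtabZ ρn).2) := by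
    intro ρn hρn
    rw [P.gbg_shift, hmg, gfun_cpair, hρn]
    unfold cpair
    push_cast
    linear_combination (σ.1 : ℂ) * om_sum + (σ.2.1 : ℂ) * om_pow_three
  set d := P.parts 0 - P.parts 1 with hd
  have hqd : P.parts 0 = P.parts 1 + d := by omega
  have hd4' : d < 4 := hd4
  clear_value d
  clear hd hd4
  interval_cases d
  · -- d = 0
    refine ⟨Or.inr (Or.inr (Or.inr ⟨rfl, ?_⟩)), by omega, ?_, ?_, ?_, ?_, ?_⟩
    · exact hm3.mp (by
        rw [show (P.parts 1 : ℤ) - 3 = (P.parts 0 : ℤ) - 3 by omega]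
        exact hB3')
    · exact hgbg ((σ.2.2.1 + ((0:ℕ):ℤ)) % 3) (by push_cast; omega)
    · show (P.parts 0 : ℤ) % 3 = (σ.2.2.1 + ((0:ℕ):ℤ)) % 3
      push_cast
      omega
    · exact iff_of_true ((hbit 1 (by norm_num)).mpr (by
        rw [show (P.parts 0 : ℤ) - 1 + 1 = (P.parts 1 : ℤ) by omega]; exact htrue)) rfl
    · rw [hbit 2 (by norm_num),
        show (P.parts 0 : ℤ) - 2 + 1 = (P.parts 1 : ℤ) - 1 by omega]
      exact hm1
    · rw [hbit 3 (by norm_num),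
        show (P.parts 0 : ℤ) - 3 + 1 = (P.parts 1 : ℤ) - 2 by omega]
      exact hm2
  · -- d = 1
    refine ⟨Or.inr (Or.inr (Or.inl ⟨rfl, ?_⟩)), by omega, ?_, ?_, ?_, ?_, ?_⟩
    · exact hm2.mp (by
        rw [show (P.parts 1 : ℤ) - 2 = (P.parts 0 : ℤ) - 3 by omega]
        exact hB3')
    · exact hgbg ((σ.2.2.1 + ((1:ℕ):ℤ)) % 3) (by push_cast; omega)
    · show (P.parts 0 : ℤ) % 3 = (σ.2.2.1 + ((1:ℕ):ℤ)) % 3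
      push_cast
      omega
    · exact iff_of_false (fun hc => hfalse _ (by omega) ((hbit 1 (by norm_num)).mp hc))
        (by simp [transSt])
    · exact iff_of_true ((hbit 2 (by norm_num)).mpr (by
        rw [show (P.parts 0 : ℤ) - 2 + 1 = (P.parts 1 : ℤ) by omega]; exact htrue)) rfl
    · rw [hbit 3 (by norm_num),
        show (P.parts 0 : ℤ) - 3 + 1 = (P.parts 1 : ℤ) - 1 by omega]
      exact hm1
  · -- d = 2
    refine ⟨Or.inr (Or.inl ⟨rfl, ?_⟩), by omega, ?_, ?_, ?_, ?_, ?_⟩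
    · exact hm1.mp (by
        rw [show (P.parts 1 : ℤ) - 1 = (P.parts 0 : ℤ) - 3 by omega]
        exact hB3')
    · exact hgbg ((σ.2.2.1 + ((2:ℕ):ℤ)) % 3) (by push_cast; omega)
    · show (P.parts 0 : ℤ) % 3 = (σ.2.2.1 + ((2:ℕ):ℤ)) % 3
      push_cast
      omega
    · exact iff_of_false (fun hc => hfalse _ (by omega) ((hbit 1 (by norm_num)).mp hc))
        (by simp [transSt])
    · exact iff_of_false (fun hc => hfalse _ (by omega) ((hbit 2 (by norm_num)).mp hc))
        (by simp [transSt])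
    · exact iff_of_true ((hbit 3 (by norm_num)).mpr (by
        rw [show (P.parts 0 : ℤ) - 3 + 1 = (P.parts 1 : ℤ) by omega]; exact htrue)) rfl
  · -- d = 3
    refine ⟨Or.inl rfl, by omega, ?_, ?_, ?_, ?_, ?_⟩
    · exact hgbg ((σ.2.2.1 + ((3:ℕ):ℤ)) % 3) (by push_cast; omega)
    · show (P.parts 0 : ℤ) % 3 = (σ.2.2.1 + ((3:ℕ):ℤ)) % 3
      push_cast
      omega
    · exact iff_of_false (fun hc => hfalse _ (by omega) ((hbit 1 (by norm_num)).mp hc))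
        (by simp [transSt])
    · exact iff_of_false (fun hc => hfalse _ (by omega) ((hbit 2 (by norm_num)).mp hc))
        (by simp [transSt])
    · exact iff_of_false (fun hc => hfalse _ (by omega) ((hbit 3 (by norm_num)).mp hc))
        (by simp [transSt])

theorem invariant : ∀ (N : ℕ) (P : YPartition), (∀ n, N ≤ n → P.parts n = 0) →
    IsCore 4 P → ∃ σ ∈ TL, Matches P σ := by
  intro N
  induction N with
  | zero =>
    intro P h _
    exact ⟨(0, 0, 0, true, true, true), by decide, matches_empty P (h 0 (le_refl 0))⟩
  | succ N ih =>
    intro P h hc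
    by_cases h0 : P.parts 0 = 0
    · exact ⟨(0, 0, 0, true, true, true), by decide, matches_empty P h0⟩
    · have hsup : ∀ n, N ≤ n → P.shiftP.parts n = 0 := fun n hn => by
        rw [P.shiftP_parts n]; exact h (n+1) (by omega)
      obtain ⟨σ, hσT, hσ⟩ := ih P.shiftP hsup (P.isCore_shift hc)
      obtain ⟨hok, hlt, hmm⟩ := P.matches_step hc (by omega) σ hσ
      exact ⟨transSt σ _, TL_closed σ hσT _ hlt hok, hmm⟩

end YPartition

namespace YPartition

def P0 : YPartition := ⟨fun _ => 0, fun _ _ _ => le_rfl, ⟨0, fun _ _ => rfl⟩⟩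
def P1 : YPartition :=
  ⟨fun n => if n = 0 then 1 else 0, by intro a b hab; dsimp; split_ifs <;> omega,
   ⟨1, fun n hn => by split_ifs <;> omega⟩⟩
def P2 : YPartition :=
  ⟨fun n => if n = 0 then 2 else 0, by intro a b hab; dsimp; split_ifs <;> omega,
   ⟨1, fun n hn => by split_ifs <;> omega⟩⟩
def P11 : YPartition :=
  ⟨fun n => if n < 2 then 1 else 0, by intro a b hab; dsimp; split_ifs <;> omega,
   ⟨2, fun n hn => by split_ifs <;> omega⟩⟩
def P311 : YPartition :=
  ⟨fun n => if n = 0 then 3 else if n < 3 then 1 else 0,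
   by intro a b hab; dsimp; split_ifs <;> omega,
   ⟨3, fun n hn => by split_ifs <;> omega⟩⟩

theorem P1_parts : ∀ n, P1.parts n = if n = 0 then 1 else 0 := fun _ => rfl
theorem P2_parts : ∀ n, P2.parts n = if n = 0 then 2 else 0 := fun _ => rfl
theorem P11_parts : ∀ n, P11.parts n = if n < 2 then 1 else 0 := fun _ => rfl
theorem P311_parts : ∀ n, P311.parts n = if n = 0 then 3 else if n < 3 then 1 else 0 :=
  fun _ => rfl

theorem shift_P1 : P1.shiftP = P0 :=
  pext (funext fun n => by simp [shiftP, P1, P0])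
theorem shift_P2 : P2.shiftP = P0 :=
  pext (funext fun n => by simp [shiftP, P2, P0])
theorem shift_P11 : P11.shiftP = P1 :=
  pext (funext fun n => by
    show P11.parts (n+1) = P1.parts n
    rw [P11_parts, P1_parts]; split_ifs <;> omega)
theorem shift_P311 : P311.shiftP = P11 :=
  pext (funext fun n => by
    show P311.parts (n+1) = P11.parts n
    rw [P311_parts, P11_parts]
    rcases n with _ | _ | m
    · norm_num
    · norm_num
    · rw [if_neg (by omega), if_neg (by omega), if_neg (by omega)])

theorem conj_P1_0 : P1.conjParts 0 = 1 :=
  conj_eval _ _ _ (fun i => by rw [P1_parts]; split_ifs <;> omega)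
theorem conj_P2_0 : P2.conjParts 0 = 1 :=
  conj_eval _ _ _ (fun i => by rw [P2_parts]; split_ifs <;> omega)
theorem conj_P2_1 : P2.conjParts 1 = 1 :=
  conj_eval _ _ _ (fun i => by rw [P2_parts]; split_ifs <;> omega)
theorem conj_P11_0 : P11.conjParts 0 = 2 :=
  conj_eval _ _ _ (fun i => by rw [P11_parts]; split_ifs <;> omega)
theorem conj_P311_0 : P311.conjParts 0 = 3 :=
  conj_eval _ _ _ (fun i => by rw [P311_parts]; split_ifs <;> omega)
theorem conj_P311_1 : P311.conjParts 1 = 1 :=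
  conj_eval _ _ _ (fun i => by rw [P311_parts]; split_ifs <;> omega)
theorem conj_P311_2 : P311.conjParts 2 = 1 :=
  conj_eval _ _ _ (fun i => by rw [P311_parts]; split_ifs <;> omega)

theorem core_P0 : IsCore 4 P0 := by intro i j hj; simp [P0] at hj
theorem core_P1 : IsCore 4 P1 := by
  intro i j hj
  rw [P1_parts] at hj
  have : i = 0 ∧ j = 0 := by split_ifs at hj <;> omega
  obtain ⟨rfl, rfl⟩ := this
  unfold hookLength
  rw [conj_P1_0, P1_parts]
  norm_num
theorem core_P2 : IsCore 4 P2 := by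
  intro i j hj
  rw [P2_parts] at hj
  have : i = 0 ∧ j < 2 := by split_ifs at hj <;> omega
  obtain ⟨rfl, hj2⟩ := this
  unfold hookLength
  rw [P2_parts]
  interval_cases j
  · rw [conj_P2_0]; norm_num
  · rw [conj_P2_1]; norm_num
theorem core_P11 : IsCore 4 P11 := by
  intro i j hj
  rw [P11_parts] at hj
  have : i < 2 ∧ j = 0 := by split_ifs at hj <;> omega
  obtain ⟨hi2, rfl⟩ := this
  unfold hookLength
  rw [P11_parts, conj_P11_0]
  interval_cases i <;> norm_num
theorem core_P311 : IsCore 4 P311 := by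
  intro i j hj
  rw [P311_parts] at hj
  have : (i = 0 ∧ j < 3) ∨ (i < 3 ∧ j = 0) := by split_ifs at hj <;> omega
  unfold hookLength
  rcases this with ⟨rfl, hj3⟩ | ⟨hi3, rfl⟩
  · rw [P311_parts]
    interval_cases j
    · rw [conj_P311_0]; norm_num
    · rw [conj_P311_1]; norm_num
    · rw [conj_P311_2]; norm_num
  · rw [P311_parts, conj_P311_0]
    interval_cases i <;> norm_num

theorem gfun_one : gfun 1 = 1 := by simp [gfun]
theorem gfun_two : gfun 2 = 1 + om := by
  simp [gfun, Finset.sum_range_succ]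
theorem gfun_three : gfun 3 = 0 := by
  have h : gfun 3 = 1 + om + om ^ 2 := by
    simp [gfun, Finset.sum_range_succ]
  rw [h, om_sum]

theorem gbg_P0 : P0.gbg 3 = 0 := gbg_empty P0 rfl
theorem gbg_P1 : P1.gbg 3 = 1 := by
  rw [P1.gbg_shift, shift_P1, gbg_P0, show P1.parts 0 = 1 from rfl, gfun_one]; ring
theorem gbg_P2 : P2.gbg 3 = -om ^ 2 := by
  rw [P2.gbg_shift, shift_P2, gbg_P0, show P2.parts 0 = 2 from rfl, gfun_two]
  linear_combination om_sum
theorem gbg_P11 : P11.gbg 3 = -om := by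
  rw [P11.gbg_shift, shift_P11, gbg_P1, show P11.parts 0 = 1 from rfl, gfun_one]
  linear_combination om_sum
theorem gbg_P311 : P311.gbg 3 = -1 := by
  rw [P311.gbg_shift, shift_P311, gbg_P11, show P311.parts 0 = 3 from rfl, gfun_three]
  linear_combination -om_pow_three

end YPartition

/-- The GBG-rank mod 3 of a 4-core takes exactly the five values
`−1, 0, 1, −ω, −ω²`, where `ω = e^{2πI/3}`. -/
theorem gbg_stmt_13 :
    {z : ℂ | ∃ P : YPartition, YPartition.IsCore 4 P ∧ P.gbg 3 = z} =
      ({-1, 0, 1, -Complex.exp (2 * (Real.pi : ℂ) * Complex.I / 3),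
        -Complex.exp (2 * (Real.pi : ℂ) * Complex.I / 3) ^ 2} : Set ℂ) := by
  have homdef : Complex.exp (2 * (Real.pi : ℂ) * Complex.I / 3) = om := rfl
  ext z
  simp only [Set.mem_setOf_eq, Set.mem_insert_iff, Set.mem_singleton_iff, homdef]
  constructor
  · rintro ⟨P, hc, rfl⟩
    obtain ⟨N, hN⟩ := P.finite_support
    obtain ⟨σ, hσT, hm⟩ := YPartition.invariant N P hN hc
    have hg := hm.1
    have hmem := TL_gbg σ hσT
    simp only [List.mem_cons, List.not_mem_nil, or_false, Prod.mk.injEq] at hmem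
    rcases hmem with ⟨h1, h2⟩ | ⟨h1, h2⟩ | ⟨h1, h2⟩ | ⟨h1, h2⟩ | ⟨h1, h2⟩ <;>
      rw [h1, h2] at hg
    · left; rw [hg]; simp [cpair]
    · right; right; right; left
      rw [hg]; simp [cpair]
    · right; left; rw [hg]; simp [cpair]
    · right; right; left; rw [hg]; simp [cpair]
    · right; right; right; right
      rw [hg]
      unfold cpair
      push_cast
      linear_combination om_sum
  · rintro (rfl | rfl | rfl | rfl | rfl)
    · exact ⟨YPartition.P311, YPartition.core_P311, YPartition.gbg_P311⟩
    · exact ⟨YPartition.P0, YPartition.core_P0, YPartition.gbg_P0⟩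
    · exact ⟨YPartition.P1, YPartition.core_P1, YPartition.gbg_P1⟩
    · exact ⟨YPartition.P11, YPartition.core_P11, YPartition.gbg_P11⟩
    · exact ⟨YPartition.P2, YPartition.core_P2, YPartition.gbg_P2⟩
end

section
/- Let s > 2 be even, and let t be coprime to s with t > 1 + s/2 and t ≠ s + 1. Then the partition π = (1 + s/2, 2, 1, 1, ..., 1) with s/2 − 1 trailing parts equal to 1 is simultaneously an s-core and a t-core, and its GBG-rank mod s equals 0 (the same as that of the empty partition). -/
open YPartition

/-- The partition (1+m, 2, 1, ..., 1) with m-1 trailing ones. -/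
def pmParts (m n : ℕ) : ℕ :=
  if n = 0 then 1 + m else if n = 1 then 2 else if n ≤ m then 1 else 0

lemma pmParts_anti (m a b : ℕ) (hm : 2 ≤ m) (hab : a ≤ b) : pmParts m b ≤ pmParts m a := by
  unfold pmParts; split_ifs <;> omega

lemma pmParts_fin (m n : ℕ) (hn : m + 2 ≤ n) : pmParts m n = 0 := by
  unfold pmParts; split_ifs <;> omega

noncomputable def Pm (m : ℕ) (hm : 2 ≤ m) : YPartition :=
  ⟨pmParts m, fun a b hab => pmParts_anti m a b hm hab, ⟨m + 2, fun n hn => pmParts_fin m n hn⟩⟩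

lemma Pm_parts (m n : ℕ) (hm : 2 ≤ m) :
    (Pm m hm).parts n = if n = 0 then 1 + m else if n = 1 then 2 else if n ≤ m then 1 else 0 := by
  show pmParts m n = _
  unfold pmParts
  rfl

lemma negmod (n i : ℤ) (h1 : 0 < i) (h2 : i ≤ n) : (-i) % n = n - i := by
  have h : (-i + n * 1) % n = (-i) % n := Int.add_mul_emod_self_left (-i) n 1
  have h2' : (-i + n * 1) = n - i := by ring
  rw [h2'] at h
  rw [← h, Int.emod_eq_of_lt (by omega) (by omega)]

lemma Pm_conj (m j : ℕ) (hm : 2 ≤ m) :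
    (Pm m hm).conjParts j = if j = 0 then m + 1 else if j = 1 then 2 else if j ≤ m then 1 else 0 := by
  unfold YPartition.conjParts
  split_ifs with h0 h1 h2
  · subst h0
    have : {i : ℕ | 0 < (Pm m hm).parts i} = ↑(Finset.range (m + 1)) := by
      ext i
      simp only [Set.mem_setOf_eq, Finset.coe_range, Set.mem_Iio, Pm_parts _ _ hm]
      split_ifs <;> omega
    rw [this, Set.ncard_coe_finset, Finset.card_range]
  · subst h1
    have : {i : ℕ | 1 < (Pm m hm).parts i} = ↑({0, 1} : Finset ℕ) := by
      ext i
      simp only [Set.mem_setOf_eq, Finset.coe_insert, Set.mem_insert_iff, Finset.coe_singleton,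
        Set.mem_singleton_iff, Pm_parts _ _ hm]
      split_ifs <;> omega
    rw [this, Set.ncard_coe_finset]
    rfl
  · have : {i : ℕ | j < (Pm m hm).parts i} = ↑({0} : Finset ℕ) := by
      ext i
      simp only [Set.mem_setOf_eq, Finset.coe_singleton, Set.mem_singleton_iff, Pm_parts _ _ hm]
      split_ifs <;> omega
    rw [this, Set.ncard_coe_finset]
    rfl
  · have : {i : ℕ | j < (Pm m hm).parts i} = (∅ : Set ℕ) := by
      ext i
      simp only [Set.mem_setOf_eq, Set.mem_empty_iff_false, iff_false, not_lt, Pm_parts _ _ hm]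
      split_ifs <;> omega
    rw [this, Set.ncard_empty]

lemma Pm_core (m u : ℕ) (hm : 2 ≤ m) (h1 : u ≠ 2 * m + 1) (h2 : u ≠ m + 1) (h3 : m ≤ u) :
    YPartition.IsCore u (Pm m hm) := by
  intro i j hj
  unfold YPartition.hookLength
  rw [Pm_conj m j hm]
  rw [Pm_parts _ _ hm] at hj ⊢
  split_ifs at hj ⊢ <;> omega

lemma Pm_cellres (m c : ℕ) (hm : 2 ≤ m) (hc : c < 2 * m) (i j : ℕ) :
    (j < (Pm m hm).parts i ∧ ((j : ℤ) - (i : ℤ)) % ((2 * m : ℕ) : ℤ) = (c : ℤ)) ↔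
    ((i = 0 ∧ j = c ∧ c ≤ m) ∨ (i = 1 ∧ j = 1 ∧ c = 0) ∨ (i + c = 2 * m ∧ j = 0 ∧ m ≤ c)) := by
  constructor
  · rintro ⟨hj, hmod⟩
    rw [Pm_parts _ _ hm] at hj
    split_ifs at hj with g0 g1 g2
    · subst g0
      rw [Nat.cast_zero, sub_zero, Int.emod_eq_of_lt (by positivity) (by push_cast; omega)] at hmod
      have : j = c := by exact_mod_cast hmod
      omega
    · subst g1
      interval_cases j
      · rw [Nat.cast_zero, Nat.cast_one, zero_sub, negmod _ _ (by norm_num) (by push_cast; omega)]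
          at hmod
        right; right
        push_cast at hmod
        omega
      · norm_num at hmod
        have : c = 0 := by omega
        omega
    · -- 2 ≤ i ≤ m, j = 0
      have hj0 : j = 0 := by omega
      subst hj0
      rw [Nat.cast_zero, zero_sub, negmod _ _ (by push_cast; omega) (by push_cast; omega)] at hmod
      right; right
      push_cast at hmod
      omega
    · omega
  · rintro (⟨rfl, rfl, h⟩ | ⟨rfl, rfl, h⟩ | ⟨hi, rfl, h⟩)
    · refine ⟨by rw [Pm_parts _ _ hm]; simp; omega, ?_⟩
      rw [Nat.cast_zero, sub_zero, Int.emod_eq_of_lt (by positivity) (by push_cast; omega)]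
    · refine ⟨by rw [Pm_parts _ _ hm]; norm_num, ?_⟩
      subst h
      norm_num
    · have hi1 : 1 ≤ i := by omega
      have hi2 : i ≤ m := by omega
      refine ⟨by rw [Pm_parts _ _ hm]; split_ifs <;> omega, ?_⟩
      rw [Nat.cast_zero, zero_sub, negmod _ _ (by push_cast; omega) (by push_cast; omega)]
      push_cast
      omega

lemma Pm_rcount (m c : ℕ) (hm : 2 ≤ m) (hc : c < 2 * m) :
    (Pm m hm).rcount (2 * m) c = if c = 0 ∨ c = m then 2 else 1 := by
  unfold YPartition.rcount
  split_ifs with h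
  · by_cases h0 : c = 0
    · have hset : {p : ℕ × ℕ | p.2 < (Pm m hm).parts p.1 ∧
          ((p.2 : ℤ) - (p.1 : ℤ)) % ((2 * m : ℕ) : ℤ) = ((c : ℕ) : ℤ)}
          = ↑({(0, 0), (1, 1)} : Finset (ℕ × ℕ)) := by
        ext ⟨i, j⟩
        rw [Set.mem_setOf_eq, Pm_cellres m c hm hc]
        simp only [Finset.coe_insert, Set.mem_insert_iff, Finset.coe_singleton,
          Set.mem_singleton_iff, Prod.mk.injEq, true_and, and_true]
        omega
      rw [hset, Set.ncard_coe_finset]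
      rfl
    · have hcm : c = m := by omega
      have hset : {p : ℕ × ℕ | p.2 < (Pm m hm).parts p.1 ∧
          ((p.2 : ℤ) - (p.1 : ℤ)) % ((2 * m : ℕ) : ℤ) = ((c : ℕ) : ℤ)}
          = ↑({(0, c), (c, 0)} : Finset (ℕ × ℕ)) := by
        ext ⟨i, j⟩
        rw [Set.mem_setOf_eq, Pm_cellres m c hm hc]
        simp only [Finset.coe_insert, Set.mem_insert_iff, Finset.coe_singleton,
          Set.mem_singleton_iff, Prod.mk.injEq, true_and, and_true]
        omega
      rw [hset, Set.ncard_coe_finset,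
        Finset.card_insert_of_notMem (by simp only [Finset.mem_singleton, Prod.mk.injEq]; omega),
        Finset.card_singleton]
  · by_cases hcm : c < m
    · have hset : {p : ℕ × ℕ | p.2 < (Pm m hm).parts p.1 ∧
          ((p.2 : ℤ) - (p.1 : ℤ)) % ((2 * m : ℕ) : ℤ) = ((c : ℕ) : ℤ)}
          = ↑({(0, c)} : Finset (ℕ × ℕ)) := by
        ext ⟨i, j⟩
        rw [Set.mem_setOf_eq, Pm_cellres m c hm hc]
        simp only [Finset.coe_singleton, Set.mem_singleton_iff, Prod.mk.injEq, true_and,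
          and_true]
        omega
      rw [hset, Set.ncard_coe_finset, Finset.card_singleton]
    · have hset : {p : ℕ × ℕ | p.2 < (Pm m hm).parts p.1 ∧
          ((p.2 : ℤ) - (p.1 : ℤ)) % ((2 * m : ℕ) : ℤ) = ((c : ℕ) : ℤ)}
          = ↑({(2 * m - c, 0)} : Finset (ℕ × ℕ)) := by
        ext ⟨i, j⟩
        rw [Set.mem_setOf_eq, Pm_cellres m c hm hc]
        simp only [Finset.coe_singleton, Set.mem_singleton_iff, Prod.mk.injEq, true_and,
          and_true]
        omega
      rw [hset, Set.ncard_coe_finset, Finset.card_singleton]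

lemma Pm_gbg (m : ℕ) (hm : 2 ≤ m) : (Pm m hm).gbg (2 * m) = 0 := by
  unfold YPartition.gbg
  set ω : ℂ := Complex.exp (2 * (Real.pi : ℂ) * Complex.I / ((2 * m : ℕ) : ℂ)) with hω
  have hne : (2 * m : ℕ) ≠ 0 := by omega
  have hprim : IsPrimitiveRoot ω (2 * m) := Complex.isPrimitiveRoot_exp (2 * m) hne
  have hgeom : ∑ c ∈ Finset.range (2 * m), ω ^ c = 0 := hprim.geom_sum_eq_zero (by omega)
  have hωm : ω ^ m = -1 := by
    rw [hω, ← Complex.exp_nat_mul]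
    have hm0 : ((m : ℂ)) ≠ 0 := Nat.cast_ne_zero.mpr (by omega)
    have hm2 : ((2 * m : ℕ) : ℂ) ≠ 0 := Nat.cast_ne_zero.mpr (by omega)
    have hkey : (m : ℂ) * (2 * (Real.pi : ℂ) * Complex.I / ((2 * m : ℕ) : ℂ))
        = (Real.pi : ℂ) * Complex.I := by
      have h2m : ((2 * m : ℕ) : ℂ) = 2 * (m : ℂ) := by push_cast; ring
      rw [h2m]
      field_simp
    rw [hkey, Complex.exp_pi_mul_I]
  have hstep : ∀ c ∈ Finset.range (2 * m),
      ((Pm m hm).rcount (2 * m) c : ℂ) * ω ^ c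
        = ω ^ c + ((if c = 0 then ω ^ c else 0) + (if c = m then ω ^ c else 0)) := by
    intro c hc
    rw [Finset.mem_range] at hc
    rw [Pm_rcount m c hm hc]
    split_ifs with h h1 h2 h3
    all_goals push_cast
    all_goals try ring
    all_goals exfalso
    all_goals omega
  rw [Finset.sum_congr rfl hstep, Finset.sum_add_distrib, Finset.sum_add_distrib, hgeom,
    Finset.sum_ite_eq' (Finset.range (2 * m)) 0 (fun c => ω ^ c),
    Finset.sum_ite_eq' (Finset.range (2 * m)) m (fun c => ω ^ c)]
  simp only [Finset.mem_range, if_pos (by omega : 0 < 2 * m), if_pos (by omega : m < 2 * m)]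
  rw [hωm]
  ring


/-- For `s > 2` even and `t` coprime to `s` with `t > 1 + s/2` and
`t ≠ s + 1`, the partition `(1 + s/2, 2, 1, ..., 1)` with `s/2 − 1` trailing parts
equal to `1` is simultaneously an `s`-core and a `t`-core, and its GBG-rank mod `s`
equals `0` (the GBG-rank of the empty partition). -/
theorem gbg_stmt_19 (s t : ℕ) (hev : 2 ∣ s) (hs : 2 < s) (hco : Nat.Coprime s t)
    (ht : 1 + s / 2 < t) (ht' : t ≠ s + 1) :
    ∃ P : YPartition,
      (∀ n, P.parts n =
        if n = 0 then 1 + s / 2 else if n = 1 then 2 else if n ≤ s / 2 then 1 else 0) ∧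
      YPartition.IsCore s P ∧ YPartition.IsCore t P ∧ P.gbg s = 0 := by
  obtain ⟨m, rfl⟩ := hev
  have hm : 2 ≤ m := by omega
  refine ⟨Pm m hm, ?_, ?_, ?_, ?_⟩
  · intro n
    rw [Pm_parts _ _ hm, (by omega : 2 * m / 2 = m)]
  · exact Pm_core m (2 * m) hm (by omega) (by omega) (by omega)
  · exact Pm_core m t hm (by omega) (by omega) (by omega)
  · exact Pm_gbg m hm
end
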